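/- arXiv:2011.00256 — 14 statements merged into one kernel-verified Lean document; each statement's English description precedes it below -/
import Mathlib

section
/- (Ostrowski's inequality, 1938) Let a < b be real numbers and let f : [a,b] → ℝ be continuous on [a,b] and differentiable on (a,b), with |f'(t)| ≤ M for all t ∈ (a,b). Then for every x ∈ [a,b], |f(x) - (1/(b-a)) ∫_a^b f(t) dt| ≤ [1/4 + (x - (a+b)/2)²/(b-a)²] (b-a) M. -/
open MeasureTheory intervalIntegral Set

theorem ostrowski_inequality (a b M : ℝ) (hab : a < b) (hM : 0 < M)
    (f f' : ℝ → ℝ) (hcont : ContinuousOn f (Set.Icc a b))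
    (hderiv : ∀ t ∈ Set.Ioo a b, HasDerivAt f (f' t) t)
    (hbound : ∀ t ∈ Set.Ioo a b, |f' t| ≤ M)
    (x : ℝ) (hx : x ∈ Set.Icc a b) :
    |f x - (1 / (b - a)) * ∫ t in a..b, f t| ≤
      (1 / 4 + (x - (a + b) / 2) ^ 2 / (b - a) ^ 2) * (b - a) * M := by
  have hba : (0:ℝ) < b - a := sub_pos.2 hab
  -- Lipschitz-type bound via MVT
  have key : ∀ t ∈ Set.Icc a b, |f x - f t| ≤ M * |x - t| := by
    intro t ht
    rcases lt_trichotomy x t with h | h | h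
    · obtain ⟨c, hc, hceq⟩ := exists_hasDerivAt_eq_slope f f' h
        (hcont.mono (Set.Icc_subset_Icc hx.1 ht.2))
        (fun y hy => hderiv y ⟨lt_of_le_of_lt hx.1 hy.1, lt_of_lt_of_le hy.2 ht.2⟩)
      have hc' : c ∈ Set.Ioo a b :=
        ⟨lt_of_le_of_lt hx.1 hc.1, lt_of_lt_of_le hc.2 ht.2⟩
      have htx : (0:ℝ) < t - x := sub_pos.2 h
      have : f t - f x = f' c * (t - x) := by
        rw [hceq, div_mul_cancel₀ _ (sub_ne_zero.2 h.ne')]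
      have heq : |f x - f t| = |f' c| * |x - t| := by
        rw [abs_sub_comm x t, ← abs_mul, ← this, abs_sub_comm]
      rw [heq]
      exact mul_le_mul_of_nonneg_right (hbound c hc') (abs_nonneg _)
    · simp [h, abs_nonneg, mul_nonneg hM.le (abs_nonneg _)]
    · obtain ⟨c, hc, hceq⟩ := exists_hasDerivAt_eq_slope f f' h
        (hcont.mono (Set.Icc_subset_Icc ht.1 hx.2))
        (fun y hy => hderiv y ⟨lt_of_le_of_lt ht.1 hy.1, lt_of_lt_of_le hy.2 hx.2⟩)
      have hc' : c ∈ Set.Ioo a b :=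
        ⟨lt_of_le_of_lt ht.1 hc.1, lt_of_lt_of_le hc.2 hx.2⟩
      have : f x - f t = f' c * (x - t) := by
        rw [hceq, div_mul_cancel₀ _ (sub_ne_zero.2 h.ne')]
      rw [this, abs_mul]
      exact mul_le_mul_of_nonneg_right (hbound c hc') (abs_nonneg _)
  have hint : IntervalIntegrable f volume a b :=
    hcont.intervalIntegrable_of_Icc hab.le
  have hgint : IntervalIntegrable (fun t => f x - f t) volume a b :=
    ((continuousOn_const.sub hcont).intervalIntegrable_of_Icc hab.le)
  have h1 : (∫ t in a..b, (f x - f t)) = (b - a) * f x - ∫ t in a..b, f t := by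
    rw [intervalIntegral.integral_sub intervalIntegrable_const hint,
      intervalIntegral.integral_const, smul_eq_mul]
  have h2 : f x - (1/(b-a)) * ∫ t in a..b, f t
      = (1/(b-a)) * ∫ t in a..b, (f x - f t) := by
    rw [h1]; field_simp
  -- integral of the bound
  have habs1 : (∫ t in a..x, |x - t|) = (x - a)^2 / 2 := by
    rw [intervalIntegral.integral_congr (g := fun t => x - t)
      (fun t ht => by
        rw [Set.uIcc_of_le hx.1] at ht
        exact abs_of_nonneg (sub_nonneg.2 ht.2))]
    rw [intervalIntegral.integral_sub intervalIntegrable_const intervalIntegrable_id,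
      intervalIntegral.integral_const, integral_id, smul_eq_mul]
    ring
  have habs2 : (∫ t in x..b, |x - t|) = (b - x)^2 / 2 := by
    rw [intervalIntegral.integral_congr (g := fun t => t - x)
      (fun t ht => by
        rw [Set.uIcc_of_le hx.2] at ht
        rw [abs_sub_comm]
        exact abs_of_nonneg (sub_nonneg.2 ht.1))]
    rw [intervalIntegral.integral_sub intervalIntegrable_id intervalIntegrable_const,
      intervalIntegral.integral_const, integral_id, smul_eq_mul]
    ring
  have habs : (∫ t in a..b, |x - t|) = (x - a)^2 / 2 + (b - x)^2 / 2 := by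
    rw [← intervalIntegral.integral_add_adjacent_intervals
      (a := a) (b := x) (c := b)
      (((by continuity : Continuous fun t:ℝ => |x - t|)).intervalIntegrable _ _)
      (((by continuity : Continuous fun t:ℝ => |x - t|)).intervalIntegrable _ _),
      habs1, habs2]
  have hbd : |∫ t in a..b, (f x - f t)| ≤ M * ((x - a)^2 / 2 + (b - x)^2 / 2) := by
    calc |∫ t in a..b, (f x - f t)| ≤ ∫ t in a..b, |f x - f t| := by
          rw [← Real.norm_eq_abs]
          exact (intervalIntegral.norm_integral_le_integral_norm hab.le).trans_eq
            (by simp [Real.norm_eq_abs])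
      _ ≤ ∫ t in a..b, M * |x - t| := by
          apply intervalIntegral.integral_mono_on hab.le hgint.abs
          · exact ((by continuity : Continuous fun t:ℝ => M * |x - t|).intervalIntegrable _ _)
          · intro t ht; exact key t ht
      _ = M * ((x - a)^2 / 2 + (b - x)^2 / 2) := by
          rw [intervalIntegral.integral_const_mul, habs]
  rw [h2, abs_mul, abs_of_nonneg (by positivity : (0:ℝ) ≤ 1/(b-a))]
  calc (1/(b-a)) * |∫ t in a..b, (f x - f t)|
      ≤ (1/(b-a)) * (M * ((x - a)^2 / 2 + (b - x)^2 / 2)) :=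
        mul_le_mul_of_nonneg_left hbd (by positivity)
    _ = (1 / 4 + (x - (a + b) / 2) ^ 2 / (b - a) ^ 2) * (b - a) * M := by
        field_simp
        ring
end

section
/- (Composite quadrature estimate via Ostrowski's inequality) Let f : [0,1] → ℝ be continuous on [0,1] and differentiable on (0,1) with |f'(t)| ≤ M for all t ∈ (0,1). Let 0 = a₀ < a₁ < ⋯ < aₙ = 1, set λ_k = a_k - a_{k-1}, and choose nodes x_k with a_{k-1} ≤ x_k ≤ a_k for k = 1,…,n. Then |∫_0^1 f(x) dx - Σ_{k=1}^n λ_k f(x_k)| ≤ (M/2) Σ_{k=1}^n [(x_k - a_{k-1})² + (a_k - x_k)²]. -/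
open MeasureTheory intervalIntegral Set Finset

lemma ostrowski_single (M : ℝ) (f : ℝ → ℝ) (p q c : ℝ) (hpq : p ≤ q)
    (hpc : p ≤ c) (hcq : c ≤ q)
    (hcont : ContinuousOn f (Set.Icc p q))
    (hlip : ∀ s ∈ Set.Icc p q, ∀ t ∈ Set.Icc p q, |f s - f t| ≤ M * |s - t|) :
    |(∫ t in p..q, f t) - (q - p) * f c| ≤ M / 2 * ((c - p) ^ 2 + (q - c) ^ 2) := by
  have hintf : IntervalIntegrable f volume p q := by
    apply ContinuousOn.intervalIntegrable
    rwa [Set.uIcc_of_le hpq]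
  have hconst : (q - p) * f c = ∫ _t in p..q, f c := by
    simp [mul_comm]
  rw [hconst, ← intervalIntegral.integral_sub hintf (intervalIntegrable_const)]
  have h1 : |(∫ t in p..q, f t - f c)| ≤ ∫ t in p..q, M * |t - c| := by
    have := intervalIntegral.norm_integral_le_integral_norm (μ := volume)
      (f := fun t => f t - f c) (a := p) (b := q) hpq
    refine this.trans ?_
    apply intervalIntegral.integral_mono_on hpq
    · apply ContinuousOn.intervalIntegrable
      rw [Set.uIcc_of_le hpq]
      exact (hcont.sub continuousOn_const).norm
    · apply Continuous.intervalIntegrable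
      continuity
    · intro t ht
      exact hlip t ht c ⟨hpc, hcq⟩
  refine h1.trans ?_
  have hsplit : (∫ t in p..q, M * |t - c|) =
      (∫ t in p..c, M * (c - t)) + ∫ t in c..q, M * (t - c) := by
    have i1 : (∫ t in p..c, M * |t - c|) = ∫ t in p..c, M * (c - t) := by
      apply intervalIntegral.integral_congr
      intro t ht
      rw [Set.uIcc_of_le hpc] at ht
      show M * |t - c| = M * (c - t)
      rw [abs_sub_comm, abs_of_nonneg (by linarith [ht.2] : (0:ℝ) ≤ c - t)]
    have i2 : (∫ t in c..q, M * |t - c|) = ∫ t in c..q, M * (t - c) := by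
      apply intervalIntegral.integral_congr
      intro t ht
      rw [Set.uIcc_of_le hcq] at ht
      show M * |t - c| = M * (t - c)
      rw [abs_of_nonneg (by linarith [ht.1] : (0:ℝ) ≤ t - c)]
    rw [← i1, ← i2]
    rw [intervalIntegral.integral_add_adjacent_intervals]
    · apply Continuous.intervalIntegrable; continuity
    · apply Continuous.intervalIntegrable; continuity
  rw [hsplit]
  have e1 : (∫ t in p..c, M * (c - t)) = M * (c - p) ^ 2 / 2 := by
    rw [intervalIntegral.integral_const_mul]
    have : (∫ t in p..c, (c - t)) = (∫ _t in p..c, c) - ∫ t in p..c, t := by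
      rw [← intervalIntegral.integral_sub]
      · apply Continuous.intervalIntegrable; continuity
      · apply Continuous.intervalIntegrable; continuity
    rw [this, integral_id, _root_.intervalIntegral.integral_const, smul_eq_mul]
    ring
  have e2 : (∫ t in c..q, M * (t - c)) = M * (q - c) ^ 2 / 2 := by
    rw [intervalIntegral.integral_const_mul]
    have : (∫ t in c..q, (t - c)) = (∫ t in c..q, t) - ∫ _t in c..q, c := by
      rw [← intervalIntegral.integral_sub]
      · apply Continuous.intervalIntegrable; continuity
      · apply Continuous.intervalIntegrable; continuity
    rw [this, integral_id, _root_.intervalIntegral.integral_const, smul_eq_mul]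
    ring
  rw [e1, e2]
  apply le_of_eq
  ring

theorem composite_ostrowski_estimate (M : ℝ) (hM : 0 < M)
    (f f' : ℝ → ℝ) (hcont : ContinuousOn f (Set.Icc 0 1))
    (hderiv : ∀ t ∈ Set.Ioo (0:ℝ) 1, HasDerivAt f (f' t) t)
    (hbound : ∀ t ∈ Set.Ioo (0:ℝ) 1, |f' t| ≤ M)
    (n : ℕ) (hn : 0 < n) (a : ℕ → ℝ) (ha0 : a 0 = 0) (han : a n = 1)
    (hmono : ∀ k < n, a k < a (k + 1))
    (x : ℕ → ℝ) (hx : ∀ k < n, a k ≤ x k ∧ x k ≤ a (k + 1)) :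
    |(∫ t in (0:ℝ)..1, f t) - ∑ k ∈ Finset.range n, (a (k + 1) - a k) * f (x k)| ≤
      (M / 2) * ∑ k ∈ Finset.range n, ((x k - a k) ^ 2 + (a (k + 1) - x k) ^ 2) := by
  -- Lipschitz estimate on [0,1]
  have hlip : ∀ s ∈ Set.Icc (0:ℝ) 1, ∀ t ∈ Set.Icc (0:ℝ) 1, |f s - f t| ≤ M * |s - t| := by
    have key : ∀ s t : ℝ, s ∈ Set.Icc (0:ℝ) 1 → t ∈ Set.Icc (0:ℝ) 1 → s < t →
        |f t - f s| ≤ M * |t - s| := by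
      intro s t hs ht hst
      obtain ⟨c, hc, hc'⟩ := exists_hasDerivAt_eq_slope f f' hst
        (hcont.mono (Set.Icc_subset_Icc hs.1 ht.2))
        (fun y hy => hderiv y ⟨lt_of_le_of_lt hs.1 hy.1, lt_of_lt_of_le hy.2 ht.2⟩)
      have hcmem : c ∈ Set.Ioo (0:ℝ) 1 :=
        ⟨lt_of_le_of_lt hs.1 hc.1, lt_of_lt_of_le hc.2 ht.2⟩
      have : f t - f s = f' c * (t - s) := by
        rw [hc', div_mul_cancel₀ _ (sub_ne_zero.mpr hst.ne')]
      rw [this, abs_mul]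
      exact mul_le_mul_of_nonneg_right (hbound c hcmem) (abs_nonneg _)
    intro s hs t ht
    rcases lt_trichotomy s t with h | h | h
    · rw [abs_sub_comm, abs_sub_comm s t]; exact key s t hs ht h
    · simp [h]
    · exact key t s ht hs h
  -- monotonicity of a on [0, n]
  have hmono' : ∀ i j : ℕ, i ≤ j → j ≤ n → a i ≤ a j := by
    intro i j hij hjn
    induction j with
    | zero => exact le_of_eq (congrArg a (Nat.le_zero.mp hij))
    | succ m ih =>
      rcases Nat.lt_or_ge i (m+1) with h | h
      · have h1 : a i ≤ a m := ih (Nat.lt_succ_iff.mp h) (le_of_lt (Nat.lt_of_succ_le hjn))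
        exact h1.trans (le_of_lt (hmono m (Nat.lt_of_succ_le hjn)))
      · have : i = m + 1 := le_antisymm hij h
        simp [this]
    -- done
  have hbounds : ∀ k ≤ n, a k ∈ Set.Icc (0:ℝ) 1 := by
    intro k hk
    constructor
    · rw [← ha0]; exact hmono' 0 k (Nat.zero_le _) hk
    · rw [← han]; exact hmono' k n hk le_rfl
  have hsub : ∀ k < n, Set.Icc (a k) (a (k+1)) ⊆ Set.Icc (0:ℝ) 1 := by
    intro k hk
    exact Set.Icc_subset_Icc (hbounds k hk.le).1 (hbounds (k+1) hk).2
  have hint : ∀ k < n, IntervalIntegrable f volume (a k) (a (k + 1)) := by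
    intro k hk
    apply ContinuousOn.intervalIntegrable
    rw [Set.uIcc_of_le (hmono k hk).le]
    exact hcont.mono (hsub k hk)
  have hsum := intervalIntegral.sum_integral_adjacent_intervals hint
  rw [ha0, han] at hsum
  rw [← hsum, ← Finset.sum_sub_distrib]
  refine (Finset.abs_sum_le_sum_abs _ _).trans ?_
  rw [Finset.mul_sum]
  apply Finset.sum_le_sum
  intro k hk
  rw [Finset.mem_range] at hk
  exact ostrowski_single M f (a k) (a (k+1)) (x k) (hmono k hk).le (hx k hk).1 (hx k hk).2
    (hcont.mono (hsub k hk))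
    (fun s hs t ht => hlip s (hsub k hk hs) t (hsub k hk ht))
end

section
/- (Avakumović–Aljančić inequality) Let φ : [0,1] → ℝ be twice differentiable with |φ''(x)| ≤ 1 for all x ∈ [0,1]. Then for every x ∈ [0,1], |φ'(x) - φ(1) + φ(0)| ≤ 1/2 - x + x². -/
open Set

/-- Taylor-type estimate: if `f'` is the derivative of `f` on `[0,1]` and
`|f' t - f' x| ≤ |t - x|`, then the first-order Taylor remainder at `x` is
bounded by `(y-x)^2/2`. -/
lemma taylor_key (f f' : ℝ → ℝ) (x y : ℝ) (hx : x ∈ Set.Icc (0:ℝ) 1)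
    (hy : y ∈ Set.Icc (0:ℝ) 1)
    (hf : ∀ t ∈ Set.Icc (0:ℝ) 1, HasDerivWithinAt f (f' t) (Set.Icc 0 1) t)
    (hlip : ∀ t ∈ Set.Icc (0:ℝ) 1, |f' t - f' x| ≤ |t - x|) :
    |f y - f x - f' x * (y - x)| ≤ (y - x) ^ 2 / 2 := by
  set g : ℝ → ℝ := fun t => f t - f x - f' x * (t - x) - (t - x) ^ 2 / 2 with hg
  set k : ℝ → ℝ := fun t => f t - f x - f' x * (t - x) + (t - x) ^ 2 / 2 with hk
  have hder : ∀ t ∈ Set.Icc (0:ℝ) 1,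
      HasDerivWithinAt g (f' t - f' x - (t - x)) (Set.Icc 0 1) t ∧
      HasDerivWithinAt k (f' t - f' x + (t - x)) (Set.Icc 0 1) t := by
    intro t ht
    have h1 : HasDerivAt (fun t : ℝ => f x + f' x * (t - x)) (f' x) t := by
      have := (((hasDerivAt_id t).sub_const x).const_mul (f' x)).const_add (f x)
      simpa using this
    have h2 : HasDerivAt (fun t : ℝ => (t - x) ^ 2 / 2) (t - x) t := by
      have := ((((hasDerivAt_id t).sub_const x).pow 2).div_const 2)
      simpa using this
    constructor
    · have := ((hf t ht).sub h1.hasDerivWithinAt).sub h2.hasDerivWithinAt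
      have e : g = ((f - fun t => f x + f' x * (t - x)) - fun t => (t - x) ^ 2 / 2) := by
        funext s
        simp only [hg, Pi.sub_apply]
        ring
      rw [e]; exact this
    · have := ((hf t ht).sub h1.hasDerivWithinAt).add h2.hasDerivWithinAt
      have e : k = ((f - fun t => f x + f' x * (t - x)) + fun t => (t - x) ^ 2 / 2) := by
        funext s
        simp only [hk, Pi.sub_apply, Pi.add_apply]
        ring
      rw [e]; exact this
  have hgx : g x = 0 := by simp [hg]
  have hkx : k x = 0 := by simp [hk]
  have hcontg : ContinuousOn g (Set.Icc (0:ℝ) 1) :=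
    fun t ht => ((hder t ht).1).continuousWithinAt
  have hcontk : ContinuousOn k (Set.Icc (0:ℝ) 1) :=
    fun t ht => ((hder t ht).2).continuousWithinAt
  rcases le_total x y with hxy | hxy
  · have hsub : Set.Icc x y ⊆ Set.Icc (0:ℝ) 1 := Set.Icc_subset_Icc hx.1 hy.2
    have hsub' : interior (Set.Icc x y) ⊆ Set.Icc (0:ℝ) 1 :=
      interior_subset.trans hsub
    have hg_anti : ∀ a ∈ Set.Icc x y, ∀ b ∈ Set.Icc x y, a ≤ b → g b ≤ g a := by
      have hm := monotoneOn_of_hasDerivWithinAt_nonneg (f := fun t => -g t)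
        (f' := fun t => -(f' t - f' x - (t - x))) (convex_Icc x y)
        ((hcontg.mono hsub).neg)
        (fun t ht => (((hder t (hsub' ht)).1.mono hsub').neg))
        (fun t ht => by
          rw [interior_Icc] at ht
          have ht' := hsub (Set.Ioo_subset_Icc_self ht)
          have h1 := le_of_abs_le (hlip t ht')
          rw [abs_of_nonneg (by linarith [ht.1] : (0:ℝ) ≤ t - x)] at h1
          show (0:ℝ) ≤ -(f' t - f' x - (t - x))
          linarith)
      intro a ha b hb hab
      have h := hm ha hb hab
      simp only at h
      linarith
    have hk_mono : MonotoneOn k (Set.Icc x y) := by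
      apply monotoneOn_of_hasDerivWithinAt_nonneg (convex_Icc x y)
        (hcontk.mono hsub)
        (fun t ht => ((hder t (hsub' ht)).2.mono hsub'))
      intro t ht
      rw [interior_Icc] at ht
      have ht' := hsub (Set.Ioo_subset_Icc_self ht)
      have h1 := neg_le_of_abs_le (hlip t ht')
      rw [abs_of_nonneg (by linarith [ht.1] : (0:ℝ) ≤ t - x)] at h1
      linarith
    have hxm : x ∈ Set.Icc x y := ⟨le_refl x, hxy⟩
    have hym : y ∈ Set.Icc x y := ⟨hxy, le_refl y⟩
    have h1 : g y ≤ 0 := hgx ▸ hg_anti x hxm y hym hxy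
    have h2 : (0:ℝ) ≤ k y := hkx ▸ hk_mono hxm hym hxy
    have e1 : g y = f y - f x - f' x * (y - x) - (y - x) ^ 2 / 2 := rfl
    have e2 : k y = f y - f x - f' x * (y - x) + (y - x) ^ 2 / 2 := rfl
    rw [e1] at h1; rw [e2] at h2
    rw [abs_le]; constructor <;> linarith
  · have hsub : Set.Icc y x ⊆ Set.Icc (0:ℝ) 1 := Set.Icc_subset_Icc hy.1 hx.2
    have hsub' : interior (Set.Icc y x) ⊆ Set.Icc (0:ℝ) 1 :=
      interior_subset.trans hsub
    have hg_mono : MonotoneOn g (Set.Icc y x) := by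
      apply monotoneOn_of_hasDerivWithinAt_nonneg (convex_Icc y x)
        (hcontg.mono hsub)
        (fun t ht => ((hder t (hsub' ht)).1.mono hsub'))
      intro t ht
      rw [interior_Icc] at ht
      have ht' := hsub (Set.Ioo_subset_Icc_self ht)
      have h1 := neg_le_of_abs_le (hlip t ht')
      rw [abs_of_nonpos (by linarith [ht.2] : t - x ≤ 0)] at h1
      linarith
    have hk_anti : ∀ a ∈ Set.Icc y x, ∀ b ∈ Set.Icc y x, a ≤ b → k b ≤ k a := by
      have hm := monotoneOn_of_hasDerivWithinAt_nonneg (f := fun t => -k t)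
        (f' := fun t => -(f' t - f' x + (t - x))) (convex_Icc y x)
        ((hcontk.mono hsub).neg)
        (fun t ht => (((hder t (hsub' ht)).2.mono hsub').neg))
        (fun t ht => by
          rw [interior_Icc] at ht
          have ht' := hsub (Set.Ioo_subset_Icc_self ht)
          have h1 := le_of_abs_le (hlip t ht')
          rw [abs_of_nonpos (by linarith [ht.2] : t - x ≤ 0)] at h1
          show (0:ℝ) ≤ -(f' t - f' x + (t - x))
          linarith)
      intro a ha b hb hab
      have h := hm ha hb hab
      simp only at h
      linarith
    have hxm : x ∈ Set.Icc y x := ⟨hxy, le_refl x⟩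
    have hym : y ∈ Set.Icc y x := ⟨le_refl y, hxy⟩
    have h1 : g y ≤ 0 := hgx ▸ hg_mono hym hxm hxy
    have h2 : (0:ℝ) ≤ k y := hkx ▸ hk_anti y hym x hxm hxy
    have e1 : g y = f y - f x - f' x * (y - x) - (y - x) ^ 2 / 2 := rfl
    have e2 : k y = f y - f x - f' x * (y - x) + (y - x) ^ 2 / 2 := rfl
    rw [e1] at h1; rw [e2] at h2
    rw [abs_le]; constructor <;> linarith

theorem avakumovic_aljancic (φ φ' φ'' : ℝ → ℝ)
    (hφ : ∀ x ∈ Set.Icc (0:ℝ) 1, HasDerivWithinAt φ (φ' x) (Set.Icc 0 1) x)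
    (hφ' : ∀ x ∈ Set.Icc (0:ℝ) 1, HasDerivWithinAt φ' (φ'' x) (Set.Icc 0 1) x)
    (hbound : ∀ x ∈ Set.Icc (0:ℝ) 1, |φ'' x| ≤ 1)
    (x : ℝ) (hx : x ∈ Set.Icc (0:ℝ) 1) :
    |φ' x - φ 1 + φ 0| ≤ 1 / 2 - x + x ^ 2 := by
  have hlip : ∀ t ∈ Set.Icc (0:ℝ) 1, |φ' t - φ' x| ≤ |t - x| := by
    intro t ht
    have := (convex_Icc (0:ℝ) 1).norm_image_sub_le_of_norm_hasDerivWithin_le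
      (f := φ') (f' := φ'') (C := 1) hφ'
      (fun u hu => by simpa [Real.norm_eq_abs] using hbound u hu) hx ht
    simpa [Real.norm_eq_abs] using this
  have h1 : |φ 1 - φ x - φ' x * (1 - x)| ≤ (1 - x) ^ 2 / 2 :=
    taylor_key φ φ' x 1 hx (by norm_num) hφ hlip
  have h0 : |φ 0 - φ x - φ' x * (0 - x)| ≤ (0 - x) ^ 2 / 2 :=
    taylor_key φ φ' x 0 hx (by norm_num) hφ hlip
  have e1 := abs_le.1 h1
  have e0 := abs_le.1 h0
  rw [abs_le]
  constructor <;> nlinarith [e1.1, e1.2, e0.1, e0.2]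
end

section
/- (Milovanović–Pečarić inequality, Theorem 2.1) Let n > 1 be an integer and let f : ℝ → ℝ be n times differentiable with |f^{(n)}(x)| ≤ M for all x ∈ (a,b), where a < b. For k = 1,…,n-1 define F_k = ((n-k)/k!) · (f^{(k-1)}(a)(x-a)^k - f^{(k-1)}(b)(x-b)^k)/(b-a). Then for every x ∈ [a,b], |(1/n)(f(x) + Σ_{k=1}^{n-1} F_k) - (1/(b-a)) ∫_a^b f(t) dt| ≤ (M/(n·(n+1)!)) · ((x-a)^{n+1} + (b-x)^{n+1})/(b-a). -/
open MeasureTheory intervalIntegral Set Finset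

lemma mp_hasDerivAt_mul_pow {p : ℝ → ℝ} {q t x : ℝ} (m : ℕ) (hp : HasDerivAt p q t) :
    HasDerivAt (fun s => p s * (x - s) ^ (m + 1))
      (q * (x - t) ^ (m + 1) - (m + 1) * p t * (x - t) ^ m) t := by
  have h1 := (((hasDerivAt_id t).const_sub x)).pow (m + 1)
  have h2 := hp.mul h1
  refine h2.congr_deriv ?_
  simp only [id_eq, Nat.add_sub_cancel, Pi.pow_apply]
  push_cast
  ring

lemma mp_tele (m : ℕ) (w : ℕ → ℝ) :
    ∑ i ∈ Finset.range m, ((m : ℝ) - i) * (w (i + 1) - w i)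
      = (∑ i ∈ Finset.range m, w (i + 1)) - m * w 0 := by
  induction m with
  | zero => simp
  | succ m ih =>
    have : ∀ i ∈ Finset.range (m+1), ((m + 1 : ℕ) : ℝ) - i = ((m : ℝ) - i) + 1 := by
      intro i _; push_cast; ring
    rw [Finset.sum_congr rfl (fun i hi => by rw [this i hi, add_mul]), Finset.sum_add_distrib,
      Finset.sum_range_succ (fun i => ((m : ℝ) - i) * (w (i+1) - w i)), ih]
    simp only [one_mul]
    rw [Finset.sum_range_sub (fun i => w i)]
    rw [Finset.sum_range_succ (fun i => w (i+1))]
    push_cast; ring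

lemma mp_integral_pow_sub (m : ℕ) (t x : ℝ) :
    ∫ s in t..x, (x - s) ^ m = (x - t) ^ (m + 1) / (m + 1) := by
  rw [intervalIntegral.integral_comp_sub_left (fun u => u ^ m) x]
  simp [integral_pow]

lemma mp_integral_sub_pow (m : ℕ) (t x : ℝ) :
    ∫ s in x..t, (s - x) ^ m = (t - x) ^ (m + 1) / (m + 1) := by
  rw [intervalIntegral.integral_comp_sub_right (fun u => u ^ m) x]
  simp [integral_pow]

lemma mp_abs_integral_abs_pow (m : ℕ) (t x : ℝ) :
    |∫ s in t..x, |x - s| ^ m| = |x - t| ^ (m + 1) / (m + 1) := by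
  rcases le_total t x with h | h
  · have : (∫ s in t..x, |x - s| ^ m) = ∫ s in t..x, (x - s) ^ m := by
      apply intervalIntegral.integral_congr
      intro s hs
      rw [Set.uIcc_of_le h] at hs
      show |x - s| ^ m = (x - s) ^ m
      rw [abs_of_nonneg (by linarith [hs.2])]
    rw [this, mp_integral_pow_sub, abs_of_nonneg (div_nonneg (pow_nonneg (by linarith) _) (by positivity)),
      abs_of_nonneg (by linarith : (0:ℝ) ≤ x - t)]
  · have : (∫ s in t..x, |x - s| ^ m) = ∫ s in t..x, (s - x) ^ m := by
      apply intervalIntegral.integral_congr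
      intro s hs
      rw [Set.uIcc_of_ge h] at hs
      show |x - s| ^ m = (s - x) ^ m
      rw [abs_of_nonpos (by linarith [hs.1]), neg_sub]
    rw [this, intervalIntegral.integral_symm x t, mp_integral_sub_pow, abs_neg,
      abs_of_nonneg (div_nonneg (pow_nonneg (by linarith) _) (by positivity)), abs_of_nonpos (by linarith : x - t ≤ 0), neg_sub]

theorem milovanovic_pecaric (n : ℕ) (hn : 1 < n) (a b M : ℝ) (hab : a < b) (hM : 0 < M)
    (f : ℝ → ℝ)
    (hdiff : ∀ k < n, Differentiable ℝ (iteratedDeriv k f))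
    (hbound : ∀ t ∈ Set.Ioo a b, |iteratedDeriv n f t| ≤ M)
    (x : ℝ) (hx : x ∈ Set.Icc a b) :
    |(1 / (n : ℝ)) * (f x + ∑ k ∈ Finset.Icc 1 (n - 1),
        (((n : ℝ) - k) / (Nat.factorial k)) *
          ((iteratedDeriv (k - 1) f a * (x - a) ^ k -
            iteratedDeriv (k - 1) f b * (x - b) ^ k) / (b - a))) -
      (1 / (b - a)) * ∫ t in a..b, f t| ≤
    (M / ((n : ℝ) * (Nat.factorial (n + 1)))) *
      (((x - a) ^ (n + 1) + (b - x) ^ (n + 1)) / (b - a)) := by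
  obtain ⟨m, rfl⟩ := Nat.exists_eq_succ_of_ne_zero (by omega : n ≠ 0)
  have hm : 1 ≤ m := by omega
  have hba : (0:ℝ) < b - a := by linarith
  set D : ℕ → ℝ → ℝ := fun k => iteratedDeriv k f with hDdef
  have hdiffD : ∀ k, k ≤ m → Differentiable ℝ (D k) := fun k hk => hdiff k (by omega)
  have hcont : ∀ k, k ≤ m → Continuous (D k) := fun k hk => (hdiffD k hk).continuous
  have hfc : Continuous f := by
    have := (hdiff 0 (by omega)).continuous
    rwa [iteratedDeriv_zero] at this
  have hD : ∀ k, k ≤ m → ∀ t : ℝ, HasDerivAt (D k) (D (k + 1) t) t := by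
    intro k hk t
    have h := ((hdiffD k hk) t).hasDerivAt
    have e : D (k + 1) = deriv (D k) := iteratedDeriv_succ
    rw [e]
    exact h
  set v : ℕ → ℝ → ℝ := fun k t => D k t * (x - t) ^ k / (Nat.factorial k) with hvdef
  set w : ℕ → ℝ → ℝ := fun k t => D (k + 1) t * (x - t) ^ k / (Nat.factorial k) with hwdef
  set g : ℝ → ℝ := fun t => ∑ k ∈ Finset.range (m + 1), v k t with hgdef
  have hv0 : ∀ t, v 0 t = f t := by
    intro t
    simp [hvdef, hDdef, iteratedDeriv_zero]
  have hvcont : ∀ k, k ≤ m → Continuous (v k) := by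
    intro k hk
    exact ((hcont k hk).mul ((continuous_const.sub continuous_id).pow k)).div_const _
  have hgcont : Continuous g := by
    rw [hgdef]
    exact continuous_finset_sum _ fun k hk => hvcont k (by
      have := Finset.mem_range.mp hk; omega)
  have hgx : g x = f x := by
    show (∑ k ∈ Finset.range (m + 1), v k x) = f x
    rw [Finset.sum_eq_single_of_mem 0 (Finset.mem_range.mpr (Nat.succ_pos m))
      (fun k _ hk => by simp [hvdef, sub_self, zero_pow hk])]
    exact hv0 x
  -- derivative of v (i+1)
  have hv' : ∀ i, i + 1 ≤ m → ∀ t : ℝ, HasDerivAt (v (i + 1)) (w (i + 1) t - w i t) t := by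
    intro i hi t
    have hmul := (mp_hasDerivAt_mul_pow (x := x) i (hD (i + 1) hi t)).div_const
      ((Nat.factorial (i + 1) : ℝ))
    have heq : w (i + 1) t - w i t = (D (i + 1 + 1) t * (x - t) ^ (i + 1)
        - ((i:ℝ) + 1) * D (i + 1) t * (x - t) ^ i) / (Nat.factorial (i + 1)) := by
      show D (i + 1 + 1) t * (x - t) ^ (i + 1) / (Nat.factorial (i + 1))
        - D (i + 1) t * (x - t) ^ i / (Nat.factorial i) = _
      have hfs : ((Nat.factorial (i + 1) : ℝ)) = ((i : ℝ) + 1) * (Nat.factorial i) := by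
        rw [Nat.factorial_succ]; push_cast; ring
      have h2 : (Nat.factorial i : ℝ) ≠ 0 := by positivity
      have h1 : ((i:ℝ) + 1) ≠ 0 := by positivity
      rw [hfs]
      field_simp
    rw [heq]
    exact hmul
  have hv0' : ∀ t : ℝ, HasDerivAt (v 0) (w 0 t) t := by
    intro t
    have h := hD 0 (by omega) t
    have e : v 0 = D 0 := by funext s; simp [hvdef]
    have e2 : w 0 t = D 1 t := by simp [hwdef]
    rw [e, e2]
    exact h
  -- derivative of g
  have hg' : ∀ t : ℝ, HasDerivAt g (w m t) t := by
    intro t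
    have hsum : HasDerivAt (fun s => ∑ i ∈ Finset.range m, v (i + 1) s)
        (∑ i ∈ Finset.range m, (w (i + 1) t - w i t)) t :=
      HasDerivAt.fun_sum fun i hi => hv' i (Finset.mem_range.mp hi) t
    have hadd := hsum.add (hv0' t)
    have hfun : g = fun s => (∑ i ∈ Finset.range m, v (i + 1) s) + v 0 s := by
      funext s
      rw [hgdef]
      exact Finset.sum_range_succ' (fun k => v k s) m
    rw [hfun]
    refine hadd.congr_deriv ?_
    rw [Finset.sum_range_sub (fun i => w i t)]
    ring
  -- measurability of D (m+1)
  have hDm : Measurable (D (m + 1)) := by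
    have e : D (m + 1) = deriv (D m) := iteratedDeriv_succ
    rw [e]
    exact measurable_deriv _
  have hwmeas : Measurable (w m) := by
    rw [hwdef]
    exact (hDm.mul ((measurable_const.sub measurable_id).pow_const m)).div_const _
  -- a.e. bound on D (m+1)
  have haeM : ∀ᵐ s : ℝ ∂volume, s ∈ Set.Icc a b → |D (m + 1) s| ≤ M := by
    have h0 : (volume : Measure ℝ) {a, b} = 0 :=
      (Set.toFinite ({a, b} : Set ℝ)).measure_zero _
    filter_upwards [measure_eq_zero_iff_ae_notMem.mp h0] with s hs hmem
    simp only [Set.mem_insert_iff, Set.mem_singleton_iff, not_or] at hs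
    exact hbound s ⟨lt_of_le_of_ne hmem.1 (Ne.symm hs.1), lt_of_le_of_ne hmem.2 hs.2⟩
  have hsubIcc : ∀ t ∈ Set.Icc a b, Set.uIcc t x ⊆ Set.Icc a b := by
    intro t ht
    rw [← Set.uIcc_of_le hab.le]
    exact Set.uIcc_subset_uIcc (by rwa [Set.uIcc_of_le hab.le]) (by rwa [Set.uIcc_of_le hab.le])
  -- interval integrability of w m
  have hint : ∀ t ∈ Set.Icc a b, IntervalIntegrable (w m) volume t x := by
    intro t ht
    rw [intervalIntegrable_iff]
    have hsub : Set.uIoc t x ⊆ Set.Icc a b := Set.uIoc_subset_uIcc.trans (hsubIcc t ht)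
    apply MeasureTheory.Integrable.mono'
      (g := fun _ : ℝ => M * (b - a) ^ m / (Nat.factorial m))
    · exact integrableOn_const (by rw [Set.uIoc]; exact measure_Ioc_lt_top.ne)
    · exact hwmeas.aestronglyMeasurable.restrict
    · filter_upwards [ae_restrict_mem measurableSet_uIoc, ae_restrict_of_ae haeM]
        with s hsmem hsM
      have h1 : s ∈ Set.Icc a b := hsub hsmem
      have h2 : |D (m + 1) s| ≤ M := hsM h1
      have h3 : |x - s| ≤ b - a := by
        rw [abs_le]
        constructor <;> linarith [hx.1, hx.2, h1.1, h1.2]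
      have e : ‖w m s‖ = |D (m + 1) s| * |x - s| ^ m / (Nat.factorial m) := by
        rw [hwdef]
        simp [Real.norm_eq_abs, abs_div, abs_mul, abs_pow, Nat.abs_cast]
      rw [e]
      gcongr
  -- key pointwise bound
  have hkey : ∀ t ∈ Set.Icc a b,
      |f x - g t| ≤ M * |x - t| ^ (m + 1) / (Nat.factorial (m + 1)) := by
    intro t ht
    have hFTC : (∫ s in t..x, w m s) = g x - g t :=
      intervalIntegral.integral_eq_sub_of_hasDerivAt (fun s _ => hg' s) (hint t ht)
    rw [← hgx, ← hFTC]
    have hbint : IntervalIntegrable (fun s => M * |x - s| ^ m / (Nat.factorial m)) volume t x :=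
      by apply Continuous.intervalIntegrable; fun_prop
    have haebound : ∀ᵐ s ∂(volume.restrict (Set.uIoc t x)),
        ‖w m s‖ ≤ M * |x - s| ^ m / (Nat.factorial m) := by
      have hsub : Set.uIoc t x ⊆ Set.Icc a b := Set.uIoc_subset_uIcc.trans (hsubIcc t ht)
      filter_upwards [ae_restrict_mem measurableSet_uIoc, ae_restrict_of_ae haeM]
        with s hsmem hsM
      have h2 : |D (m + 1) s| ≤ M := hsM (hsub hsmem)
      have e : ‖w m s‖ = |D (m + 1) s| * |x - s| ^ m / (Nat.factorial m) := by
        rw [hwdef]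
        simp [Real.norm_eq_abs, abs_div, abs_mul, abs_pow, Nat.abs_cast]
      rw [e]
      gcongr
    have hle := intervalIntegral.norm_integral_le_abs_of_norm_le (μ := volume) haebound hbint
    refine hle.trans (le_of_eq ?_)
    have e : (fun s => M * |x - s| ^ m / (Nat.factorial m))
        = fun s => (M / (Nat.factorial m)) * |x - s| ^ m := by
      funext s; ring
    rw [e, intervalIntegral.integral_const_mul, abs_mul, mp_abs_integral_abs_pow,
      abs_of_nonneg (by positivity : (0:ℝ) ≤ M / (Nat.factorial m))]
    have hfs : ((Nat.factorial (m + 1) : ℝ)) = ((m : ℝ) + 1) * (Nat.factorial m) := by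
      rw [Nat.factorial_succ]; push_cast; ring
    rw [hfs, div_mul_div_comm]
    ring
  -- G and its derivative
  set G : ℝ → ℝ := fun t => ∑ i ∈ Finset.range m,
    ((m:ℝ) - i) * (D i t * (x - t) ^ (i + 1) / (Nat.factorial (i + 1))) with hGdef
  have hG' : ∀ t : ℝ, HasDerivAt G (g t - ((m:ℝ) + 1) * f t) t := by
    intro t
    have hterm : ∀ i ∈ Finset.range m, HasDerivAt
        (fun s => ((m:ℝ) - i) * (D i s * (x - s) ^ (i + 1) / (Nat.factorial (i + 1))))
        (((m:ℝ) - i) * (v (i + 1) t - v i t)) t := by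
      intro i hi
      have hfi : (Nat.factorial i : ℝ) ≠ 0 := by positivity
      have hi1 : ((i:ℝ) + 1) ≠ 0 := by positivity
      have hmul := ((mp_hasDerivAt_mul_pow (x := x) i (hD i (le_of_lt (Finset.mem_range.mp hi)) t)).div_const
        ((Nat.factorial (i + 1) : ℝ))).const_mul ((m:ℝ) - i)
      have heq : ((m:ℝ) - i) * (v (i + 1) t - v i t) = ((m:ℝ) - i) * ((D (i + 1) t * (x - t) ^ (i + 1)
          - ((i:ℝ) + 1) * D i t * (x - t) ^ i) / (Nat.factorial (i + 1))) := by
        show ((m:ℝ) - i) * (D (i + 1) t * (x - t) ^ (i + 1) / (Nat.factorial (i + 1))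
          - D i t * (x - t) ^ i / (Nat.factorial i)) = _
        have hfs : ((Nat.factorial (i + 1) : ℝ)) = ((i : ℝ) + 1) * (Nat.factorial i) := by
          rw [Nat.factorial_succ]; push_cast; ring
        have h2 : (Nat.factorial i : ℝ) ≠ 0 := by positivity
        have h1 : ((i:ℝ) + 1) ≠ 0 := by positivity
        rw [hfs]
        field_simp
      rw [heq]
      exact hmul
    have hsum := HasDerivAt.fun_sum hterm
    rw [hGdef]
    refine hsum.congr_deriv ?_
    rw [mp_tele m (fun k => v k t)]
    have e : g t = (∑ i ∈ Finset.range m, v (i + 1) t) + v 0 t := by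
      rw [hgdef]
      exact Finset.sum_range_succ' (fun k => v k t) m
    rw [e, hv0 t]
    ring
  have hGcont' : Continuous fun t => g t - ((m:ℝ) + 1) * f t :=
    hgcont.sub (continuous_const.mul hfc)
  have hFTCG : (∫ t in a..b, (g t - ((m:ℝ) + 1) * f t)) = G b - G a :=
    intervalIntegral.integral_eq_sub_of_hasDerivAt (fun t _ => hG' t)
      (hGcont'.intervalIntegrable a b)
  have hIg : (∫ t in a..b, g t) = (G b - G a) + ((m:ℝ) + 1) * ∫ t in a..b, f t := by
    have h1 : (∫ t in a..b, (g t - ((m:ℝ) + 1) * f t))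
        = (∫ t in a..b, g t) - ∫ t in a..b, ((m:ℝ) + 1) * f t :=
      intervalIntegral.integral_sub (hgcont.intervalIntegrable a b)
        ((hfc.intervalIntegrable a b).const_mul _)
    rw [intervalIntegral.integral_const_mul] at h1
    linarith [hFTCG, h1]
  have hphi : (∫ t in a..b, (f x - g t))
      = (b - a) * f x - (G b - G a) - ((m:ℝ) + 1) * ∫ t in a..b, f t := by
    rw [intervalIntegral.integral_sub intervalIntegrable_const (hgcont.intervalIntegrable a b),
      intervalIntegral.integral_const, hIg]
    simp only [smul_eq_mul]
    ring
  -- sum identity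
  have hS : (∑ k ∈ Finset.Icc 1 m, (((m + 1 : ℕ) : ℝ) - (k : ℝ)) / (Nat.factorial k) *
      ((iteratedDeriv (k - 1) f a * (x - a) ^ k - iteratedDeriv (k - 1) f b * (x - b) ^ k)
        / (b - a))) = (G a - G b) / (b - a) := by
    rw [← Finset.Ico_add_one_right_eq_Icc, Finset.sum_Ico_eq_sum_range]
    rw [hGdef]
    rw [← Finset.sum_sub_distrib, Finset.sum_div]
    apply Finset.sum_congr (by norm_num)
    intro i _
    have h1 : 1 + i - 1 = i := by omega
    rw [h1]
    have hfac : (Nat.factorial (1 + i) : ℝ) = Nat.factorial (i + 1) := by rw [add_comm]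
    rw [hfac, hDdef]
    have hfi : (Nat.factorial (i + 1) : ℝ) ≠ 0 := by positivity
    have hpow1 : (x - a) ^ (1 + i) = (x - a) ^ (i + 1) := by rw [add_comm]
    have hpow2 : (x - b) ^ (1 + i) = (x - b) ^ (i + 1) := by rw [add_comm]
    rw [hpow1, hpow2]
    push_cast
    field_simp
    ring
  -- representation of LHS
  have hrepr : (1 / ((m + 1 : ℕ) : ℝ)) * (f x + (∑ k ∈ Finset.Icc 1 (m + 1 - 1),
        ((((m + 1 : ℕ)) : ℝ) - k) / (Nat.factorial k) *
          ((iteratedDeriv (k - 1) f a * (x - a) ^ k -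
            iteratedDeriv (k - 1) f b * (x - b) ^ k) / (b - a)))) -
      (1 / (b - a)) * (∫ t in a..b, f t)
      = (∫ t in a..b, (f x - g t)) / (((m:ℝ) + 1) * (b - a)) := by
    rw [show m + 1 - 1 = m from rfl, hS, hphi]
    have h1 : ((m:ℝ) + 1) ≠ 0 := by positivity
    push_cast
    field_simp
    ring
  rw [hrepr]
  -- final bound
  have hbint2 : IntervalIntegrable
      (fun t => M * |x - t| ^ (m + 1) / (Nat.factorial (m + 1))) volume a b :=
    by apply Continuous.intervalIntegrable; fun_prop
  have hle := intervalIntegral.norm_integral_le_abs_of_norm_le (μ := volume)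
    (f := fun t => f x - g t) (a := a) (b := b)
    (g := fun t => M * |x - t| ^ (m + 1) / (Nat.factorial (m + 1))) ?_ hbint2
  · -- compute the bound integral
    have hsplit : (∫ t in a..b, |x - t| ^ (m + 1))
        = ((x - a) ^ (m + 2) + (b - x) ^ (m + 2)) / (m + 2) := by
      have hi1 : IntervalIntegrable (fun t => |x - t| ^ (m + 1)) volume a x :=
        by apply Continuous.intervalIntegrable; fun_prop
      have hi2 : IntervalIntegrable (fun t => |x - t| ^ (m + 1)) volume x b :=
        by apply Continuous.intervalIntegrable; fun_prop
      rw [← intervalIntegral.integral_add_adjacent_intervals hi1 hi2]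
      have e1 : (∫ t in a..x, |x - t| ^ (m + 1)) = (x - a) ^ (m + 2) / (m + 2) := by
        have : (∫ t in a..x, |x - t| ^ (m + 1)) = ∫ t in a..x, (x - t) ^ (m + 1) := by
          apply intervalIntegral.integral_congr
          intro s hs
          rw [Set.uIcc_of_le hx.1] at hs
          show |x - s| ^ (m + 1) = (x - s) ^ (m + 1)
          rw [abs_of_nonneg (by linarith [hs.2])]
        rw [this, mp_integral_pow_sub]
        push_cast
        ring
      have e2 : (∫ t in x..b, |x - t| ^ (m + 1)) = (b - x) ^ (m + 2) / (m + 2) := by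
        have : (∫ t in x..b, |x - t| ^ (m + 1)) = ∫ t in x..b, (t - x) ^ (m + 1) := by
          apply intervalIntegral.integral_congr
          intro s hs
          rw [Set.uIcc_of_le hx.2] at hs
          show |x - s| ^ (m + 1) = (s - x) ^ (m + 1)
          rw [abs_of_nonpos (by linarith [hs.1]), neg_sub]
        rw [this, mp_integral_sub_pow]
        push_cast
        ring
      rw [e1, e2]
      ring
    have hval : |∫ t in a..b, M * |x - t| ^ (m + 1) / (Nat.factorial (m + 1))|
        = M / (Nat.factorial (m + 1)) * (((x - a) ^ (m + 2) + (b - x) ^ (m + 2)) / (m + 2)) := by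
      have e : (fun t => M * |x - t| ^ (m + 1) / (Nat.factorial (m + 1)))
          = fun t => (M / (Nat.factorial (m + 1))) * |x - t| ^ (m + 1) := by
        funext t; ring
      rw [e, intervalIntegral.integral_const_mul, hsplit, abs_mul,
        abs_of_nonneg (by positivity : (0:ℝ) ≤ M / (Nat.factorial (m + 1))),
        abs_of_nonneg]
      have h1 : (0:ℝ) ≤ (x - a) ^ (m + 2) := pow_nonneg (by linarith [hx.1]) _
      have h2 : (0:ℝ) ≤ (b - x) ^ (m + 2) := pow_nonneg (by linarith [hx.2]) _
      positivity
    rw [abs_div, abs_of_nonneg (by positivity : (0:ℝ) ≤ ((m:ℝ) + 1) * (b - a)),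
      div_le_iff₀ (by positivity)]
    calc |∫ t in a..b, (f x - g t)|
        ≤ |∫ t in a..b, M * |x - t| ^ (m + 1) / (Nat.factorial (m + 1))| := hle
      _ = M / (Nat.factorial (m + 1)) * (((x - a) ^ (m + 2) + (b - x) ^ (m + 2)) / (m + 2)) :=
          hval
      _ = (M / (((m + 1 : ℕ) : ℝ) * (Nat.factorial (m + 1 + 1))) *
            (((x - a) ^ (m + 1 + 1) + (b - x) ^ (m + 1 + 1)) / (b - a))) *
            (((m:ℝ) + 1) * (b - a)) := by
          rw [show m + 1 + 1 = m + 2 from rfl, Nat.factorial_succ (m + 1)]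
          have h1 : ((m:ℝ) + 1) ≠ 0 := by positivity
          have h2 : (Nat.factorial (m + 1) : ℝ) ≠ 0 := by positivity
          push_cast
          field_simp
          ring
  · filter_upwards [ae_restrict_mem measurableSet_uIoc] with t ht
    have hsub : Set.uIoc a b ⊆ Set.Icc a b := by
      rw [Set.uIoc_of_le hab.le]
      exact Set.Ioc_subset_Icc_self
    exact hkey t (hsub ht)
end

section
/- (Milovanović–Pečarić inequality for n = 2) Let a < b and let f : ℝ → ℝ be twice differentiable with |f''(x)| ≤ M for all x ∈ (a,b). Then for every x ∈ [a,b], |(1/2)(f(x) + ((x-a)f(a) + (b-x)f(b))/(b-a)) - (1/(b-a)) ∫_a^b f(t) dt| ≤ (M(b-a)²/4) [1/12 + (x - (a+b)/2)²/(b-a)²]. -/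
open MeasureTheory intervalIntegral Set
open scoped Interval

theorem milovanovic_pecaric_n2 (a b M : ℝ) (hab : a < b) (hM : 0 < M)
    (f : ℝ → ℝ) (hdiff : Differentiable ℝ f) (hdiff' : Differentiable ℝ (deriv f))
    (hbound : ∀ t ∈ Set.Ioo a b, |deriv (deriv f) t| ≤ M)
    (x : ℝ) (hx : x ∈ Set.Icc a b) :
    |(1 / 2) * (f x + ((x - a) * f a + (b - x) * f b) / (b - a)) -
        (1 / (b - a)) * ∫ t in a..b, f t| ≤
      (M * (b - a) ^ 2 / 4) * (1 / 12 + (x - (a + b) / 2) ^ 2 / (b - a) ^ 2) := by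
  obtain ⟨hax, hxb⟩ := hx
  set f'' := deriv (deriv f) with hf''
  have hfc : Continuous f := hdiff.continuous
  have hf'c : Continuous (deriv f) := hdiff'.continuous
  have hmeas : Measurable f'' := measurable_deriv _
  -- interval integrability of f'' on subintervals of [a,b]
  have hne : ∀ᵐ t : ℝ, t ∉ ({a, b} : Set ℝ) :=
    measure_eq_zero_iff_ae_notMem.mp ((Set.toFinite ({a, b} : Set ℝ)).measure_zero volume)
  have key : ∀ c d : ℝ, c ∈ Icc a b → d ∈ Icc a b →
      IntervalIntegrable f'' volume c d := by
    intro c d hc hd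
    rw [intervalIntegrable_iff]
    haveI : IsFiniteMeasure (volume.restrict (Ι c d)) := by
      constructor
      rw [Measure.restrict_apply_univ, Set.uIoc, Real.volume_Ioc]
      exact ENNReal.ofReal_lt_top
    refine (integrable_const M).mono' hmeas.aestronglyMeasurable ?_
    have h1 : ∀ᵐ t ∂(volume.restrict (Ι c d)), t ∈ Ι c d :=
      ae_restrict_mem measurableSet_uIoc
    have h2 : ∀ᵐ t ∂(volume.restrict (Ι c d)), t ∉ ({a, b} : Set ℝ) :=
      ae_restrict_of_ae hne
    filter_upwards [h1, h2] with t ht hne'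
    have htIcc : t ∈ Icc a b := (uIcc_subset_Icc hc hd) (uIoc_subset_uIcc ht)
    have hta : t ≠ a := fun h => hne' (by simp [h])
    have htb : t ≠ b := fun h => hne' (by simp [h])
    have : t ∈ Set.Ioo a b := ⟨lt_of_le_of_ne htIcc.1 (Ne.symm hta), lt_of_le_of_ne htIcc.2 htb⟩
    simpa using hbound t this
  -- integration by parts on a subinterval with quadratic kernel (t-r)(t-s)/2
  have parts : ∀ c d r s : ℝ, c ∈ Icc a b → d ∈ Icc a b →
      ∫ t in c..d, ((t - r) * (t - s) / 2) * f'' t =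
        ((d - r) * (d - s) / 2) * deriv f d - ((c - r) * (c - s) / 2) * deriv f c -
          ((d - (r + s) / 2) * f d - (c - (r + s) / 2) * f c) + ∫ t in c..d, f t := by
    intro c d r s hc hd
    have hu : ∀ t ∈ uIcc c d, HasDerivAt (fun t => (t - r) * (t - s) / 2)
        (t - (r + s) / 2) t := by
      intro t _
      have h := ((hasDerivAt_id' (x := t)).sub_const r).mul
        ((hasDerivAt_id' (x := t)).sub_const s) |>.div_const 2
      exact h.congr_deriv (by ring)
    have hv : ∀ t ∈ uIcc c d, HasDerivAt (deriv f) (f'' t) t :=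
      fun t _ => (hdiff' t).hasDerivAt
    have hu' : IntervalIntegrable (fun t => t - (r + s) / 2) volume c d :=
      ((continuous_id.sub continuous_const).intervalIntegrable c d)
    have step1 := integral_mul_deriv_eq_deriv_mul hu hv hu' (key c d hc hd)
    have hu2 : ∀ t ∈ uIcc c d, HasDerivAt (fun t => t - (r + s) / 2) 1 t :=
      fun t _ => (hasDerivAt_id' (x := t)).sub_const _
    have hv2 : ∀ t ∈ uIcc c d, HasDerivAt f (deriv f t) t :=
      fun t _ => (hdiff t).hasDerivAt
    have step2 := integral_mul_deriv_eq_deriv_mul hu2 hv2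
      (intervalIntegrable_const) (hf'c.intervalIntegrable c d)
    rw [step1, step2]
    simp only [one_mul]
    ring
  have haIcc : a ∈ Icc a b := ⟨le_refl a, le_of_lt hab⟩
  have hbIcc : b ∈ Icc a b := ⟨le_of_lt hab, le_refl b⟩
  have hxIcc : x ∈ Icc a b := ⟨hax, hxb⟩
  set I1 := ∫ t in a..x, ((t - x) * (t - a) / 2) * f'' t with hI1
  set I2 := ∫ t in x..b, ((t - x) * (t - b) / 2) * f'' t with hI2
  have e1 := parts a x x a haIcc hxIcc
  have e2 := parts x b x b hxIcc hbIcc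
  have hsplit : (∫ t in a..x, f t) + ∫ t in x..b, f t = ∫ t in a..b, f t :=
    integral_add_adjacent_intervals (hfc.intervalIntegrable a x) (hfc.intervalIntegrable x b)
  have hsum : I1 + I2 = (∫ t in a..b, f t) - (b - a) / 2 * f x - (x - a) / 2 * f a
      - (b - x) / 2 * f b := by
    rw [hI1, hI2, e1, e2, ← hsplit]
    ring
  -- bound |I1|
  have bnd : ∀ c d r : ℝ, c ≤ d → c ∈ Icc a b → d ∈ Icc a b →
      |∫ t in c..d, ((t - c) * (t - d) / 2) * f'' t| ≤ M * (d - c) ^ 3 / 12 := by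
    intro c d r hcd hc hd
    have hKf : IntervalIntegrable (fun t => ((t - c) * (t - d) / 2) * f'' t) volume c d := by
      exact (key c d hc hd).continuousOn_mul (Continuous.continuousOn (by fun_prop))
    calc |∫ t in c..d, ((t - c) * (t - d) / 2) * f'' t|
        ≤ ∫ t in c..d, |((t - c) * (t - d) / 2) * f'' t| := by
          simpa only [Real.norm_eq_abs] using intervalIntegral.norm_integral_le_integral_norm
            (f := fun t => ((t - c) * (t - d) / 2) * f'' t) (μ := volume) hcd
      _ ≤ ∫ t in c..d, ((t - c) * (d - t) / 2) * M := by
          apply intervalIntegral.integral_mono_on hcd hKf.abs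
            ((Continuous.intervalIntegrable (by fun_prop) c d))
          intro t ht
          rcases eq_or_lt_of_le ht.1 with h1 | h1
          · simp [← h1]
          rcases eq_or_lt_of_le ht.2 with h2 | h2
          · simp [h2]
          have htab : t ∈ Set.Ioo a b := ⟨lt_of_le_of_lt hc.1 h1, lt_of_lt_of_le h2 hd.2⟩
          have hK : |(t - c) * (t - d) / 2| = (t - c) * (d - t) / 2 := by
            rw [abs_div, abs_of_pos (by norm_num : (0:ℝ) < 2), abs_mul,
              abs_of_pos (by linarith), abs_of_neg (by linarith)]
            ring
          rw [abs_mul, hK]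
          exact mul_le_mul_of_nonneg_left (hbound t htab)
            (by nlinarith [sub_pos.mpr h1, sub_pos.mpr h2])
      _ = M * (d - c) ^ 3 / 12 := by
          have : ∀ t ∈ uIcc c d, HasDerivAt
              (fun t => M / 2 * (-t ^ 3 / 3 + (c + d) * t ^ 2 / 2 - c * d * t))
              (((t - c) * (d - t) / 2) * M) t := by
            intro t _
            have h := (((((hasDerivAt_pow 3 t).neg.div_const 3).add
              (((hasDerivAt_pow 2 t).const_mul (c + d)).div_const 2)).sub
              ((hasDerivAt_id' (x := t)).const_mul (c * d))).const_mul (M / 2))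
            exact h.congr_deriv (by norm_num; ring)
          rw [intervalIntegral.integral_eq_sub_of_hasDerivAt this
            (Continuous.intervalIntegrable (by fun_prop) c d)]
          ring
  have hb1 : |I1| ≤ M * (x - a) ^ 3 / 12 := by
    have h := bnd a x 0 hax haIcc hxIcc
    have hcongr : I1 = ∫ t in a..x, ((t - a) * (t - x) / 2) * f'' t := by
      rw [hI1]; apply intervalIntegral.integral_congr; intro t _; ring
    rw [hcongr]; exact h
  have hb2 : |I2| ≤ M * (b - x) ^ 3 / 12 := by
    simpa [hI2] using bnd x b 0 hxb hxIcc hbIcc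
  -- assemble
  have hba : (0:ℝ) < b - a := by linarith
  have hL : (1 / 2) * (f x + ((x - a) * f a + (b - x) * f b) / (b - a)) -
      (1 / (b - a)) * ∫ t in a..b, f t = -(I1 + I2) / (b - a) := by
    rw [hsum]
    field_simp
    ring
  rw [hL, abs_div, abs_of_pos hba, div_le_iff₀ hba]
  have habs : |-(I1 + I2)| ≤ M * (x - a) ^ 3 / 12 + M * (b - x) ^ 3 / 12 := by
    rw [abs_neg]
    exact (abs_add_le I1 I2).trans (add_le_add hb1 hb2)
  refine habs.trans (le_of_eq ?_)
  field_simp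
  ring
end

section
/- (Three-point estimate with first derivative bound) Let f : [-1,1] → ℝ be differentiable with |f'(t)| ≤ M for all t ∈ [-1,1], and let -1 < x < 1. Then |∫_{-1}^1 f(t) dt - f(x) - (1/2)[(1+x) f(-1) + (1-x) f(1)]| ≤ (1/2)(1 + x²) M. -/
open MeasureTheory intervalIntegral Set

-- auxiliary: integral of |c - t| over [a,b] with a ≤ c ≤ b
lemma integral_abs_sub (a b c : ℝ) (hac : a ≤ c) (hcb : c ≤ b) :
    (∫ t in a..b, |c - t|) = ((c - a) ^ 2 + (b - c) ^ 2) / 2 := by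
  have h1 : (∫ t in a..c, |c - t|) = ∫ t in a..c, (c - t) := by
    apply intervalIntegral.integral_congr
    intro t ht
    rw [Set.uIcc_of_le hac] at ht
    show |c - t| = c - t
    rw [abs_of_nonneg (by linarith [ht.2])]
  have h2 : (∫ t in c..b, |c - t|) = ∫ t in c..b, (t - c) := by
    apply intervalIntegral.integral_congr
    intro t ht
    rw [Set.uIcc_of_le hcb] at ht
    show |c - t| = t - c
    rw [abs_of_nonpos (by linarith [ht.1]), neg_sub]
  have hint : IntervalIntegrable (fun t : ℝ => |c - t|) volume a c ∧
      IntervalIntegrable (fun t : ℝ => |c - t|) volume c b := by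
    constructor <;>
      exact (Continuous.abs (by continuity)).intervalIntegrable _ _
  rw [← intervalIntegral.integral_add_adjacent_intervals hint.1 hint.2, h1, h2]
  have e1 : (∫ t in a..c, (c - t)) = (c - a) ^ 2 / 2 := by
    rw [intervalIntegral.integral_sub intervalIntegrable_const intervalIntegrable_id]
    simp [integral_id]
    ring
  have e2 : (∫ t in c..b, (t - c)) = (b - c) ^ 2 / 2 := by
    rw [intervalIntegral.integral_sub intervalIntegrable_id intervalIntegrable_const]
    simp [integral_id]
    ring
  rw [e1, e2]; ring

lemma key_bound (g : ℝ → ℝ) (M a b c : ℝ) (hac : a ≤ c) (hcb : c ≤ b)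
    (hg : IntervalIntegrable (fun t => (c - t) * g t) volume a b)
    (hb : ∀ t ∈ Set.Ioo a b, |g t| ≤ M) :
    |∫ t in a..b, (c - t) * g t| ≤ M * ((c - a) ^ 2 + (b - c) ^ 2) / 2 := by
  have hab : a ≤ b := hac.trans hcb
  calc |∫ t in a..b, (c - t) * g t| ≤ ∫ t in a..b, |(c - t) * g t| :=
        intervalIntegral.abs_integral_le_integral_abs hab
    _ ≤ ∫ t in a..b, M * |c - t| := by
        apply intervalIntegral.integral_mono_ae_restrict hab hg.abs
          ((continuous_const.mul (Continuous.abs (by continuity))).intervalIntegrable _ _)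
        have hmem : ∀ᵐ t ∂(volume.restrict (Set.Icc a b)), t ∈ Set.Ioo a b := by
          rw [← MeasureTheory.Measure.restrict_congr_set MeasureTheory.Ioo_ae_eq_Icc]
          exact MeasureTheory.ae_restrict_mem measurableSet_Ioo
        filter_upwards [hmem] with t ht
        rw [abs_mul]
        have h1 := hb t ht
        simp only [Pi.mul_apply]; nlinarith [abs_nonneg (g t), abs_nonneg (c - t)]
    _ = M * ((c - a) ^ 2 + (b - c) ^ 2) / 2 := by
        rw [intervalIntegral.integral_const_mul, integral_abs_sub a b c hac hcb]
        ring

lemma piece_estimate (M : ℝ) (f f' : ℝ → ℝ)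
    (hf : ∀ t ∈ Set.Icc (-1:ℝ) 1, HasDerivWithinAt f (f' t) (Set.Icc (-1) 1) t)
    (hbound : ∀ t ∈ Set.Icc (-1:ℝ) 1, |f' t| ≤ M)
    (a b c : ℝ) (ha : -1 ≤ a) (hb : b ≤ 1) (hac : a ≤ c) (hcb : c ≤ b) :
    |(∫ t in a..b, f t) + (c - b) * f b - (c - a) * f a| ≤
      M * ((c - a) ^ 2 + (b - c) ^ 2) / 2 := by
  have hab : a ≤ b := hac.trans hcb
  have hM : 0 ≤ M := (abs_nonneg _).trans (hbound 0 (by norm_num))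
  have hsub : Set.Icc a b ⊆ Set.Icc (-1:ℝ) 1 := Set.Icc_subset_Icc ha hb
  have hsubo : Set.Ioo a b ⊆ Set.Ioo (-1:ℝ) 1 := Set.Ioo_subset_Ioo ha hb
  have hcont : ContinuousOn f (Set.Icc (-1:ℝ) 1) := fun t ht =>
    (hf t ht).continuousWithinAt
  have hder : ∀ t ∈ Set.Ioo (-1:ℝ) 1, HasDerivAt f (f' t) t := fun t ht =>
    (hf t (Set.Ioo_subset_Icc_self ht)).hasDerivAt (Icc_mem_nhds ht.1 ht.2)
  have hderiv : ∀ t ∈ Set.Ioo (-1:ℝ) 1, deriv f t = f' t := fun t ht =>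
    (hder t ht).deriv
  -- integrability of the kernel times derivative
  have hg_int : IntervalIntegrable (fun t => (c - t) * deriv f t) volume a b := by
    rw [intervalIntegrable_iff_integrableOn_Ioc_of_le hab]
    have hmeas : AEStronglyMeasurable (fun t => (c - t) * deriv f t)
        (volume.restrict (Set.Ioc a b)) :=
      ((measurable_const.sub measurable_id).mul (measurable_deriv f)).aestronglyMeasurable
    refine Integrable.mono' (g := fun _ => 2 * M)
      (integrableOn_const measure_Ioc_lt_top.ne) hmeas ?_
    have hae : ∀ᵐ t ∂(volume.restrict (Set.Ioc a b)), t ∈ Set.Ioo a b := by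
      rw [← MeasureTheory.Measure.restrict_congr_set MeasureTheory.Ioo_ae_eq_Ioc]
      exact MeasureTheory.ae_restrict_mem measurableSet_Ioo
    filter_upwards [hae] with t ht
    have ht1 := hsubo ht
    rw [Real.norm_eq_abs, abs_mul, hderiv t ht1]
    have h1 : |c - t| ≤ 2 := by
      rw [abs_le]; constructor <;> nlinarith [ht1.1, ht1.2, hac.trans hcb]
    have h2 := hbound t (Set.Ioo_subset_Icc_self ht1)
    nlinarith [abs_nonneg (c - t), abs_nonneg (f' t)]
  have hf_int : IntervalIntegrable f volume a b := by
    apply ContinuousOn.intervalIntegrable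
    apply hcont.mono
    rw [Set.uIcc_of_le hab]; exact hsub
  -- FTC for F t = (c - t) * f t
  have hFTC : (∫ t in a..b, (-1 * f t + (c - t) * deriv f t)) =
      (c - b) * f b - (c - a) * f a := by
    apply intervalIntegral.integral_eq_sub_of_hasDeriv_right_of_le hab
    · exact (continuousOn_const.sub continuousOn_id).mul (hcont.mono hsub)
    · intro t ht
      have ht1 := hsubo ht
      have : HasDerivAt (fun t => (c - t) * f t) (-1 * f t + (c - t) * deriv f t) t := by
        rw [hderiv t ht1]
        have := ((hasDerivAt_const t c).sub (hasDerivAt_id t)).mul (hder t ht1)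
        exact this.congr_deriv (by show (0 - 1) * f t + (c - t) * f' t = _; ring)
      exact this.hasDerivWithinAt
    · exact (hf_int.const_mul (-1)).add hg_int
  have hsplit : (∫ t in a..b, (-1 * f t + (c - t) * deriv f t)) =
      -(∫ t in a..b, f t) + ∫ t in a..b, (c - t) * deriv f t := by
    rw [intervalIntegral.integral_add (hf_int.const_mul (-1)) hg_int,
      intervalIntegral.integral_const_mul]
    ring
  have hid : (∫ t in a..b, (c - t) * deriv f t) =
      (∫ t in a..b, f t) + (c - b) * f b - (c - a) * f a := by
    rw [hsplit] at hFTC; linarith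
  rw [← hid]
  exact key_bound (deriv f) M a b c hac hcb hg_int
    (fun t ht => by rw [hderiv t (hsubo ht)]; exact hbound t (Set.Ioo_subset_Icc_self (hsubo ht)))

theorem three_point_first_derivative_estimate (M : ℝ) (f f' : ℝ → ℝ)
    (hf : ∀ t ∈ Set.Icc (-1:ℝ) 1, HasDerivWithinAt f (f' t) (Set.Icc (-1) 1) t)
    (hbound : ∀ t ∈ Set.Icc (-1:ℝ) 1, |f' t| ≤ M)
    (x : ℝ) (hx : x ∈ Set.Ioo (-1:ℝ) 1) :
    |(∫ t in (-1:ℝ)..1, f t) - f x - (1 / 2) * ((1 + x) * f (-1) + (1 - x) * f 1)| ≤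
      (1 / 2) * (1 + x ^ 2) * M := by
  obtain ⟨hx1, hx2⟩ := hx
  have hM : 0 ≤ M := (abs_nonneg _).trans (hbound 0 (by norm_num))
  have h1 := piece_estimate M f f' hf hbound (-1) x ((x - 1) / 2)
    le_rfl hx2.le (by linarith) (by linarith)
  have h2 := piece_estimate M f f' hf hbound x 1 ((x + 1) / 2)
    (by linarith) le_rfl (by linarith) (by linarith)
  have hcont : ContinuousOn f (Set.Icc (-1:ℝ) 1) := fun t ht =>
    (hf t ht).continuousWithinAt
  have hint : ∀ a b : ℝ, -1 ≤ a → a ≤ b → b ≤ 1 → IntervalIntegrable f volume a b := by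
    intro a b ha hab hb
    apply ContinuousOn.intervalIntegrable
    apply hcont.mono
    rw [Set.uIcc_of_le hab]; exact Set.Icc_subset_Icc ha hb
  have hsplit : (∫ t in (-1:ℝ)..1, f t) = (∫ t in (-1:ℝ)..x, f t) + ∫ t in x..1, f t :=
    (intervalIntegral.integral_add_adjacent_intervals
      (hint (-1) x le_rfl (by linarith) (by linarith))
      (hint x 1 (by linarith) (by linarith) le_rfl)).symm
  have key : (∫ t in (-1:ℝ)..1, f t) - f x - (1 / 2) * ((1 + x) * f (-1) + (1 - x) * f 1) =
      ((∫ t in (-1:ℝ)..x, f t) + ((x - 1) / 2 - x) * f x - ((x - 1) / 2 - (-1)) * f (-1)) +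
      ((∫ t in x..1, f t) + ((x + 1) / 2 - 1) * f 1 - ((x + 1) / 2 - x) * f x) := by
    rw [hsplit]; ring
  rw [key]
  calc |_ + _| ≤ _ + _ := abs_add_le _ _
    _ ≤ M * (((x - 1) / 2 - (-1)) ^ 2 + (x - (x - 1) / 2) ^ 2) / 2 +
        M * (((x + 1) / 2 - x) ^ 2 + (1 - (x + 1) / 2) ^ 2) / 2 := add_le_add h1 h2
    _ = (1 / 2) * (1 + x ^ 2) * M := by ring
end

section
/- (Third-derivative estimate for the modified three-point rule of degree 2) Let 0 ≤ x < 1 with x ≠ 0 allowed, and let f : [-1,1] → ℝ be three times differentiable with |f'''(t)| ≤ M for all t ∈ [-1,1]. Then |∫_{-1}^1 f(t) dt - (1/3)[((1+3x)/(1+x)) f(-1) + (4/(1-x²)) f(x) + ((1-3x)/(1-x)) f(1)]| ≤ M₂(x) M, where M₂(x) = (8x⁵ + 49x⁴ - 60x³ + 22x² - 4x + 1)/(36(1-x)⁴) for 0 ≤ x < 1/3, and M₂(x) = 2x/9 for 1/3 ≤ x < 1. -/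
open MeasureTheory intervalIntegral Set

lemma hasDerivAt_cubic (c0 c1 c2 c3 u : ℝ) :
    HasDerivAt (fun u : ℝ => c3*u^3 + c2*u^2 + c1*u + c0) (3*c3*u^2 + 2*c2*u + c1) u := by
  have h := (((hasDerivAt_pow 3 u).const_mul c3).add ((hasDerivAt_pow 2 u).const_mul c2)).add
    (((hasDerivAt_id u).const_mul c1).add (hasDerivAt_const u c0))
  convert h using 1
  · rfl
  · rfl
  · ext v; simp only [id_eq, Pi.add_apply]; ring
  · simp; ring

lemma hasDerivAt_quartic (c0 c1 c2 c3 u : ℝ) :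
    HasDerivAt (fun u : ℝ => c3*u^4/4 + c2*u^3/3 + c1*u^2/2 + c0*u)
      (c3*u^3 + c2*u^2 + c1*u + c0) u := by
  have h := ((((hasDerivAt_pow 4 u).const_mul (c3/4)).add
      ((hasDerivAt_pow 3 u).const_mul (c2/3))).add
      ((hasDerivAt_pow 2 u).const_mul (c1/2))).add ((hasDerivAt_id u).const_mul c0)
  convert h using 1
  · rfl
  · rfl
  · ext v; simp only [id_eq, Pi.add_apply]; ring
  · simp; ring

lemma hasDerivAt_quad (c0 c1 c2 u : ℝ) :
    HasDerivAt (fun u : ℝ => c2*u^2 + c1*u + c0) (2*c2*u + c1) u := by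
  have h := ((hasDerivAt_pow 2 u).const_mul c2).add
    (((hasDerivAt_id u).const_mul c1).add (hasDerivAt_const u c0))
  convert h using 1
  · rfl
  · rfl
  · ext v; simp only [id_eq, Pi.add_apply]; ring
  · simp; ring

lemma hasDerivAt_lin (c0 c1 u : ℝ) :
    HasDerivAt (fun u : ℝ => c1*u + c0) c1 u := by
  have h := ((hasDerivAt_id u).const_mul c1).add (hasDerivAt_const u c0)
  convert h using 1
  · rfl
  · rfl
  · ext v; simp
  · simp

lemma integral_cubic (a b c0 c1 c2 c3 : ℝ) :
    ∫ u in a..b, (c3*u^3 + c2*u^2 + c1*u + c0) =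
      (c3*b^4/4 + c2*b^3/3 + c1*b^2/2 + c0*b) - (c3*a^4/4 + c2*a^3/3 + c1*a^2/2 + c0*a) := by
  apply intervalIntegral.integral_eq_sub_of_hasDerivAt
  · exact fun u _ => hasDerivAt_quartic c0 c1 c2 c3 u
  · apply Continuous.intervalIntegrable
    continuity

section
variable (M : ℝ) (f f' f'' f''' : ℝ → ℝ)
  (hf : ∀ t ∈ Set.Icc (-1:ℝ) 1, HasDerivWithinAt f (f' t) (Set.Icc (-1) 1) t)
  (hf' : ∀ t ∈ Set.Icc (-1:ℝ) 1, HasDerivWithinAt f' (f'' t) (Set.Icc (-1) 1) t)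
  (hf'' : ∀ t ∈ Set.Icc (-1:ℝ) 1, HasDerivWithinAt f'' (f''' t) (Set.Icc (-1) 1) t)
  (hbound : ∀ t ∈ Set.Icc (-1:ℝ) 1, |f''' t| ≤ M)

include hf'' hbound in
lemma f3_integrableOn : IntegrableOn f''' (Set.Icc (-1:ℝ) 1) volume := by
  have hres : volume.restrict (Set.Icc (-1:ℝ) 1) = volume.restrict (Set.Ioo (-1:ℝ) 1) :=
    (Measure.restrict_congr_set Ioo_ae_eq_Icc).symm
  have hae : ∀ᵐ t ∂(volume.restrict (Set.Icc (-1:ℝ) 1)), t ∈ Set.Ioo (-1:ℝ) 1 := by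
    rw [hres]; exact ae_restrict_mem measurableSet_Ioo
  have heq : f''' =ᵐ[volume.restrict (Set.Icc (-1:ℝ) 1)] deriv f'' := by
    filter_upwards [hae] with t ht
    exact (((hf'' t (Ioo_subset_Icc_self ht)).hasDerivAt (Icc_mem_nhds ht.1 ht.2)).deriv).symm
  have hD : Integrable (deriv f'') (volume.restrict (Set.Icc (-1:ℝ) 1)) := by
    apply Integrable.mono' (integrable_const M)
      ((measurable_deriv f'').aestronglyMeasurable)
    filter_upwards [hae] with t ht
    have : deriv f'' t = f''' t :=
      ((hf'' t (Ioo_subset_Icc_self ht)).hasDerivAt (Icc_mem_nhds ht.1 ht.2)).deriv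
    rw [Real.norm_eq_abs, this]
    exact hbound t (Ioo_subset_Icc_self ht)
  exact hD.congr heq.symm

include hf'' hbound in
lemma f3_intInt {a b : ℝ} (ha : a ∈ Set.Icc (-1:ℝ) 1) (hb : b ∈ Set.Icc (-1:ℝ) 1) :
    IntervalIntegrable f''' volume a b := by
  apply IntegrableOn.intervalIntegrable
  exact (f3_integrableOn M f'' f''' hf'' hbound).mono_set
    (Set.uIcc_subset_Icc ha hb)

include hf in
lemma fc : ContinuousOn f (Set.Icc (-1:ℝ) 1) := fun t ht => (hf t ht).continuousWithinAt


include hf hf' hf'' hbound in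
lemma ibp (c0 c1 c2 c3 a b : ℝ) (ha : -1 ≤ a) (hab : a ≤ b) (hb : b ≤ 1) :
    ∫ u in a..b, (c3*u^3 + c2*u^2 + c1*u + c0) * f''' u =
      ((c3*b^3 + c2*b^2 + c1*b + c0) * f'' b - (3*c3*b^2 + 2*c2*b + c1) * f' b
        + (6*c3*b + 2*c2) * f b)
      - ((c3*a^3 + c2*a^2 + c1*a + c0) * f'' a - (3*c3*a^2 + 2*c2*a + c1) * f' a
        + (6*c3*a + 2*c2) * f a)
      - 6*c3 * ∫ u in a..b, f u := by
  have hsub : Set.Icc a b ⊆ Set.Icc (-1:ℝ) 1 := Set.Icc_subset_Icc ha hb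
  have hu : Set.uIcc a b ⊆ Set.Icc (-1:ℝ) 1 := by
    rw [Set.uIcc_of_le hab]; exact hsub
  have hfc : ContinuousOn f (Set.Icc a b) := (fc f f' hf).mono hsub
  have hfc' : ContinuousOn f' (Set.Icc a b) := (fc f' f'' hf').mono hsub
  have hfc'' : ContinuousOn f'' (Set.Icc a b) := (fc f'' f''' hf'').mono hsub
  have hint3 : IntervalIntegrable (fun u => (c3*u^3 + c2*u^2 + c1*u + c0) * f''' u)
      volume a b := by
    apply IntervalIntegrable.continuousOn_mul
    · exact f3_intInt M f'' f''' hf'' hbound ⟨ha, hab.trans hb⟩ ⟨ha.trans hab, hb⟩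
    · exact Continuous.continuousOn (by fun_prop)
  have hintf : IntervalIntegrable f volume a b :=
    (hfc.mono (by rw [Set.uIcc_of_le hab])).intervalIntegrable
  set g : ℝ → ℝ := fun u => (c3*u^3 + c2*u^2 + c1*u + c0) * f'' u
      - (3*c3*u^2 + 2*c2*u + c1) * f' u + (6*c3*u + 2*c2) * f u with hg
  have key : ∫ u in a..b, ((c3*u^3 + c2*u^2 + c1*u + c0) * f''' u + 6*c3 * f u)
      = g b - g a := by
    apply intervalIntegral.integral_eq_sub_of_hasDerivAt_of_le hab
    · apply ContinuousOn.add (ContinuousOn.sub ?_ ?_) ?_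
      · exact ContinuousOn.mul (Continuous.continuousOn (by fun_prop)) hfc''
      · exact ContinuousOn.mul (Continuous.continuousOn (by fun_prop)) hfc'
      · exact ContinuousOn.mul (Continuous.continuousOn (by fun_prop)) hfc
    · intro u hu
      have hu1 : u ∈ Set.Ioo (-1:ℝ) 1 := ⟨lt_of_le_of_lt ha hu.1, lt_of_lt_of_le hu.2 hb⟩
      have hmem : Set.Icc (-1:ℝ) 1 ∈ nhds u := Icc_mem_nhds hu1.1 hu1.2
      have hdf : HasDerivAt f (f' u) u := (hf u (Set.Ioo_subset_Icc_self hu1)).hasDerivAt hmem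
      have hdf' : HasDerivAt f' (f'' u) u := (hf' u (Set.Ioo_subset_Icc_self hu1)).hasDerivAt hmem
      have hdf'' : HasDerivAt f'' (f''' u) u :=
        (hf'' u (Set.Ioo_subset_Icc_self hu1)).hasDerivAt hmem
      have h := (((hasDerivAt_cubic c0 c1 c2 c3 u).mul hdf'').sub
        ((hasDerivAt_quad c1 (2*c2) (3*c3) u).mul hdf')).add
        ((hasDerivAt_lin (2*c2) (6*c3) u).mul hdf)
      convert h using 1
      · rfl
      · ring
    · apply IntervalIntegrable.add hint3
      exact hintf.const_mul (6*c3)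
  have hsplit : ∫ u in a..b, ((c3*u^3 + c2*u^2 + c1*u + c0) * f''' u + 6*c3 * f u)
      = (∫ u in a..b, (c3*u^3 + c2*u^2 + c1*u + c0) * f''' u)
        + 6*c3 * ∫ u in a..b, f u := by
    rw [intervalIntegral.integral_add hint3 (hintf.const_mul (6*c3)),
      intervalIntegral.integral_const_mul]
  rw [hsplit] at key
  simp only [hg] at key ⊢
  linarith

include hf'' hbound in
lemma piece (c0 c1 c2 c3 a b : ℝ) (ha : -1 ≤ a) (hab : a ≤ b) (hb : b ≤ 1)
    (hpos : ∀ u ∈ Set.Icc a b, 0 ≤ c3*u^3 + c2*u^2 + c1*u + c0) :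
    |∫ u in a..b, (c3*u^3 + c2*u^2 + c1*u + c0) * f''' u| ≤
      M * ((c3*b^4/4 + c2*b^3/3 + c1*b^2/2 + c0*b) - (c3*a^4/4 + c2*a^3/3 + c1*a^2/2 + c0*a)) := by
  have hint3 : IntervalIntegrable (fun u => (c3*u^3 + c2*u^2 + c1*u + c0) * f''' u)
      volume a b := by
    apply IntervalIntegrable.continuousOn_mul
    · exact f3_intInt M f'' f''' hf'' hbound ⟨ha, hab.trans hb⟩ ⟨ha.trans hab, hb⟩
    · exact Continuous.continuousOn (by fun_prop)
  have h1 : |∫ u in a..b, (c3*u^3 + c2*u^2 + c1*u + c0) * f''' u|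
      ≤ ∫ u in a..b, |(c3*u^3 + c2*u^2 + c1*u + c0) * f''' u| :=
    intervalIntegral.abs_integral_le_integral_abs hab
  have h2 : (∫ u in a..b, |(c3*u^3 + c2*u^2 + c1*u + c0) * f''' u|)
      ≤ ∫ u in a..b, M * (c3*u^3 + c2*u^2 + c1*u + c0) := by
    apply intervalIntegral.integral_mono_on hab hint3.abs
    · exact (Continuous.continuousOn (by fun_prop)).intervalIntegrable
    · intro u hu
      have hu1 : u ∈ Set.Icc (-1:ℝ) 1 := ⟨ha.trans hu.1, hu.2.trans hb⟩
      rw [abs_mul, abs_of_nonneg (hpos u hu)]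
      calc (c3*u^3 + c2*u^2 + c1*u + c0) * |f''' u|
          ≤ (c3*u^3 + c2*u^2 + c1*u + c0) * M := by
            exact mul_le_mul_of_nonneg_left (hbound u hu1) (hpos u hu)
        _ = M * (c3*u^3 + c2*u^2 + c1*u + c0) := by ring
  have h3 : (∫ u in a..b, M * (c3*u^3 + c2*u^2 + c1*u + c0))
      = M * ((c3*b^4/4 + c2*b^3/3 + c1*b^2/2 + c0*b)
        - (c3*a^4/4 + c2*a^3/3 + c1*a^2/2 + c0*a)) := by
    rw [intervalIntegral.integral_const_mul, integral_cubic]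
  linarith

end

set_option maxHeartbeats 1000000 in
lemma keyalg (x v1 v2 v3 w1 w2 w3 z1 z2 z3 J1 J2 q0 q1 q2 q3 r0 r1 r2 : ℝ)
    (h1 : 1-x ≠ 0) (h2 : 1+x ≠ 0)
    (e3 : q3 = -(1:ℝ)/6) (e2 : q2 = (3 - (1-3*x)/(1-x))/6)
    (e1 : q1 = (2*((1-3*x)/(1-x)) - 3)/6) (e0 : q0 = (1 - (1-3*x)/(1-x))/6)
    (d2 : r2 = (3 - (1-3*x)/(1-x))/6 - (4/(1-x^2))/6)
    (d1 : r1 = (2*((1-3*x)/(1-x)) - 3)/6 + (4/(1-x^2))*x/3)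
    (d0 : r0 = (1 - (1-3*x)/(1-x))/6 - (4/(1-x^2))*x^2/6) :
    (J1 + J2) - (1/3)*(((1+3*x)/(1+x))*v1 + (4/(1-x^2))*v2 + ((1-3*x)/(1-x))*v3)
    = (((q3*x^3 + r2*x^2 + r1*x + r0) * z2 - (3*q3*x^2 + 2*r2*x + r1) * w2
          + (6*q3*x + 2*r2) * v2)
        - ((q3*(-1)^3 + r2*(-1)^2 + r1*(-1) + r0) * z1 - (3*q3*(-1)^2 + 2*r2*(-1) + r1) * w1
          + (6*q3*(-1) + 2*r2) * v1)
        - 6*q3*J1)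
      + (((q3*1^3 + q2*1^2 + q1*1 + q0) * z3 - (3*q3*1^2 + 2*q2*1 + q1) * w3
          + (6*q3*1 + 2*q2) * v3)
        - ((q3*x^3 + q2*x^2 + q1*x + q0) * z2 - (3*q3*x^2 + 2*q2*x + q1) * w2
          + (6*q3*x + 2*q2) * v2)
        - 6*q3*J2) := by
  subst e3 e2 e1 e0 d2 d1 d0
  have h3 : 1 - x^2 ≠ 0 := by
    rw [show (1:ℝ)-x^2 = (1-x)*(1+x) from by ring]
    exact mul_ne_zero h1 h2
  field_simp
  ring

set_option maxHeartbeats 1000000 in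
lemma sumalg1 (x q0 q1 q2 q3 r0 r1 r2 : ℝ)
    (h1 : 1-x ≠ 0) (h2 : 1+x ≠ 0)
    (e3 : q3 = -(1:ℝ)/6) (e2 : q2 = (3 - (1-3*x)/(1-x))/6)
    (e1 : q1 = (2*((1-3*x)/(1-x)) - 3)/6) (e0 : q0 = (1 - (1-3*x)/(1-x))/6)
    (d2 : r2 = (3 - (1-3*x)/(1-x))/6 - (4/(1-x^2))/6)
    (d1 : r1 = (2*((1-3*x)/(1-x)) - 3)/6 + (4/(1-x^2))*x/3)
    (d0 : r0 = (1 - (1-3*x)/(1-x))/6 - (4/(1-x^2))*x^2/6) :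
    ((q3*x^4/4 + r2*x^3/3 + r1*x^2/2 + r0*x)
      - (q3*(-1)^4/4 + r2*(-1)^3/3 + r1*(-1)^2/2 + r0*(-1)))
    + ((q3*1^4/4 + q2*1^3/3 + q1*1^2/2 + q0*1)
      - (q3*x^4/4 + q2*x^3/3 + q1*x^2/2 + q0*x)) = 2*x/9 := by
  subst e3 e2 e1 e0 d2 d1 d0
  have h3 : 1 - x^2 ≠ 0 := by
    rw [show (1:ℝ)-x^2 = (1-x)*(1+x) from by ring]
    exact mul_ne_zero h1 h2
  field_simp
  ring

set_option maxHeartbeats 1000000 in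
lemma sumalg2 (x t q0 q1 q2 q3 r0 r1 r2 : ℝ)
    (h1 : 1-x ≠ 0) (h2 : 1+x ≠ 0) (ht : t = 2*x/(1-x))
    (e3 : q3 = -(1:ℝ)/6) (e2 : q2 = (3 - (1-3*x)/(1-x))/6)
    (e1 : q1 = (2*((1-3*x)/(1-x)) - 3)/6) (e0 : q0 = (1 - (1-3*x)/(1-x))/6)
    (d2 : r2 = (3 - (1-3*x)/(1-x))/6 - (4/(1-x^2))/6)
    (d1 : r1 = (2*((1-3*x)/(1-x)) - 3)/6 + (4/(1-x^2))*x/3)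
    (d0 : r0 = (1 - (1-3*x)/(1-x))/6 - (4/(1-x^2))*x^2/6) :
    ((q3*x^4/4 + r2*x^3/3 + r1*x^2/2 + r0*x)
      - (q3*(-1)^4/4 + r2*(-1)^3/3 + r1*(-1)^2/2 + r0*(-1)))
    + ((q3*t^4/4 + q2*t^3/3 + q1*t^2/2 + q0*t)
      - (q3*x^4/4 + q2*x^3/3 + q1*x^2/2 + q0*x))
    + ((-q3*1^4/4 + -q2*1^3/3 + -q1*1^2/2 + -q0*1)
      - (-q3*t^4/4 + -q2*t^3/3 + -q1*t^2/2 + -q0*t))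
    = (8*x^5 + 49*x^4 - 60*x^3 + 22*x^2 - 4*x + 1) / (36*(1-x)^4) := by
  subst e3 e2 e1 e0 d2 d1 d0 ht
  have h3 : 1 - x^2 ≠ 0 := by
    rw [show (1:ℝ)-x^2 = (1-x)*(1+x) from by ring]
    exact mul_ne_zero h1 h2
  field_simp
  ring


set_option maxHeartbeats 1000000 in
theorem modified_three_point_third_derivative_estimate (M : ℝ) (f f' f'' f''' : ℝ → ℝ)
    (hf : ∀ t ∈ Set.Icc (-1:ℝ) 1, HasDerivWithinAt f (f' t) (Set.Icc (-1) 1) t)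
    (hf' : ∀ t ∈ Set.Icc (-1:ℝ) 1, HasDerivWithinAt f' (f'' t) (Set.Icc (-1) 1) t)
    (hf'' : ∀ t ∈ Set.Icc (-1:ℝ) 1, HasDerivWithinAt f'' (f''' t) (Set.Icc (-1) 1) t)
    (hbound : ∀ t ∈ Set.Icc (-1:ℝ) 1, |f''' t| ≤ M)
    (x : ℝ) (hx : x ∈ Set.Ico (0:ℝ) 1) :
    |(∫ t in (-1:ℝ)..1, f t) - (1 / 3) * (((1 + 3 * x) / (1 + x)) * f (-1) +
        (4 / (1 - x ^ 2)) * f x + ((1 - 3 * x) / (1 - x)) * f 1)| ≤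
      (if x < 1 / 3 then
          (8 * x ^ 5 + 49 * x ^ 4 - 60 * x ^ 3 + 22 * x ^ 2 - 4 * x + 1) / (36 * (1 - x) ^ 4)
        else 2 * x / 9) * M := by
  obtain ⟨hx0, hx1⟩ := hx
  have h1x : (0:ℝ) < 1 - x := by linarith
  have h1x' : (0:ℝ) < 1 + x := by linarith
  have hne1 : (1:ℝ) - x ≠ 0 := ne_of_gt h1x
  have hne2 : (1:ℝ) + x ≠ 0 := ne_of_gt h1x'
  have hM : 0 ≤ M := le_trans (abs_nonneg _) (hbound 0 ⟨by norm_num, by norm_num⟩)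
  have hne3 : (1:ℝ) - x^2 ≠ 0 := by
    rw [show (1:ℝ)-x^2 = (1-x)*(1+x) from by ring]
    exact mul_ne_zero hne1 hne2
  obtain ⟨q3, hq3⟩ : ∃ q3 : ℝ, q3 = -(1:ℝ)/6 := ⟨_, rfl⟩
  obtain ⟨q2, hq2⟩ : ∃ q2 : ℝ, q2 = (3 - (1-3*x)/(1-x))/6 := ⟨_, rfl⟩
  obtain ⟨q1, hq1⟩ : ∃ q1 : ℝ, q1 = (2*((1-3*x)/(1-x)) - 3)/6 := ⟨_, rfl⟩
  obtain ⟨q0, hq0⟩ : ∃ q0 : ℝ, q0 = (1 - (1-3*x)/(1-x))/6 := ⟨_, rfl⟩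
  obtain ⟨r2, hr2⟩ : ∃ r2 : ℝ, r2 = (3 - (1-3*x)/(1-x))/6 - (4/(1-x^2))/6 := ⟨_, rfl⟩
  obtain ⟨r1, hr1⟩ : ∃ r1 : ℝ, r1 = (2*((1-3*x)/(1-x)) - 3)/6 + (4/(1-x^2))*x/3 := ⟨_, rfl⟩
  obtain ⟨r0, hr0⟩ : ∃ r0 : ℝ, r0 = (1 - (1-3*x)/(1-x))/6 - (4/(1-x^2))*x^2/6 := ⟨_, rfl⟩
  have hnx : (-1:ℝ) ≤ x := by linarith
  have hx1' : x ≤ 1 := hx1.le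
  have hI1 := ibp M f f' f'' f''' hf hf' hf'' hbound r0 r1 r2 q3 (-1) x le_rfl hnx hx1'
  have hI2 := ibp M f f' f'' f''' hf hf' hf'' hbound q0 q1 q2 q3 x 1 hnx hx1' le_rfl
  have hfcont := fc f f' hf
  have hadj : (∫ u in (-1:ℝ)..x, f u) + ∫ u in x..1, f u = ∫ u in (-1:ℝ)..1, f u := by
    apply intervalIntegral.integral_add_adjacent_intervals
    · exact (hfcont.mono (Set.uIcc_subset_Icc ⟨le_rfl, by norm_num⟩
        ⟨hnx, hx1'⟩)).intervalIntegrable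
    · exact (hfcont.mono (Set.uIcc_subset_Icc ⟨hnx, hx1'⟩
        ⟨by norm_num, le_rfl⟩)).intervalIntegrable
  have key : (∫ t in (-1:ℝ)..1, f t) - (1 / 3) * (((1 + 3 * x) / (1 + x)) * f (-1) +
        (4 / (1 - x ^ 2)) * f x + ((1 - 3 * x) / (1 - x)) * f 1)
      = (∫ u in (-1:ℝ)..x, (q3*u^3 + r2*u^2 + r1*u + r0) * f''' u)
        + ∫ u in x..1, (q3*u^3 + q2*u^2 + q1*u + q0) * f''' u := by
    rw [hI1, hI2, ← hadj]
    exact keyalg x (f (-1)) (f x) (f 1) (f' (-1)) (f' x) (f' 1) (f'' (-1)) (f'' x) (f'' 1)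
      (∫ u in (-1:ℝ)..x, f u) (∫ u in x..1, f u) q0 q1 q2 q3 r0 r1 r2
      hne1 hne2 hq3 hq2 hq1 hq0 hr2 hr1 hr0
  rw [key]
  -- positivity of the first kernel piece
  have hpos1 : ∀ u ∈ Set.Icc (-1:ℝ) x, 0 ≤ q3*u^3 + r2*u^2 + r1*u + r0 := by
    intro u hu
    have hid : q3*u^3 + r2*u^2 + r1*u + r0
        = (u+1)^2*(2*x-(1+x)*u)/(6*(1+x)) := by
      rw [hq3, hr2, hr1, hr0]; field_simp; ring
    have h2xu : 0 ≤ 2*x-(1+x)*u := by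
      nlinarith [mul_nonneg hx0 h1x.le, mul_le_mul_of_nonneg_left hu.2 h1x'.le]
    rw [hid]
    exact div_nonneg (mul_nonneg (sq_nonneg _) h2xu) (by linarith)
  have hb1 := piece M f'' f''' hf'' hbound r0 r1 r2 q3 (-1) x le_rfl hnx hx1' hpos1
  have hid2 : ∀ u : ℝ, q3*u^3 + q2*u^2 + q1*u + q0
      = (1-u)^2*(2*x-(1-x)*u)/(6*(1-x)) := by
    intro u; rw [hq3, hq2, hq1, hq0]; field_simp; ring
  have hid2n : ∀ u : ℝ, (-q3)*u^3 + (-q2)*u^2 + (-q1)*u + (-q0)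
      = (1-u)^2*((1-x)*u-2*x)/(6*(1-x)) := by
    intro u; rw [hq3, hq2, hq1, hq0]; field_simp; ring
  rcases lt_or_ge x (1/3) with h13 | h13
  · -- case x < 1/3
    rw [if_pos h13]
    obtain ⟨t, htt⟩ : ∃ t : ℝ, t = 2*x/(1-x) := ⟨_, rfl⟩
    have hlt : (1-x)*t = 2*x := by rw [htt]; field_simp
    have htx : x ≤ t := by
      rw [htt, le_div_iff₀ h1x]; nlinarith
    have ht1 : t ≤ 1 := by
      rw [htt, div_le_one h1x]; linarith
    have hnt : (-1:ℝ) ≤ t := by linarith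
    have hii : ∀ a b : ℝ, -1 ≤ a → a ≤ 1 → -1 ≤ b → b ≤ 1 →
        IntervalIntegrable (fun u => (q3*u^3 + q2*u^2 + q1*u + q0) * f''' u) volume a b := by
      intro a b ha ha' hb hb'
      exact IntervalIntegrable.continuousOn_mul
        (f3_intInt M f'' f''' hf'' hbound ⟨ha, ha'⟩ ⟨hb, hb'⟩)
        (Continuous.continuousOn (by fun_prop))
    have hsplit2 : (∫ u in x..1, (q3*u^3 + q2*u^2 + q1*u + q0) * f''' u)
        = (∫ u in x..t, (q3*u^3 + q2*u^2 + q1*u + q0) * f''' u)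
          + ∫ u in t..1, (q3*u^3 + q2*u^2 + q1*u + q0) * f''' u :=
      (intervalIntegral.integral_add_adjacent_intervals
        (hii x t hnx hx1' hnt ht1) (hii t 1 hnt ht1 (by norm_num) le_rfl)).symm
    rw [hsplit2]
    have hpos2a : ∀ u ∈ Set.Icc x t, 0 ≤ q3*u^3 + q2*u^2 + q1*u + q0 := by
      intro u hu
      have h2 : 0 ≤ 2*x-(1-x)*u := by
        linarith [hlt, mul_le_mul_of_nonneg_left hu.2 h1x.le]
      rw [hid2 u]
      exact div_nonneg (mul_nonneg (sq_nonneg _) h2) (by linarith)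
    have hpos2b : ∀ u ∈ Set.Icc t 1, 0 ≤ (-q3)*u^3 + (-q2)*u^2 + (-q1)*u + (-q0) := by
      intro u hu
      have h2 : 0 ≤ (1-x)*u - 2*x := by
        linarith [hlt, mul_le_mul_of_nonneg_left hu.1 h1x.le]
      rw [hid2n u]
      exact div_nonneg (mul_nonneg (sq_nonneg _) h2) (by linarith)
    have hb2a := piece M f'' f''' hf'' hbound q0 q1 q2 q3 x t hnx htx ht1 hpos2a
    have hb2b' := piece M f'' f''' hf'' hbound (-q0) (-q1) (-q2) (-q3) t 1
      hnt ht1 le_rfl hpos2b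
    have hneg : (∫ u in t..1, ((-q3)*u^3 + (-q2)*u^2 + (-q1)*u + (-q0)) * f''' u)
        = -∫ u in t..1, (q3*u^3 + q2*u^2 + q1*u + q0) * f''' u := by
      rw [← intervalIntegral.integral_neg]
      exact intervalIntegral.integral_congr (fun u _ => by ring)
    rw [hneg, abs_neg] at hb2b'
    have hsum2 := sumalg2 x t q0 q1 q2 q3 r0 r1 r2 hne1 hne2 htt hq3 hq2 hq1 hq0 hr2 hr1 hr0
    refine ((abs_add_le _ _).trans (add_le_add hb1 ((abs_add_le _ _).trans
      (add_le_add hb2a hb2b')))).trans (le_of_eq ?_)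
    linear_combination M * hsum2
  · -- case x ≥ 1/3
    rw [if_neg (not_lt.mpr h13)]
    have hpos2 : ∀ u ∈ Set.Icc x 1, 0 ≤ q3*u^3 + q2*u^2 + q1*u + q0 := by
      intro u hu
      have h2 : 0 ≤ 2*x-(1-x)*u := by
        nlinarith [mul_le_mul_of_nonneg_left hu.2 h1x.le]
      rw [hid2 u]
      exact div_nonneg (mul_nonneg (sq_nonneg _) h2) (by linarith)
    have hb2 := piece M f'' f''' hf'' hbound q0 q1 q2 q3 x 1 hnx hx1' le_rfl hpos2
    have hsum1 := sumalg1 x q0 q1 q2 q3 r0 r1 r2 hne1 hne2 hq3 hq2 hq1 hq0 hr2 hr1 hr0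
    refine ((abs_add_le _ _).trans (add_le_add hb1 hb2)).trans (le_of_eq ?_)
    linear_combination M * hsum1
end

section
/- (Inequality of Dragomir, Cerone and Roumeliotis) Let λ ∈ [0,1], let x satisfy -1 + 3λ/2 ≤ x ≤ 1 - 3λ/2, and let f : [-1,1] → ℝ be differentiable with |f'(t)| ≤ M for all t ∈ (-1,1). Then |∫_{-1}^1 f(t) dt - λ[f(-1) + f(1)] - 2(1-λ) f(x)| ≤ [λ² + (1-λ)² + x²] M. -/
open MeasureTheory intervalIntegral Set

lemma dcr_abs_integral (a b c : ℝ) (hac : a ≤ c) (hcb : c ≤ b) :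
    (∫ t in a..b, |t - c|) = ((c - a) ^ 2 + (b - c) ^ 2) / 2 := by
  have hab : a ≤ b := hac.trans hcb
  have hi1 : IntervalIntegrable (fun t => |t - c|) volume a c :=
    ((continuous_id.sub continuous_const).abs).intervalIntegrable _ _
  have hi2 : IntervalIntegrable (fun t => |t - c|) volume c b :=
    ((continuous_id.sub continuous_const).abs).intervalIntegrable _ _
  rw [← intervalIntegral.integral_add_adjacent_intervals hi1 hi2]
  have e1 : (∫ t in a..c, |t - c|) = ∫ t in a..c, (c - t) := by
    apply intervalIntegral.integral_congr
    intro t ht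
    rw [uIcc_of_le hac] at ht
    show |t - c| = c - t
    rw [abs_of_nonpos (by linarith [ht.2])]
    ring
  have e2 : (∫ t in c..b, |t - c|) = ∫ t in c..b, (t - c) := by
    apply intervalIntegral.integral_congr
    intro t ht
    rw [uIcc_of_le hcb] at ht
    show |t - c| = t - c
    rw [abs_of_nonneg (by linarith [ht.1])]
  rw [e1, e2]
  rw [intervalIntegral.integral_sub intervalIntegrable_const intervalIntegrable_id,
    intervalIntegral.integral_sub intervalIntegrable_id intervalIntegrable_const]
  simp [integral_id]
  ring

lemma dcr_piece (M : ℝ) (f f' : ℝ → ℝ)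
    (hf : ∀ t ∈ Set.Icc (-1:ℝ) 1, HasDerivWithinAt f (f' t) (Set.Icc (-1) 1) t)
    (hbound : ∀ t ∈ Set.Ioo (-1:ℝ) 1, |f' t| ≤ M)
    (a b c : ℝ) (ha : -1 ≤ a) (hb : b ≤ 1) (hac : a ≤ c) (hcb : c ≤ b) :
    |(∫ t in a..b, f t) - ((b - c) * f b - (a - c) * f a)| ≤
      M * (((c - a) ^ 2 + (b - c) ^ 2) / 2) := by
  have hab : a ≤ b := hac.trans hcb
  have hM : 0 ≤ M := le_trans (abs_nonneg _) (hbound 0 (by norm_num))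
  have hcont : ContinuousOn f (Set.Icc (-1:ℝ) 1) := fun t ht => (hf t ht).continuousWithinAt
  have hsubIcc : Set.Icc a b ⊆ Set.Icc (-1:ℝ) 1 := Set.Icc_subset_Icc ha hb
  have hderivAt : ∀ t ∈ Set.Ioo (-1:ℝ) 1, HasDerivAt f (f' t) t := fun t ht =>
    (hf t (Set.Ioo_subset_Icc_self ht)).hasDerivAt (Icc_mem_nhds ht.1 ht.2)
  -- a.e. membership in Ioo (-1) 1 on restriction to Ioc a b
  have hne1 : ∀ᵐ t : ℝ, t ≠ 1 := by
    refine ae_iff.2 ?_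
    simp [Real.volume_singleton]
  have haemem : ∀ᵐ t ∂(volume.restrict (Set.Ioc a b)), t ∈ Set.Ioo (-1:ℝ) 1 := by
    rw [ae_restrict_iff' measurableSet_Ioc]
    filter_upwards [hne1] with t ht htab
    exact ⟨lt_of_le_of_lt ha htab.1, lt_of_le_of_ne (htab.2.trans hb) ht⟩
  -- integrability of f' on Ioc a b
  have hasm : AEStronglyMeasurable f' (volume.restrict (Set.Ioc a b)) := by
    refine (measurable_deriv f).aestronglyMeasurable.congr ?_
    filter_upwards [haemem] with t ht
    exact (hderivAt t ht).deriv
  have hintf' : IntegrableOn f' (Set.Ioc a b) volume := by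
    refine Integrable.mono' (g := fun _ => M) ?_ hasm ?_
    · exact integrableOn_const measure_Ioc_lt_top.ne
    · filter_upwards [haemem] with t ht
      simpa using hbound t ht
  have hii_f' : IntervalIntegrable f' volume a b := by
    rw [intervalIntegrable_iff, uIoc_of_le hab]; exact hintf'
  -- integrability of the product
  have hprod : IntervalIntegrable (fun t => (t - c) * f' t) volume a b := by
    rw [intervalIntegrable_iff, uIoc_of_le hab]
    refine Integrable.mono' (g := fun _ => 2 * M) ?_ ?_ ?_
    · exact integrableOn_const measure_Ioc_lt_top.ne
    · exact ((continuous_id.sub continuous_const).aestronglyMeasurable).mul hasm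
    · rw [ae_restrict_iff' measurableSet_Ioc] at haemem ⊢
      filter_upwards [haemem] with t ht htab
      have h1 := hbound t (ht htab)
      have h2 : |t - c| ≤ 2 := by
        have := (ht htab).1; have := (ht htab).2
        rw [abs_le]; constructor <;> nlinarith [hac.trans hcb, ha.trans hac, hcb.trans hb]
      rw [Real.norm_eq_abs, abs_mul]
      exact mul_le_mul h2 h1 (abs_nonneg _) (by norm_num)
  have hii_f : IntervalIntegrable f volume a b :=
    (hcont.mono hsubIcc).intervalIntegrable_of_Icc hab
  -- FTC for g t = (t - c) * f t
  have hftc : (∫ t in a..b, (f t + (t - c) * f' t)) = (b - c) * f b - (a - c) * f a := by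
    have h := integral_eq_sub_of_hasDeriv_right_of_le (a := a) (b := b)
      (f := fun t => (t - c) * f t) (f' := fun t => f t + (t - c) * f' t) hab
      (((continuous_id.sub continuous_const).continuousOn).mul (hcont.mono hsubIcc))
      (fun t ht => by
        have ht' : t ∈ Set.Ioo (-1:ℝ) 1 := ⟨lt_of_le_of_lt ha ht.1, lt_of_lt_of_le ht.2 hb⟩
        have h2 := (((hasDerivAt_id t).sub_const c).mul (hderivAt t ht')).hasDerivWithinAt
          (s := Set.Ioi t)
        exact h2.congr_deriv (by simp))
      (hii_f.add hprod)
    simpa using h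
  have hsplit : (∫ t in a..b, f t) - ((b - c) * f b - (a - c) * f a)
      = -(∫ t in a..b, (t - c) * f' t) := by
    rw [← hftc, intervalIntegral.integral_add hii_f hprod]
    ring
  rw [hsplit, abs_neg]
  have hbnd : |∫ t in a..b, (t - c) * f' t| ≤ abs (∫ t in a..b, M * |t - c|) := by
    refine intervalIntegral.norm_integral_le_abs_of_norm_le
      (f := fun t => (t - c) * f' t) (g := fun t => M * |t - c|) (μ := volume) ?_
      (intervalIntegrable_const.mul_continuousOn
        (((continuous_id.sub continuous_const).abs).continuousOn))
    rw [uIoc_of_le hab]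
    filter_upwards [haemem] with t ht
    rw [Real.norm_eq_abs, abs_mul, mul_comm]
    exact mul_le_mul_of_nonneg_right (hbound t ht) (abs_nonneg _)
  refine hbnd.trans ?_
  rw [intervalIntegral.integral_const_mul, dcr_abs_integral a b c hac hcb,
    abs_of_nonneg (by positivity)]

theorem dragomir_cerone_roumeliotis (M lam x : ℝ)
    (hlam : lam ∈ Set.Icc (0:ℝ) 1)
    (hx : -1 + 3 * lam / 2 ≤ x ∧ x ≤ 1 - 3 * lam / 2)
    (f f' : ℝ → ℝ)
    (hf : ∀ t ∈ Set.Icc (-1:ℝ) 1, HasDerivWithinAt f (f' t) (Set.Icc (-1) 1) t)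
    (hbound : ∀ t ∈ Set.Ioo (-1:ℝ) 1, |f' t| ≤ M) :
    |(∫ t in (-1:ℝ)..1, f t) - lam * (f (-1) + f 1) - 2 * (1 - lam) * f x| ≤
      (lam ^ 2 + (1 - lam) ^ 2 + x ^ 2) * M := by
  obtain ⟨hl0, hl1⟩ := hlam
  obtain ⟨hx1, hx2⟩ := hx
  have hxa : (-1:ℝ) ≤ x := by linarith
  have hxb : x ≤ 1 := by linarith
  have hcont : ContinuousOn f (Set.Icc (-1:ℝ) 1) := fun t ht => (hf t ht).continuousWithinAt
  have hii1 : IntervalIntegrable f volume (-1) x :=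
    (hcont.mono (Set.Icc_subset_Icc le_rfl hxb)).intervalIntegrable_of_Icc hxa
  have hii2 : IntervalIntegrable f volume x 1 :=
    (hcont.mono (Set.Icc_subset_Icc hxa le_rfl)).intervalIntegrable_of_Icc hxb
  have hsplit : (∫ t in (-1:ℝ)..1, f t) = (∫ t in (-1:ℝ)..x, f t) + ∫ t in x..1, f t :=
    (intervalIntegral.integral_add_adjacent_intervals hii1 hii2).symm
  have h1 := dcr_piece M f f' hf hbound (-1) x (lam - 1) le_rfl hxb
    (by linarith) (by linarith)
  have h2 := dcr_piece M f f' hf hbound x 1 (1 - lam) hxa le_rfl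
    (by linarith) (by linarith)
  have key : |(∫ t in (-1:ℝ)..1, f t) - lam * (f (-1) + f 1) - 2 * (1 - lam) * f x|
      ≤ |(∫ t in (-1:ℝ)..x, f t) - ((x - (lam - 1)) * f x - (-1 - (lam - 1)) * f (-1))|
        + |(∫ t in x..1, f t) - ((1 - (1 - lam)) * f 1 - (x - (1 - lam)) * f x)| := by
    rw [hsplit]
    have : (∫ t in (-1:ℝ)..x, f t) + (∫ t in x..1, f t) - lam * (f (-1) + f 1)
        - 2 * (1 - lam) * f x
        = ((∫ t in (-1:ℝ)..x, f t) - ((x - (lam - 1)) * f x - (-1 - (lam - 1)) * f (-1)))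
          + ((∫ t in x..1, f t) - ((1 - (1 - lam)) * f 1 - (x - (1 - lam)) * f x)) := by
      ring
    rw [this]
    exact abs_add_le _ _
  refine key.trans ?_
  refine le_trans (add_le_add h1 h2) ?_
  have : M * (((lam - 1 - -1) ^ 2 + (x - (lam - 1)) ^ 2) / 2)
      + M * (((1 - lam - x) ^ 2 + (1 - (1 - lam)) ^ 2) / 2)
      = (lam ^ 2 + (1 - lam) ^ 2 + x ^ 2) * M := by ring
  linarith [this.le, this.ge]
end

section
/- (Symmetric two-point inequality of Guessab and Schmeisser, first-derivative bound) Let 0 ≤ x ≤ 1 and let f : [-1,1] → ℝ be differentiable with |f'(t)| ≤ M for all t ∈ [-1,1]. Then |∫_{-1}^1 f(t) dt - [f(-x) + f(x)]| ≤ (1 - 2x + 2x²) M. -/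
open MeasureTheory intervalIntegral Set

lemma abs_int_aux (c d a : ℝ) (h1 : c ≤ a) (h2 : a ≤ d) :
    ∫ t in c..d, |t - a| = ((a - c) ^ 2 + (d - a) ^ 2) / 2 := by
  have hcont : Continuous fun t : ℝ => |t - a| := by continuity
  rw [← intervalIntegral.integral_add_adjacent_intervals
      (hcont.intervalIntegrable c a) (hcont.intervalIntegrable a d)]
  have e1 : ∫ t in c..a, |t - a| = ∫ t in c..a, (a - t) := by
    apply intervalIntegral.integral_congr
    intro t ht
    rw [uIcc_of_le h1] at ht
    show |t - a| = a - t
    rw [abs_of_nonpos (by linarith [ht.2])]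
    ring
  have e2 : ∫ t in a..d, |t - a| = ∫ t in a..d, (t - a) := by
    apply intervalIntegral.integral_congr
    intro t ht
    rw [uIcc_of_le h2] at ht
    show |t - a| = t - a
    rw [abs_of_nonneg (by linarith [ht.1])]
  rw [e1, e2,
    intervalIntegral.integral_sub intervalIntegrable_const intervalIntegrable_id,
    intervalIntegral.integral_sub intervalIntegrable_id intervalIntegrable_const]
  simp [integral_id, mul_comm]
  ring

theorem guessab_schmeisser_first_derivative (M x : ℝ) (hx : x ∈ Set.Icc (0:ℝ) 1)
    (f f' : ℝ → ℝ)
    (hf : ∀ t ∈ Set.Icc (-1:ℝ) 1, HasDerivWithinAt f (f' t) (Set.Icc (-1) 1) t)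
    (hbound : ∀ t ∈ Set.Icc (-1:ℝ) 1, |f' t| ≤ M) :
    |(∫ t in (-1:ℝ)..1, f t) - (f (-x) + f x)| ≤ (1 - 2 * x + 2 * x ^ 2) * M := by
  obtain ⟨hx0, hx1⟩ := hx
  have hM : 0 ≤ M := le_trans (abs_nonneg _) (hbound 0 (by constructor <;> norm_num))
  have hc : ContinuousOn f (Icc (-1) 1) := fun t ht => (hf t ht).continuousWithinAt
  have key : ∀ a ∈ Icc (-1:ℝ) 1, ∀ t ∈ Icc (-1:ℝ) 1, |f t - f a| ≤ M * |t - a| := by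
    intro a ha t ht
    have := (convex_Icc (-1:ℝ) 1).norm_image_sub_le_of_norm_hasDerivWithin_le hf
      (fun y hy => by rw [Real.norm_eq_abs]; exact hbound y hy) ha ht
    simpa [Real.norm_eq_abs] using this
  have hmx : (-x) ∈ Icc (-1:ℝ) 1 := ⟨by linarith, by linarith⟩
  have hpx : x ∈ Icc (-1:ℝ) 1 := ⟨by linarith, by linarith⟩
  have hsub1 : Icc (-1:ℝ) 0 ⊆ Icc (-1:ℝ) 1 := Icc_subset_Icc le_rfl (by norm_num)
  have hsub2 : Icc (0:ℝ) 1 ⊆ Icc (-1:ℝ) 1 := Icc_subset_Icc (by norm_num) le_rfl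
  have hInt1 : IntervalIntegrable f volume (-1) 0 := by
    apply ContinuousOn.intervalIntegrable
    rw [uIcc_of_le (by norm_num : (-1:ℝ) ≤ 0)]
    exact hc.mono hsub1
  have hInt2 : IntervalIntegrable f volume 0 1 := by
    apply ContinuousOn.intervalIntegrable
    rw [uIcc_of_le (by norm_num : (0:ℝ) ≤ 1)]
    exact hc.mono hsub2
  -- bound for the left half
  have bnd : ∀ (c d a : ℝ), c ≤ d → Icc c d ⊆ Icc (-1:ℝ) 1 → a ∈ Icc (-1:ℝ) 1 →
      IntervalIntegrable f volume c d →
      |(∫ t in c..d, f t) - (d - c) * f a| ≤ M * ∫ t in c..d, |t - a| := by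
    intro c d a hcd hsub ha hint
    have e : (∫ t in c..d, f t) - (d - c) * f a = ∫ t in c..d, (f t - f a) := by
      rw [intervalIntegral.integral_sub hint intervalIntegrable_const,
        intervalIntegral.integral_const, smul_eq_mul]
    rw [e, ← intervalIntegral.integral_const_mul]
    have hcontg : Continuous fun t : ℝ => M * |t - a| :=
      continuous_const.mul ((continuous_id.sub continuous_const).abs)
    calc |∫ t in c..d, (f t - f a)| ≤ ∫ t in c..d, |f t - f a| :=
          intervalIntegral.abs_integral_le_integral_abs hcd
      _ ≤ ∫ t in c..d, M * |t - a| := by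
          apply intervalIntegral.integral_mono_on hcd
          · apply ContinuousOn.intervalIntegrable
            rw [uIcc_of_le hcd]
            exact (hc.mono hsub).sub continuousOn_const |>.abs
          · exact hcontg.intervalIntegrable c d
          · intro t ht
            exact key a ha t (hsub ht)
  have b1 := bnd (-1) 0 (-x) (by norm_num) hsub1 hmx hInt1
  have b2 := bnd 0 1 x (by norm_num) hsub2 hpx hInt2
  rw [abs_int_aux (-1) 0 (-x) (by linarith) (by linarith)] at b1
  rw [abs_int_aux 0 1 x (by linarith) (by linarith)] at b2
  have hsplit : (∫ t in (-1:ℝ)..1, f t) =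
      (∫ t in (-1:ℝ)..0, f t) + ∫ t in (0:ℝ)..1, f t :=
    (intervalIntegral.integral_add_adjacent_intervals hInt1 hInt2).symm
  have tri : |(∫ t in (-1:ℝ)..1, f t) - (f (-x) + f x)| ≤
      |(∫ t in (-1:ℝ)..0, f t) - (0 - (-1)) * f (-x)| +
      |(∫ t in (0:ℝ)..1, f t) - (1 - 0) * f x| := by
    rw [hsplit]
    have : (∫ t in (-1:ℝ)..0, f t) + (∫ t in (0:ℝ)..1, f t) - (f (-x) + f x) =
        ((∫ t in (-1:ℝ)..0, f t) - (0 - (-1)) * f (-x)) +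
        ((∫ t in (0:ℝ)..1, f t) - (1 - 0) * f x) := by ring
    rw [this]
    exact abs_add_le _ _
  calc |(∫ t in (-1:ℝ)..1, f t) - (f (-x) + f x)| ≤ _ + _ := tri
    _ ≤ M * (((-x) - (-1)) ^ 2 + (0 - (-x)) ^ 2) / 2 + M * ((x - 0) ^ 2 + (1 - x) ^ 2) / 2 := by
        linarith
    _ = (1 - 2 * x + 2 * x ^ 2) * M := by ring
end

section
/- (Symmetric two-point inequality of Guessab and Schmeisser, second-derivative bound) Let 0 ≤ x ≤ 1 and let f : [-1,1] → ℝ be twice differentiable with |f''(t)| ≤ M for all t ∈ [-1,1]. Then |∫_{-1}^1 f(t) dt - [f(-x) + f(x)]| ≤ M₁(x) M, where M₁(x) = 1/3 - x² for 0 ≤ x ≤ 1/2, and M₁(x) = (1/3)[4(2x-1)^{3/2} + 1 - 3x²] for 1/2 < x ≤ 1. -/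
open MeasureTheory intervalIntegral Set

lemma integral_quadratic (p q r a b : ℝ) :
    ∫ t in a..b, (p * t ^ 2 + q * t + r) =
      (p * b ^ 3 / 3 + q * b ^ 2 / 2 + r * b) - (p * a ^ 3 / 3 + q * a ^ 2 / 2 + r * a) := by
  have h : ∀ t : ℝ, HasDerivAt (fun t : ℝ => p * t ^ 3 / 3 + q * t ^ 2 / 2 + r * t)
      (p * t ^ 2 + q * t + r) t := by
    intro t
    have h1 := (((hasDerivAt_pow 3 t).const_mul p).div_const 3).add
      (((hasDerivAt_pow 2 t).const_mul q).div_const 2)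
    have h2 := h1.add ((hasDerivAt_id t).const_mul r)
    convert h2 using 1 <;> try rfl
    simp; ring
  exact integral_eq_sub_of_hasDerivAt (fun t _ => h t)
    ((by continuity : Continuous fun t : ℝ => p * t ^ 2 + q * t + r).intervalIntegrable a b)

lemma gs_integrable (f' f'' : ℝ → ℝ) (M : ℝ)
    (hf' : ∀ t ∈ Icc (-1:ℝ) 1, HasDerivWithinAt f' (f'' t) (Icc (-1) 1) t)
    (hbound : ∀ t ∈ Icc (-1:ℝ) 1, |f'' t| ≤ M)
    (w : ℝ → ℝ) (hw : Continuous w) (hwb : ∀ t ∈ Icc (-1:ℝ) 1, |w t| ≤ 2)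
    (a b : ℝ) (ha : -1 ≤ a) (hb : b ≤ 1) (hab : a ≤ b) :
    IntervalIntegrable (fun t => w t * f'' t) volume a b := by
  have key : ∀ t ∈ Ioo (-1:ℝ) 1, deriv f' t = f'' t := fun t ht =>
    ((hf' t (Ioo_subset_Icc_self ht)).hasDerivAt (Icc_mem_nhds ht.1 ht.2)).deriv
  rw [intervalIntegrable_iff_integrableOn_Ioc_of_le hab]
  have hne : ∀ᵐ t ∂(volume : Measure ℝ), t ≠ (1:ℝ) := by
    rw [ae_iff]
    simpa using measure_singleton (1 : ℝ)
  have hmem : ∀ᵐ t ∂(volume.restrict (Ioc a b)), t ∈ Ioc a b := ae_restrict_mem measurableSet_Ioc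
  have hIoo : ∀ᵐ t ∂(volume.restrict (Ioc a b)), t ∈ Ioo (-1:ℝ) 1 := by
    filter_upwards [hmem, ae_restrict_of_ae hne] with t ht hne1
    exact ⟨lt_of_le_of_lt ha ht.1, lt_of_le_of_ne (ht.2.trans hb) hne1⟩
  have hg : IntegrableOn (fun t => w t * deriv f' t) (Ioc a b) volume := by
    apply Measure.integrableOn_of_bounded (M := 2 * M) (by simp)
    · exact (hw.measurable.mul (measurable_deriv f')).aestronglyMeasurable
    · filter_upwards [hIoo] with t ht
      rw [Real.norm_eq_abs, abs_mul, key t ht]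
      exact mul_le_mul (hwb t (Ioo_subset_Icc_self ht)) (hbound t (Ioo_subset_Icc_self ht))
        (abs_nonneg _) (by norm_num)
  apply hg.congr_fun_ae
  filter_upwards [hIoo] with t ht
  rw [key t ht]

lemma gs_parts (f f' f'' : ℝ → ℝ)
    (hf : ∀ t ∈ Icc (-1:ℝ) 1, HasDerivWithinAt f (f' t) (Icc (-1) 1) t)
    (hf' : ∀ t ∈ Icc (-1:ℝ) 1, HasDerivWithinAt f' (f'' t) (Icc (-1) 1) t)
    (w w' : ℝ → ℝ) (hw : ∀ t, HasDerivAt w (w' t) t) (hw' : ∀ t, HasDerivAt w' 1 t)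
    (a b : ℝ) (ha : -1 ≤ a) (hb : b ≤ 1) (hab : a ≤ b)
    (hint : IntervalIntegrable (fun t => w t * f'' t) volume a b) :
    ∫ t in a..b, w t * f'' t =
      (w b * f' b - w' b * f b) - (w a * f' a - w' a * f a) + ∫ t in a..b, f t := by
  have contf : ContinuousOn f (Icc (-1:ℝ) 1) := fun t ht => (hf t ht).continuousWithinAt
  have contf' : ContinuousOn f' (Icc (-1:ℝ) 1) := fun t ht => (hf' t ht).continuousWithinAt
  have hIcc : Icc a b ⊆ Icc (-1:ℝ) 1 := Icc_subset_Icc ha hb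
  have hcw : Continuous w := by
    rw [continuous_iff_continuousAt]; exact fun t => (hw t).continuousAt
  have hcw' : Continuous w' := by
    rw [continuous_iff_continuousAt]; exact fun t => (hw' t).continuousAt
  have hintf : IntervalIntegrable f volume a b := by
    apply ContinuousOn.intervalIntegrable
    rw [uIcc_of_le hab]; exact contf.mono hIcc
  have hgc : ContinuousOn (fun t => w t * f' t - w' t * f t) (Icc a b) :=
    ((hcw.continuousOn.mul (contf'.mono hIcc)).sub (hcw'.continuousOn.mul (contf.mono hIcc)))
  have hderiv : ∀ t ∈ Ioo a b, HasDerivWithinAt (fun t => w t * f' t - w' t * f t)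
      (w t * f'' t - f t) (Ioi t) t := by
    intro t ht
    have htI : t ∈ Ioo (-1:ℝ) 1 := ⟨lt_of_le_of_lt ha ht.1, lt_of_lt_of_le ht.2 hb⟩
    have hft : HasDerivAt f (f' t) t :=
      (hf t (Ioo_subset_Icc_self htI)).hasDerivAt (Icc_mem_nhds htI.1 htI.2)
    have hf't : HasDerivAt f' (f'' t) t :=
      (hf' t (Ioo_subset_Icc_self htI)).hasDerivAt (Icc_mem_nhds htI.1 htI.2)
    have := ((hw t).mul hf't).sub ((hw' t).mul hft)
    have h2 : w' t * f' t + w t * f'' t - (1 * f t + w' t * f' t) = w t * f'' t - f t := by ring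
    rw [h2] at this
    exact this.hasDerivWithinAt
  have hint2 : IntervalIntegrable (fun t => w t * f'' t - f t) volume a b := hint.sub hintf
  have key := integral_eq_sub_of_hasDeriv_right_of_le hab hgc hderiv hint2
  rw [integral_sub hint hintf] at key
  linarith

lemma gs_bnd (M : ℝ) (f'' : ℝ → ℝ) (hbound : ∀ t ∈ Icc (-1:ℝ) 1, |f'' t| ≤ M)
    (w : ℝ → ℝ) (hw : Continuous w)
    (a b : ℝ) (ha : -1 ≤ a) (hb : b ≤ 1) (hab : a ≤ b)
    (hw0 : ∀ t ∈ Icc a b, 0 ≤ w t)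
    (hint : IntervalIntegrable (fun t => w t * f'' t) volume a b) :
    |∫ t in a..b, w t * f'' t| ≤ M * ∫ t in a..b, w t := by
  have h1 : |∫ t in a..b, w t * f'' t| ≤ ∫ t in a..b, |w t * f'' t| :=
    abs_integral_le_integral_abs hab
  have h2 : ∫ t in a..b, |w t * f'' t| ≤ ∫ t in a..b, M * w t := by
    apply integral_mono_on hab hint.abs ((continuous_const.mul hw).intervalIntegrable a b)
    intro t ht
    have htI : t ∈ Icc (-1:ℝ) 1 := Icc_subset_Icc ha hb ht
    rw [abs_mul, abs_of_nonneg (hw0 t ht), show ((fun _ => M) * w : ℝ → ℝ) t = M * w t from rfl, mul_comm (M)]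
    exact mul_le_mul_of_nonneg_left (hbound t htI) (hw0 t ht)
  rw [intervalIntegral.integral_const_mul] at h2
  linarith


set_option maxHeartbeats 1000000
theorem guessab_schmeisser_second_derivative (M x : ℝ) (hx : x ∈ Set.Icc (0:ℝ) 1)
    (f f' f'' : ℝ → ℝ)
    (hf : ∀ t ∈ Set.Icc (-1:ℝ) 1, HasDerivWithinAt f (f' t) (Set.Icc (-1) 1) t)
    (hf' : ∀ t ∈ Set.Icc (-1:ℝ) 1, HasDerivWithinAt f' (f'' t) (Set.Icc (-1) 1) t)
    (hbound : ∀ t ∈ Set.Icc (-1:ℝ) 1, |f'' t| ≤ M) :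
    |(∫ t in (-1:ℝ)..1, f t) - (f (-x) + f x)| ≤
      (if x ≤ 1 / 2 then 1 / 3 - x ^ 2
        else (1 / 3) * (4 * (2 * x - 1) ^ ((3:ℝ) / 2) + 1 - 3 * x ^ 2)) * M := by
  obtain ⟨hx0, hx1⟩ := hx
  have hM : 0 ≤ M := le_trans (abs_nonneg _) (hbound 0 (by norm_num))
  have contf : ContinuousOn f (Icc (-1:ℝ) 1) := fun t ht => (hf t ht).continuousWithinAt
  have hfi : ∀ a b : ℝ, -1 ≤ a → b ≤ 1 → a ≤ b → IntervalIntegrable f volume a b := by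
    intro a b ha hb hab
    apply ContinuousOn.intervalIntegrable
    rw [uIcc_of_le hab]
    exact contf.mono (Icc_subset_Icc ha hb)
  -- derivative facts for weights
  have hw1 : ∀ t : ℝ, HasDerivAt (fun t : ℝ => (1+t)^2/2) (1+t) t := by
    intro t
    have := (((hasDerivAt_id t).const_add 1).pow 2).div_const 2
    convert this using 1 <;> try rfl
    first | (simp; ring) | simp | ring
  have hw1' : ∀ t : ℝ, HasDerivAt (fun t : ℝ => 1+t) 1 t := fun t => (hasDerivAt_id t).const_add 1
  have hw2 : ∀ t : ℝ, HasDerivAt (fun t : ℝ => (t^2+(1-2*x))/2) t t := by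
    intro t
    have := ((hasDerivAt_pow 2 t).add_const (1-2*x)).div_const 2
    convert this using 1 <;> try rfl
    first | (simp; ring) | simp | ring
  have hw2' : ∀ t : ℝ, HasDerivAt (fun t : ℝ => t) 1 t := fun t => hasDerivAt_id t
  have hw3 : ∀ t : ℝ, HasDerivAt (fun t : ℝ => (1-t)^2/2) (t-1) t := by
    intro t
    have := (((hasDerivAt_id t).const_sub 1).pow 2).div_const 2
    convert this using 1 <;> try rfl
    first | (simp; ring) | simp | ring
  have hw3' : ∀ t : ℝ, HasDerivAt (fun t : ℝ => t-1) 1 t := fun t => (hasDerivAt_id t).sub_const 1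
  -- boundedness of weights
  have hwb1 : ∀ t ∈ Icc (-1:ℝ) 1, |(1+t)^2/2| ≤ 2 := by
    intro t ht
    rw [abs_of_nonneg (by positivity)]
    nlinarith [ht.1, ht.2]
  have hwb2 : ∀ t ∈ Icc (-1:ℝ) 1, |(t^2+(1-2*x))/2| ≤ 2 := by
    intro t ht
    rw [abs_le]
    constructor <;> nlinarith [ht.1, ht.2, sq_nonneg t]
  have hwb2n : ∀ t ∈ Icc (-1:ℝ) 1, |-((t^2+(1-2*x))/2)| ≤ 2 := by
    intro t ht
    rw [abs_neg]
    exact hwb2 t ht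
  have hwb3 : ∀ t ∈ Icc (-1:ℝ) 1, |(1-t)^2/2| ≤ 2 := by
    intro t ht
    rw [abs_of_nonneg (by positivity)]
    nlinarith [ht.1, ht.2]
  have hx1' : -x ≤ 1 := by linarith
  have hx1'' : (-1:ℝ) ≤ -x := by linarith
  have hxx : -x ≤ x := by linarith
  -- integrability of the three pieces
  have hi1 : IntervalIntegrable (fun t => (1+t)^2/2 * f'' t) volume (-1) (-x) :=
    gs_integrable f' f'' M hf' hbound _ (by fun_prop) hwb1 (-1) (-x) le_rfl hx1' hx1''
  have hi2 : IntervalIntegrable (fun t => (t^2+(1-2*x))/2 * f'' t) volume (-x) x :=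
    gs_integrable f' f'' M hf' hbound _ (by fun_prop) hwb2 (-x) x hx1'' hx1 hxx
  have hi3 : IntervalIntegrable (fun t => (1-t)^2/2 * f'' t) volume x 1 :=
    gs_integrable f' f'' M hf' hbound _ (by fun_prop) hwb3 x 1 (by linarith) le_rfl hx1
  -- integration by parts on the three pieces
  have p1 : ∫ t in (-1:ℝ)..(-x), (1+t)^2/2 * f'' t =
      ((1+(-x))^2/2 * f' (-x) - (1+(-x)) * f (-x))
        - ((1+(-1:ℝ))^2/2 * f' (-1) - (1+(-1:ℝ)) * f (-1)) + ∫ t in (-1:ℝ)..(-x), f t :=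
    gs_parts f f' f'' hf hf' _ _ hw1 hw1' (-1) (-x) le_rfl hx1' hx1'' hi1
  have p2 : ∫ t in (-x)..x, (t^2+(1-2*x))/2 * f'' t =
      ((x^2+(1-2*x))/2 * f' x - x * f x)
        - (((-x)^2+(1-2*x))/2 * f' (-x) - (-x) * f (-x)) + ∫ t in (-x)..x, f t :=
    gs_parts f f' f'' hf hf' _ _ hw2 hw2' (-x) x hx1'' hx1 hxx hi2
  have p3 : ∫ t in x..(1:ℝ), (1-t)^2/2 * f'' t =
      ((1-(1:ℝ))^2/2 * f' 1 - ((1:ℝ)-1) * f 1)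
        - ((1-x)^2/2 * f' x - (x-1) * f x) + ∫ t in x..(1:ℝ), f t :=
    gs_parts f f' f'' hf hf' _ _ hw3 hw3' x 1 (by linarith) le_rfl hx1 hi3
  -- splitting the integral of f
  have hsum1 := integral_add_adjacent_intervals (μ := volume) (f := f)
    (hfi (-1) (-x) le_rfl hx1' hx1'') (hfi (-x) x hx1'' hx1 hxx)
  have hsum2 := integral_add_adjacent_intervals (μ := volume) (f := f)
    ((hfi (-1) (-x) le_rfl hx1' hx1'').trans (hfi (-x) x hx1'' hx1 hxx))
    (hfi x 1 (by linarith) le_rfl hx1)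
  have hE : (∫ t in (-1:ℝ)..1, f t) - (f (-x) + f x) =
      (∫ t in (-1:ℝ)..(-x), (1+t)^2/2 * f'' t) + (∫ t in (-x)..x, (t^2+(1-2*x))/2 * f'' t)
        + (∫ t in x..(1:ℝ), (1-t)^2/2 * f'' t) := by
    rw [p1, p2, p3, ← hsum2, ← hsum1]
    ring
  rw [hE]
  -- bounds on pieces 1 and 3 (common to both cases)
  have b1 : |∫ t in (-1:ℝ)..(-x), (1+t)^2/2 * f'' t| ≤ M * ∫ t in (-1:ℝ)..(-x), (1+t)^2/2 := by
    apply gs_bnd M f'' hbound _ (by fun_prop) (-1) (-x) le_rfl hx1' hx1''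
      (fun t _ => by positivity) hi1
  have b3 : |∫ t in x..(1:ℝ), (1-t)^2/2 * f'' t| ≤ M * ∫ t in x..(1:ℝ), (1-t)^2/2 := by
    apply gs_bnd M f'' hbound _ (by fun_prop) x 1 (by linarith) le_rfl hx1
      (fun t _ => by positivity) hi3
  have hJ1 : ∫ t in (-1:ℝ)..(-x), (1+t)^2/2 = (1-x)^3/6 := by
    have he : EqOn (fun t : ℝ => (1+t)^2/2) (fun t : ℝ => (1/2)*t^2 + 1*t + 1/2) (uIcc (-1) (-x)) :=
      fun t _ => by ring
    rw [intervalIntegral.integral_congr he, integral_quadratic]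
    ring
  have hJ3 : ∫ t in x..(1:ℝ), (1-t)^2/2 = (1-x)^3/6 := by
    have he : EqOn (fun t : ℝ => (1-t)^2/2) (fun t : ℝ => (1/2)*t^2 + (-1)*t + 1/2) (uIcc x 1) :=
      fun t _ => by ring
    rw [intervalIntegral.integral_congr he, integral_quadratic]
    ring
  rw [hJ1] at b1
  rw [hJ3] at b3
  by_cases hhalf : x ≤ 1/2
  · rw [if_pos hhalf]
    have b2 : |∫ t in (-x)..x, (t^2+(1-2*x))/2 * f'' t| ≤ M * ∫ t in (-x)..x, (t^2+(1-2*x))/2 := by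
      apply gs_bnd M f'' hbound _ (by fun_prop) (-x) x hx1'' hx1 hxx
        (fun t _ => by nlinarith [sq_nonneg t]) hi2
    have hJ2 : ∫ t in (-x)..x, (t^2+(1-2*x))/2 = x^3/3 + x - 2*x^2 := by
      have he : EqOn (fun t : ℝ => (t^2+(1-2*x))/2) (fun t : ℝ => (1/2)*t^2 + 0*t + (1-2*x)/2)
          (uIcc (-x) x) := fun t _ => by ring
      rw [intervalIntegral.integral_congr he, integral_quadratic]
      ring
    rw [hJ2] at b2
    have habs := abs_add_le ((∫ t in (-1:ℝ)..(-x), (1+t)^2/2 * f'' t)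
        + (∫ t in (-x)..x, (t^2+(1-2*x))/2 * f'' t)) (∫ t in x..(1:ℝ), (1-t)^2/2 * f'' t)
    have habs2 := abs_add_le (∫ t in (-1:ℝ)..(-x), (1+t)^2/2 * f'' t)
        (∫ t in (-x)..x, (t^2+(1-2*x))/2 * f'' t)
    have hfin : M*((1-x)^3/6) + M*(x^3/3 + x - 2*x^2) + M*((1-x)^3/6) = (1/3 - x^2)*M := by ring
    linarith
  · rw [if_neg hhalf]
    push_neg at hhalf
    set s := Real.sqrt (2*x-1) with hs
    have hs0 : 0 ≤ s := Real.sqrt_nonneg _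
    have hs2 : s^2 = 2*x-1 := Real.sq_sqrt (by linarith)
    have hsx : s ≤ x := by
      have h1 : Real.sqrt (2*x-1) ≤ Real.sqrt (x^2) :=
        Real.sqrt_le_sqrt (by linarith [sq_nonneg (x-1)])
      rw [Real.sqrt_sq hx0] at h1
      exact h1
    have hxs : -x ≤ -s := by linarith
    have hss : -s ≤ s := by linarith
    have hs1 : s ≤ 1 := by linarith
    have hs1' : (-1:ℝ) ≤ -s := by linarith
    -- split piece 2
    have hi2a : IntervalIntegrable (fun t => (t^2+(1-2*x))/2 * f'' t) volume (-x) (-s) :=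
      gs_integrable f' f'' M hf' hbound _ (by fun_prop) hwb2 (-x) (-s) hx1'' (by linarith) hxs
    have hi2b : IntervalIntegrable (fun t => (t^2+(1-2*x))/2 * f'' t) volume (-s) s :=
      gs_integrable f' f'' M hf' hbound _ (by fun_prop) hwb2 (-s) s hs1' hs1 hss
    have hi2c : IntervalIntegrable (fun t => (t^2+(1-2*x))/2 * f'' t) volume s x :=
      gs_integrable f' f'' M hf' hbound _ (by fun_prop) hwb2 s x (by linarith) hx1 hsx
    have hsp1 := integral_add_adjacent_intervals hi2a hi2b
    have hsp2 := integral_add_adjacent_intervals (hi2a.trans hi2b) hi2c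
    -- bounds on the three subpieces
    have b2a : |∫ t in (-x)..(-s), (t^2+(1-2*x))/2 * f'' t|
        ≤ M * ∫ t in (-x)..(-s), (t^2+(1-2*x))/2 := by
      refine gs_bnd M f'' hbound _ (by fun_prop) (-x) (-s) hx1'' (by linarith) hxs ?_ hi2a
      intro t ht
      have h1 : (0:ℝ) ≤ -t - s := by linarith [ht.2]
      have h2 : (0:ℝ) ≤ -t + s := by linarith [ht.2, hs0]
      nlinarith [mul_nonneg h1 h2]
    have b2c : |∫ t in s..x, (t^2+(1-2*x))/2 * f'' t|
        ≤ M * ∫ t in s..x, (t^2+(1-2*x))/2 := by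
      refine gs_bnd M f'' hbound _ (by fun_prop) s x (by linarith) hx1 hsx ?_ hi2c
      intro t ht
      have h1 : (0:ℝ) ≤ t - s := by linarith [ht.1]
      have h2 : (0:ℝ) ≤ t + s := by linarith [ht.1, hs0]
      nlinarith [mul_nonneg h1 h2]
    have hi2bn : IntervalIntegrable (fun t => -((t^2+(1-2*x))/2) * f'' t) volume (-s) s :=
      gs_integrable f' f'' M hf' hbound _ (by fun_prop) hwb2n (-s) s hs1' hs1 hss
    have b2b' : |∫ t in (-s)..s, -((t^2+(1-2*x))/2) * f'' t|
        ≤ M * ∫ t in (-s)..s, -((t^2+(1-2*x))/2) := by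
      refine gs_bnd M f'' hbound _ (by fun_prop) (-s) s hs1' hs1 hss ?_ hi2bn
      intro t ht
      have h1 : (0:ℝ) ≤ s - t := by linarith [ht.2]
      have h2 : (0:ℝ) ≤ s + t := by linarith [ht.1]
      nlinarith [mul_nonneg h1 h2]
    have hneg1 : (∫ t in (-s)..s, -((t^2+(1-2*x))/2) * f'' t)
        = -∫ t in (-s)..s, (t^2+(1-2*x))/2 * f'' t := by
      rw [← intervalIntegral.integral_neg]
      apply intervalIntegral.integral_congr
      intro t _
      ring
    have hneg2 : (∫ t in (-s)..s, -((t^2+(1-2*x))/2)) = -∫ t in (-s)..s, (t^2+(1-2*x))/2 := by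
      rw [← intervalIntegral.integral_neg]
    have b2b : |∫ t in (-s)..s, (t^2+(1-2*x))/2 * f'' t|
        ≤ M * -∫ t in (-s)..s, (t^2+(1-2*x))/2 := by
      rw [← hneg2]
      calc |∫ t in (-s)..s, (t^2+(1-2*x))/2 * f'' t|
          = |∫ t in (-s)..s, -((t^2+(1-2*x))/2) * f'' t| := by rw [hneg1, abs_neg]
        _ ≤ _ := b2b'
    -- values of the quadratic integrals
    have hq : ∀ a b : ℝ, ∫ t in a..b, (t^2+(1-2*x))/2
        = (b^3/6 + (1-2*x)*b/2) - (a^3/6 + (1-2*x)*a/2) := by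
      intro a b
      have he : EqOn (fun t : ℝ => (t^2+(1-2*x))/2) (fun t : ℝ => (1/2)*t^2 + 0*t + (1-2*x)/2)
          (uIcc a b) := fun t _ => by ring
      rw [intervalIntegral.integral_congr he, integral_quadratic]
      ring
    rw [hq] at b2a b2c b2b
    -- rpow to sqrt
    have hr : (2*x - 1) ^ ((3:ℝ)/2) = s^3 := by
      rw [show ((3:ℝ)/2) = (1/2)*3 by norm_num,
        Real.rpow_mul (by linarith : (0:ℝ) ≤ 2*x-1), ← Real.sqrt_eq_rpow,
        show (3:ℝ) = ((3:ℕ):ℝ) by norm_num, Real.rpow_natCast]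
    rw [hr]
    -- combine
    have hsplit : (∫ t in (-x)..x, (t^2+(1-2*x))/2 * f'' t)
        = (∫ t in (-x)..(-s), (t^2+(1-2*x))/2 * f'' t)
          + (∫ t in (-s)..s, (t^2+(1-2*x))/2 * f'' t)
          + (∫ t in s..x, (t^2+(1-2*x))/2 * f'' t) := by
      rw [hsp1, hsp2]
    rw [hsplit]
    have habs := abs_add_le ((∫ t in (-1:ℝ)..(-x), (1+t)^2/2 * f'' t)
        + ((∫ t in (-x)..(-s), (t^2+(1-2*x))/2 * f'' t)
          + (∫ t in (-s)..s, (t^2+(1-2*x))/2 * f'' t)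
          + (∫ t in s..x, (t^2+(1-2*x))/2 * f'' t)))
        (∫ t in x..(1:ℝ), (1-t)^2/2 * f'' t)
    have habs2 := abs_add_le (∫ t in (-1:ℝ)..(-x), (1+t)^2/2 * f'' t)
        ((∫ t in (-x)..(-s), (t^2+(1-2*x))/2 * f'' t)
          + (∫ t in (-s)..s, (t^2+(1-2*x))/2 * f'' t)
          + (∫ t in s..x, (t^2+(1-2*x))/2 * f'' t))
    have habs3 := abs_add_le ((∫ t in (-x)..(-s), (t^2+(1-2*x))/2 * f'' t)
          + (∫ t in (-s)..s, (t^2+(1-2*x))/2 * f'' t))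
        (∫ t in s..x, (t^2+(1-2*x))/2 * f'' t)
    have habs4 := abs_add_le (∫ t in (-x)..(-s), (t^2+(1-2*x))/2 * f'' t)
        (∫ t in (-s)..s, (t^2+(1-2*x))/2 * f'' t)
    have hfin : M*((1-x)^3/6)
        + M*(((-s)^3/6 + (1-2*x)*(-s)/2) - ((-x)^3/6 + (1-2*x)*(-x)/2))
        + M*(-((s^3/6 + (1-2*x)*s/2) - ((-s)^3/6 + (1-2*x)*(-s)/2)))
        + M*((x^3/6 + (1-2*x)*x/2) - (s^3/6 + (1-2*x)*s/2))
        + M*((1-x)^3/6)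
        = (1/3)*(4*s^3 + 1 - 3*x^2)*M := by
      linear_combination (-2*M*s)*hs2
    linarith
end

section
/- (Two-point Gauss–Legendre rule, third-derivative estimate) Let f : [-1,1] → ℝ be three times differentiable with |f'''(t)| ≤ M for all t ∈ [-1,1]. Then |∫_{-1}^1 f(t) dt - [f(-1/√3) + f(1/√3)]| ≤ ((9 - 4√3)/108) M. -/
open MeasureTheory intervalIntegral Set

private lemma gauss_f3_int (M : ℝ) (f'' f''' : ℝ → ℝ)
    (hf'' : ∀ t ∈ Set.Icc (-1:ℝ) 1, HasDerivWithinAt f'' (f''' t) (Set.Icc (-1) 1) t)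
    (hbound : ∀ t ∈ Set.Icc (-1:ℝ) 1, |f''' t| ≤ M)
    (a b : ℝ) (ha : -1 ≤ a) (hab : a ≤ b) (hb : b ≤ 1) :
    IntervalIntegrable f''' volume a b := by
  have hmeas : Measurable (deriv f'') := measurable_deriv _
  have heq : ∀ x ∈ Set.Ioo (-1:ℝ) 1, f''' x = deriv f'' x := by
    intro x hx
    exact ((hf'' x (Ioo_subset_Icc_self hx)).hasDerivAt
      (Icc_mem_nhds hx.1 hx.2)).deriv.symm
  have hne : ∀ᵐ x : ℝ, x ≠ 1 := by
    rw [ae_iff]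
    have : {x : ℝ | ¬ x ≠ 1} = {1} := by ext x; simp
    rw [this]
    exact measure_singleton 1
  have hmem : ∀ᵐ x ∂(volume.restrict (Set.Ioc a b)), x ∈ Set.Ioo (-1:ℝ) 1 := by
    rw [ae_restrict_iff' measurableSet_Ioc]
    filter_upwards [hne] with x hx1 hx
    exact ⟨lt_of_le_of_lt ha hx.1, lt_of_le_of_ne (hx.2.trans hb) hx1⟩
  have hae : f''' =ᵐ[volume.restrict (Set.Ioc a b)] deriv f'' := by
    filter_upwards [hmem] with x hx
    exact heq x hx
  have hint : IntegrableOn f''' (Set.Ioc a b) volume := by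
    refine Integrable.mono' (integrable_const M) ?_ ?_
    · exact hmeas.aestronglyMeasurable.congr hae.symm
    · filter_upwards [hmem] with x hx
      exact hbound x ⟨hx.1.le, hx.2.le⟩
  constructor
  · exact hint
  · rw [Set.Ioc_eq_empty (by linarith)]
    exact integrableOn_empty

private lemma gauss_parts (f f' f'' f''' : ℝ → ℝ)
    (hf : ∀ t ∈ Set.Icc (-1:ℝ) 1, HasDerivWithinAt f (f' t) (Set.Icc (-1) 1) t)
    (hf' : ∀ t ∈ Set.Icc (-1:ℝ) 1, HasDerivWithinAt f' (f'' t) (Set.Icc (-1) 1) t)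
    (hf'' : ∀ t ∈ Set.Icc (-1:ℝ) 1, HasDerivWithinAt f'' (f''' t) (Set.Icc (-1) 1) t)
    (K K' K'' : ℝ → ℝ)
    (hK : ∀ x, HasDerivAt K (K' x) x) (hK' : ∀ x, HasDerivAt K' (K'' x) x)
    (hK'' : ∀ x, HasDerivAt K'' (-1) x)
    (a b : ℝ) (ha : -1 ≤ a) (hab : a ≤ b) (hb : b ≤ 1)
    (hint : IntervalIntegrable f''' volume a b) :
    ∫ t in a..b, f t = (∫ t in a..b, K t * f''' t)
      - (K b * f'' b - K' b * f' b + K'' b * f b)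
      + (K a * f'' a - K' a * f' a + K'' a * f a) := by
  have hsub : Set.Icc a b ⊆ Set.Icc (-1:ℝ) 1 := Set.Icc_subset_Icc ha hb
  have hsubu : Set.uIcc a b ⊆ Set.Icc (-1:ℝ) 1 := by
    rw [Set.uIcc_of_le hab]; exact hsub
  have hfc : ContinuousOn f (Set.Icc (-1:ℝ) 1) := fun x hx => (hf x hx).continuousWithinAt
  have hfc' : ContinuousOn f' (Set.Icc (-1:ℝ) 1) := fun x hx => (hf' x hx).continuousWithinAt
  have hfc'' : ContinuousOn f'' (Set.Icc (-1:ℝ) 1) := fun x hx => (hf'' x hx).continuousWithinAt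
  have hKc : Continuous K := by
    apply continuous_iff_continuousAt.2; intro x; exact (hK x).continuousAt
  have hKc' : Continuous K' := by
    apply continuous_iff_continuousAt.2; intro x; exact (hK' x).continuousAt
  have hKc'' : Continuous K'' := by
    apply continuous_iff_continuousAt.2; intro x; exact (hK'' x).continuousAt
  have hKint : IntervalIntegrable (fun t => K t * f''' t) volume a b :=
    hint.continuousOn_mul (hKc.continuousOn)
  have hfint : IntervalIntegrable f volume a b := (hfc.mono hsubu).intervalIntegrable
  set H : ℝ → ℝ := fun t => K t * f'' t - K' t * f' t + K'' t * f t with hH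
  have hcont : ContinuousOn H (Set.Icc a b) := by
    apply ContinuousOn.add
    apply ContinuousOn.sub
    · exact (hKc.continuousOn).mul (hfc''.mono hsub)
    · exact (hKc'.continuousOn).mul (hfc'.mono hsub)
    · exact (hKc''.continuousOn).mul (hfc.mono hsub)
  have hderiv : ∀ x ∈ Set.Ioo a b, HasDerivAt H (K x * f''' x - f x) x := by
    intro x hx
    have hx1 : x ∈ Set.Ioo (-1:ℝ) 1 := ⟨lt_of_le_of_lt ha hx.1, lt_of_lt_of_le hx.2 hb⟩
    have hxm : x ∈ Set.Icc (-1:ℝ) 1 := Set.Ioo_subset_Icc_self hx1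
    have hnh : Set.Icc (-1:ℝ) 1 ∈ nhds x := Icc_mem_nhds hx1.1 hx1.2
    have hdf : HasDerivAt f (f' x) x := (hf x hxm).hasDerivAt hnh
    have hdf' : HasDerivAt f' (f'' x) x := (hf' x hxm).hasDerivAt hnh
    have hdf'' : HasDerivAt f'' (f''' x) x := (hf'' x hxm).hasDerivAt hnh
    have h1 : HasDerivAt H
        ((K' x * f'' x + K x * f''' x) - (K'' x * f' x + K' x * f'' x)
          + ((-1) * f x + K'' x * f' x)) x :=
      (((hK x).mul hdf'').sub ((hK' x).mul hdf')).add ((hK'' x).mul hdf)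
    convert h1 using 1; ring
  have key : ∫ t in a..b, (K t * f''' t - f t) = H b - H a :=
    integral_eq_sub_of_hasDerivAt_of_le hab hcont hderiv (hKint.sub hfint)
  rw [intervalIntegral.integral_sub hKint hfint] at key
  simp only [hH] at key ⊢
  linarith

set_option maxHeartbeats 1000000 in
theorem two_point_gauss_legendre_third_derivative (M : ℝ) (f f' f'' f''' : ℝ → ℝ)
    (hf : ∀ t ∈ Set.Icc (-1:ℝ) 1, HasDerivWithinAt f (f' t) (Set.Icc (-1) 1) t)
    (hf' : ∀ t ∈ Set.Icc (-1:ℝ) 1, HasDerivWithinAt f' (f'' t) (Set.Icc (-1) 1) t)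
    (hf'' : ∀ t ∈ Set.Icc (-1:ℝ) 1, HasDerivWithinAt f'' (f''' t) (Set.Icc (-1) 1) t)
    (hbound : ∀ t ∈ Set.Icc (-1:ℝ) 1, |f''' t| ≤ M) :
    |(∫ t in (-1:ℝ)..1, f t) - (f (-(1 / Real.sqrt 3)) + f (1 / Real.sqrt 3))| ≤
      ((9 - 4 * Real.sqrt 3) / 108) * M := by
  set s : ℝ := Real.sqrt 3 with hs
  have hs0 : 0 < s := Real.sqrt_pos.2 (by norm_num)
  have hs3 : s ^ 2 = 3 := Real.sq_sqrt (by norm_num)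
  have hs1 : 1 < s := by nlinarith
  set c : ℝ := 1 / s with hc
  have hc0 : 0 < c := by positivity
  have hc1 : c < 1 := by rw [hc]; rw [div_lt_one hs0]; exact hs1
  have hcc : c ^ 2 = 1 / 3 := by rw [hc]; field_simp; linarith [hs3]
  have hM0 : 0 ≤ M := le_trans (abs_nonneg _) (hbound 0 (by norm_num))
  have hc59 : (5:ℝ)/9 ≤ c := by
    have h9 : 5 * s ≤ 9 := by nlinarith [hs3, hs0, sq_nonneg (s - 9/5)]
    rw [hc, le_div_iff₀ hs0]; linarith
  -- kernels
  set K1 : ℝ → ℝ := fun t => -(1+t)^3/6 with hK1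
  set K1' : ℝ → ℝ := fun t => -(1+t)^2/2 with hK1'
  set K1'' : ℝ → ℝ := fun t => -(1+t) with hK1''
  set K2 : ℝ → ℝ := fun t => -t^3/6 + (c - 1/2)*t with hK2
  set K2' : ℝ → ℝ := fun t => -t^2/2 + (c - 1/2) with hK2'
  set K2'' : ℝ → ℝ := fun t => -t with hK2''
  set K3 : ℝ → ℝ := fun t => (1-t)^3/6 with hK3
  set K3' : ℝ → ℝ := fun t => -(1-t)^2/2 with hK3'
  set K3'' : ℝ → ℝ := fun t => (1-t) with hK3''
  have dK1 : ∀ x, HasDerivAt K1 (K1' x) x := by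
    intro x
    have h : HasDerivAt (fun t : ℝ => -(1+t)^3/6)
        (-((3:ℕ) * (1+x)^2 * 1)/6) x :=
      ((((hasDerivAt_id x).const_add 1).pow 3).neg).div_const 6
    convert h using 1; push_cast; ring
  have dK1' : ∀ x, HasDerivAt K1' (K1'' x) x := by
    intro x
    have h : HasDerivAt (fun t : ℝ => -(1+t)^2/2)
        (-((2:ℕ) * (1+x)^1 * 1)/2) x :=
      ((((hasDerivAt_id x).const_add 1).pow 2).neg).div_const 2
    convert h using 1; push_cast; ring
  have dK1'' : ∀ x, HasDerivAt K1'' (-1) x := by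
    intro x
    have h : HasDerivAt (fun t : ℝ => -(1+t)) (-(1:ℝ)) x :=
      ((hasDerivAt_id x).const_add 1).neg
    exact h
  have dK2 : ∀ x, HasDerivAt K2 (K2' x) x := by
    intro x
    have h : HasDerivAt (fun t : ℝ => -t^3/6 + (c - 1/2)*t)
        (-((3:ℕ) * x^2 * 1)/6 + (c - 1/2) * 1) x :=
      ((((hasDerivAt_id x).pow 3).neg).div_const 6).add ((hasDerivAt_id x).const_mul (c - 1/2))
    convert h using 1; push_cast; ring
  have dK2' : ∀ x, HasDerivAt K2' (K2'' x) x := by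
    intro x
    have h : HasDerivAt (fun t : ℝ => -t^2/2 + (c - 1/2))
        (-((2:ℕ) * x^1 * 1)/2 + 0) x :=
      ((((hasDerivAt_id x).pow 2).neg).div_const 2).add (hasDerivAt_const x _)
    convert h using 1; push_cast; ring
  have dK2'' : ∀ x, HasDerivAt K2'' (-1) x := by
    intro x
    exact (hasDerivAt_id x).neg
  have dK3 : ∀ x, HasDerivAt K3 (K3' x) x := by
    intro x
    have h : HasDerivAt (fun t : ℝ => (1-t)^3/6)
        (((3:ℕ) * (1-x)^2 * (0 - 1))/6) x := by
      exact ((((hasDerivAt_const x (1:ℝ)).sub (hasDerivAt_id x)).pow 3)).div_const 6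
    convert h using 1; push_cast; ring
  have dK3' : ∀ x, HasDerivAt K3' (K3'' x) x := by
    intro x
    have h : HasDerivAt (fun t : ℝ => -(1-t)^2/2)
        (-(((2:ℕ) * (1-x)^1 * (0 - 1)))/2) x :=
      ((((hasDerivAt_const x (1:ℝ)).sub (hasDerivAt_id x)).pow 2).neg).div_const 2
    convert h using 1; push_cast; ring
  have dK3'' : ∀ x, HasDerivAt K3'' (-1) x := by
    intro x
    have h : HasDerivAt (fun t : ℝ => 1 - t) (0 - 1 : ℝ) x :=
      (hasDerivAt_const x (1:ℝ)).sub (hasDerivAt_id x)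
    convert h using 1; ring
  -- integrability of f'''
  have int1 : IntervalIntegrable f''' volume (-1) (-c) :=
    gauss_f3_int M f'' f''' hf'' hbound (-1) (-c) le_rfl (by linarith) (by linarith)
  have int2a : IntervalIntegrable f''' volume (-c) 0 :=
    gauss_f3_int M f'' f''' hf'' hbound (-c) 0 (by linarith) (by linarith) (by linarith)
  have int2b : IntervalIntegrable f''' volume 0 c :=
    gauss_f3_int M f'' f''' hf'' hbound 0 c (by linarith) (by linarith) (by linarith)
  have int3 : IntervalIntegrable f''' volume c 1 :=
    gauss_f3_int M f'' f''' hf'' hbound c 1 (by linarith) (by linarith) le_rfl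
  -- the four integration-by-parts identities
  have A1 := gauss_parts f f' f'' f''' hf hf' hf'' K1 K1' K1'' dK1 dK1' dK1''
    (-1) (-c) le_rfl (by linarith) (by linarith) int1
  have A2a := gauss_parts f f' f'' f''' hf hf' hf'' K2 K2' K2'' dK2 dK2' dK2''
    (-c) 0 (by linarith) (by linarith) (by linarith) int2a
  have A2b := gauss_parts f f' f'' f''' hf hf' hf'' K2 K2' K2'' dK2 dK2' dK2''
    0 c (by linarith) (by linarith) (by linarith) int2b
  have A3 := gauss_parts f f' f'' f''' hf hf' hf'' K3 K3' K3'' dK3 dK3' dK3''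
    c 1 (by linarith) (by linarith) le_rfl int3
  -- split the full integral
  have hfc : ContinuousOn f (Set.Icc (-1:ℝ) 1) := fun x hx => (hf x hx).continuousWithinAt
  have fint : ∀ a b : ℝ, -1 ≤ a → a ≤ b → b ≤ 1 → IntervalIntegrable f volume a b := by
    intro a b ha hab hb
    apply ContinuousOn.intervalIntegrable
    apply hfc.mono
    rw [Set.uIcc_of_le hab]
    exact Set.Icc_subset_Icc ha hb
  have split1 : (∫ t in (-1:ℝ)..(0:ℝ), f t) =
      (∫ t in (-1:ℝ)..(-c), f t) + (∫ t in (-c)..(0:ℝ), f t) := by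
    rw [intervalIntegral.integral_add_adjacent_intervals
      (fint (-1) (-c) le_rfl (by linarith) (by linarith))
      (fint (-c) 0 (by linarith) (by linarith) (by linarith))]
  have split2 : (∫ t in (0:ℝ)..(1:ℝ), f t) =
      (∫ t in (0:ℝ)..c, f t) + (∫ t in c..(1:ℝ), f t) := by
    rw [intervalIntegral.integral_add_adjacent_intervals
      (fint 0 c (by linarith) (by linarith) (by linarith))
      (fint c 1 (by linarith) (by linarith) le_rfl)]
  have split0 : (∫ t in (-1:ℝ)..(1:ℝ), f t) =
      (∫ t in (-1:ℝ)..(0:ℝ), f t) + (∫ t in (0:ℝ)..(1:ℝ), f t) := by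
    rw [intervalIntegral.integral_add_adjacent_intervals
      (fint (-1) 0 le_rfl (by linarith) (by linarith))
      (fint 0 1 (by linarith) (by linarith) le_rfl)]
  -- key identity
  have key : (∫ t in (-1:ℝ)..1, f t) - (f (-c) + f c) =
      (∫ t in (-1:ℝ)..(-c), K1 t * f''' t) + (∫ t in (-c)..(0:ℝ), K2 t * f''' t)
      + (∫ t in (0:ℝ)..c, K2 t * f''' t) + (∫ t in c..(1:ℝ), K3 t * f''' t) := by
    rw [split0, split1, split2, A1, A2a, A2b, A3]
    simp only [hK1, hK1', hK1'', hK2, hK2', hK2'', hK3, hK3', hK3'']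
    linear_combination (-(f'' (-c) + f'' c) / 2) * hcc
  -- FTC helper for computing polynomial integrals
  have ftc : ∀ (F G : ℝ → ℝ) (a b : ℝ), (∀ x ∈ Set.uIcc a b, HasDerivAt F (G x) x) →
      Continuous G → (∫ t in a..b, G t) = F b - F a := by
    intro F G a b hd hcG
    exact intervalIntegral.integral_eq_sub_of_hasDerivAt hd (hcG.intervalIntegrable a b)
  -- piece 1 bound
  have B1 : |∫ t in (-1:ℝ)..(-c), K1 t * f''' t| ≤ (1-c)^4/24 * M := by
    have habs : ∀ x ∈ Set.Icc (-1:ℝ) (-c), |K1 x * f''' x| ≤ (1+x)^3/6 * M := by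
      intro x hx
      rw [abs_mul]
      have h1 : |K1 x| = (1+x)^3/6 := by
        rw [hK1]
        simp only []
        have h0 : (0:ℝ) ≤ (1+x)^3 := pow_nonneg (by linarith [hx.1]) 3
        rw [abs_of_nonpos (by linarith : -(1+x)^3/6 ≤ 0)]
        ring
      rw [h1]
      have h0 : (0:ℝ) ≤ (1+x)^3 := pow_nonneg (by linarith [hx.1]) 3
      exact mul_le_mul_of_nonneg_left
        (hbound x ⟨hx.1, by linarith [hx.2]⟩) (by linarith)
    have hKi : IntervalIntegrable (fun t => K1 t * f''' t) volume (-1) (-c) := by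
      apply int1.continuousOn_mul
      rw [hK1]; fun_prop
    have hval : (∫ t in (-1:ℝ)..(-c), (1+t)^3/6 * M) = (1-c)^4/24 * M := by
      rw [ftc (fun t => (1+t)^4/24 * M) (fun t => (1+t)^3/6 * M) (-1) (-c) ?_ (by fun_prop)]
      · ring_nf
      · intro x _
        have h : HasDerivAt (fun t : ℝ => (1+t)^4/24 * M)
            ((((4:ℕ) * (1+x)^3 * 1)/24) * M) x :=
          ((((hasDerivAt_id x).const_add 1).pow 4).div_const 24).mul_const M
        convert h using 1; push_cast; ring
    calc |∫ t in (-1:ℝ)..(-c), K1 t * f''' t|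
        ≤ ∫ t in (-1:ℝ)..(-c), |K1 t * f''' t| :=
          intervalIntegral.abs_integral_le_integral_abs (by linarith)
      _ ≤ ∫ t in (-1:ℝ)..(-c), (1+t)^3/6 * M :=
          intervalIntegral.integral_mono_on (by linarith) hKi.abs
            (Continuous.intervalIntegrable (by fun_prop) _ _) habs
      _ = (1-c)^4/24 * M := hval
  -- piece 3 bound
  have B3 : |∫ t in c..(1:ℝ), K3 t * f''' t| ≤ (1-c)^4/24 * M := by
    have habs : ∀ x ∈ Set.Icc c (1:ℝ), |K3 x * f''' x| ≤ (1-x)^3/6 * M := by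
      intro x hx
      rw [abs_mul]
      have h1 : |K3 x| = (1-x)^3/6 := by
        rw [hK3]
        simp only []
        have h0 : (0:ℝ) ≤ (1-x)^3 := pow_nonneg (by linarith [hx.2]) 3
        rw [abs_of_nonneg (by linarith : (0:ℝ) ≤ (1-x)^3/6)]
      rw [h1]
      have h0 : (0:ℝ) ≤ (1-x)^3 := pow_nonneg (by linarith [hx.2]) 3
      exact mul_le_mul_of_nonneg_left
        (hbound x ⟨by linarith [hx.1], hx.2⟩) (by linarith)
    have hKi : IntervalIntegrable (fun t => K3 t * f''' t) volume c 1 := by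
      apply int3.continuousOn_mul
      rw [hK3]; fun_prop
    have hval : (∫ t in c..(1:ℝ), (1-t)^3/6 * M) = (1-c)^4/24 * M := by
      rw [ftc (fun t => -(1-t)^4/24 * M) (fun t => (1-t)^3/6 * M) c 1 ?_ (by fun_prop)]
      · ring_nf
      · intro x _
        have h : HasDerivAt (fun t : ℝ => -(1-t)^4/24 * M)
            ((-((4:ℕ) * (1-x)^3 * (0-1))/24) * M) x :=
          (((((hasDerivAt_const x (1:ℝ)).sub (hasDerivAt_id x)).pow 4).neg).div_const 24).mul_const M
        convert h using 1; push_cast; ring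
    calc |∫ t in c..(1:ℝ), K3 t * f''' t|
        ≤ ∫ t in c..(1:ℝ), |K3 t * f''' t| :=
          intervalIntegral.abs_integral_le_integral_abs (by linarith)
      _ ≤ ∫ t in c..(1:ℝ), (1-t)^3/6 * M :=
          intervalIntegral.integral_mono_on (by linarith) hKi.abs
            (Continuous.intervalIntegrable (by fun_prop) _ _) habs
      _ = (1-c)^4/24 * M := hval
  -- sign helper for K2
  have habs2 : ∀ x, -c ≤ x → x ≤ c → |K2 x| ≤ |x| * (c - 1/2 - x^2/6) := by
    intro x hx1 hx2
    have hx2' : x^2 ≤ c^2 := sq_le_sq' hx1 hx2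
    have hfac : 0 ≤ c - 1/2 - x^2/6 := by linarith [hx2', hcc, hc59]
    have hKx : K2 x = x * (c - 1/2 - x^2/6) := by rw [hK2]; ring
    rw [hKx, abs_mul, abs_of_nonneg hfac]
  -- piece 2b bound (on [0,c])
  have B2b : |∫ t in (0:ℝ)..c, K2 t * f''' t| ≤ (c/6 - 19/216) * M := by
    have habs : ∀ x ∈ Set.Icc (0:ℝ) c, |K2 x * f''' x| ≤ (-x^3/6 + (c-1/2)*x) * M := by
      intro x hx
      rw [abs_mul]
      have h1 : |K2 x| ≤ -x^3/6 + (c-1/2)*x := by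
        have h2 := habs2 x (by linarith [hx.1]) hx.2
        rw [abs_of_nonneg hx.1] at h2
        calc |K2 x| ≤ x * (c - 1/2 - x^2/6) := h2
          _ = -x^3/6 + (c-1/2)*x := by ring
      have hnn : (0:ℝ) ≤ -x^3/6 + (c-1/2)*x := le_trans (abs_nonneg _) h1
      exact mul_le_mul h1 (hbound x ⟨by linarith [hx.1], by linarith [hx.2]⟩)
        (abs_nonneg _) hnn
    have hKi : IntervalIntegrable (fun t => K2 t * f''' t) volume 0 c := by
      apply int2b.continuousOn_mul
      rw [hK2]; fun_prop
    have hval : (∫ t in (0:ℝ)..c, (-t^3/6 + (c-1/2)*t) * M) = (c/6 - 19/216) * M := by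
      rw [ftc (fun t => (-t^4/24 + (c-1/2)*t^2/2) * M)
        (fun t => (-t^3/6 + (c-1/2)*t) * M) 0 c ?_ (by fun_prop)]
      · have hc4 : c^4 = 1/9 := by
          rw [show c^4 = (c^2)^2 by ring, hcc]; norm_num
        linear_combination (M * (-1/24)) * hc4 + (M * (c/2 - 1/4)) * hcc
      · intro x _
        have h : HasDerivAt (fun t : ℝ => (-t^4/24 + (c-1/2)*t^2/2) * M)
            ((-((4:ℕ) * x^3 * 1)/24 + (c-1/2)*(((2:ℕ) * x^1 * 1))/2) * M) x := by
          apply HasDerivAt.mul_const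
          exact ((((hasDerivAt_id x).pow 4).neg).div_const 24).add
            ((((hasDerivAt_id x).pow 2).const_mul (c-1/2)).div_const 2)
        convert h using 1; push_cast; ring
    calc |∫ t in (0:ℝ)..c, K2 t * f''' t|
        ≤ ∫ t in (0:ℝ)..c, |K2 t * f''' t| :=
          intervalIntegral.abs_integral_le_integral_abs (by linarith)
      _ ≤ ∫ t in (0:ℝ)..c, (-t^3/6 + (c-1/2)*t) * M :=
          intervalIntegral.integral_mono_on (by linarith) hKi.abs
            (Continuous.intervalIntegrable (by fun_prop) _ _) habs
      _ = (c/6 - 19/216) * M := hval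
  -- piece 2a bound (on [-c,0])
  have B2a : |∫ t in (-c)..(0:ℝ), K2 t * f''' t| ≤ (c/6 - 19/216) * M := by
    have habs : ∀ x ∈ Set.Icc (-c) (0:ℝ), |K2 x * f''' x| ≤ (x^3/6 - (c-1/2)*x) * M := by
      intro x hx
      rw [abs_mul]
      have h1 : |K2 x| ≤ x^3/6 - (c-1/2)*x := by
        have h2 := habs2 x hx.1 (by linarith [hx.2])
        rw [abs_of_nonpos hx.2] at h2
        calc |K2 x| ≤ -x * (c - 1/2 - x^2/6) := h2
          _ = x^3/6 - (c-1/2)*x := by ring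
      have hnn : (0:ℝ) ≤ x^3/6 - (c-1/2)*x := le_trans (abs_nonneg _) h1
      exact mul_le_mul h1 (hbound x ⟨by linarith [hx.1], by linarith [hx.2]⟩)
        (abs_nonneg _) hnn
    have hKi : IntervalIntegrable (fun t => K2 t * f''' t) volume (-c) 0 := by
      apply int2a.continuousOn_mul
      rw [hK2]; fun_prop
    have hval : (∫ t in (-c)..(0:ℝ), (t^3/6 - (c-1/2)*t) * M) = (c/6 - 19/216) * M := by
      rw [ftc (fun t => (t^4/24 - (c-1/2)*t^2/2) * M)
        (fun t => (t^3/6 - (c-1/2)*t) * M) (-c) 0 ?_ (by fun_prop)]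
      · have hc4 : c^4 = 1/9 := by
          rw [show c^4 = (c^2)^2 by ring, hcc]; norm_num
        linear_combination (M * (-1/24)) * hc4 + (M * (c/2 - 1/4)) * hcc
      · intro x _
        have h : HasDerivAt (fun t : ℝ => (t^4/24 - (c-1/2)*t^2/2) * M)
            ((((4:ℕ) * x^3 * 1)/24 - (c-1/2)*(((2:ℕ) * x^1 * 1))/2) * M) x := by
          apply HasDerivAt.mul_const
          exact (((hasDerivAt_id x).pow 4).div_const 24).sub
            ((((hasDerivAt_id x).pow 2).const_mul (c-1/2)).div_const 2)
        convert h using 1; push_cast; ring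
    calc |∫ t in (-c)..(0:ℝ), K2 t * f''' t|
        ≤ ∫ t in (-c)..(0:ℝ), |K2 t * f''' t| :=
          intervalIntegral.abs_integral_le_integral_abs (by linarith)
      _ ≤ ∫ t in (-c)..(0:ℝ), (t^3/6 - (c-1/2)*t) * M :=
          intervalIntegral.integral_mono_on (by linarith) hKi.abs
            (Continuous.intervalIntegrable (by fun_prop) _ _) habs
      _ = (c/6 - 19/216) * M := hval
  -- final arithmetic
  have hcs : c = s/3 := by
    rw [hc, div_eq_div_iff hs0.ne' (by norm_num : (3:ℝ) ≠ 0)]; linarith [hs3]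
  have h4 : (1-c)^4 = (28 - 16*s)/9 := by
    rw [hcs]
    linear_combination (s^2/81 - 4*s/27 + 19/27) * hs3
  have hsum : 2 * ((1-c)^4/24 * M) + 2 * ((c/6 - 19/216) * M) = ((9 - 4*s)/108) * M := by
    rw [h4, hcs]; ring
  calc |(∫ t in (-1:ℝ)..1, f t) - (f (-c) + f c)|
      = |(∫ t in (-1:ℝ)..(-c), K1 t * f''' t) + (∫ t in (-c)..(0:ℝ), K2 t * f''' t)
        + (∫ t in (0:ℝ)..c, K2 t * f''' t) + (∫ t in c..(1:ℝ), K3 t * f''' t)| := by rw [key]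
    _ ≤ |(∫ t in (-1:ℝ)..(-c), K1 t * f''' t)| + |(∫ t in (-c)..(0:ℝ), K2 t * f''' t)|
        + |(∫ t in (0:ℝ)..c, K2 t * f''' t)| + |(∫ t in c..(1:ℝ), K3 t * f''' t)| :=
        by
        have h1 := abs_add_three
          ((∫ t in (-1:ℝ)..(-c), K1 t * f''' t) + (∫ t in (-c)..(0:ℝ), K2 t * f''' t))
          (∫ t in (0:ℝ)..c, K2 t * f''' t) (∫ t in c..(1:ℝ), K3 t * f''' t)
        have h2 := abs_add_le (∫ t in (-1:ℝ)..(-c), K1 t * f''' t)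
          (∫ t in (-c)..(0:ℝ), K2 t * f''' t)
        linarith
    _ ≤ (1-c)^4/24 * M + (c/6 - 19/216) * M + (c/6 - 19/216) * M + (1-c)^4/24 * M := by
        linarith [B1, B2a, B2b, B3]
    _ = ((9 - 4*s)/108) * M := by linarith [hsum]
end

section
/- (Radau two-point rule estimates, after Franjić) Let f : [-1,1] → ℝ be three times differentiable with |f'''(t)| ≤ M for all t ∈ [-1,1]. Then |∫_{-1}^1 f(t) dt - [(1/2) f(-1) + (3/2) f(1/3)]| ≤ (2/27) M. Moreover, if |f'(t)| ≤ M₀' on [-1,1] then the left-hand side is at most (25/36) M₀', and if |f''(t)| ≤ M₁' on [-1,1] then it is at most (1/6) M₁'. -/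
set_option maxHeartbeats 1600000
open MeasureTheory intervalIntegral Set

lemma radau_poly_hasDeriv (a0 a1 a2 a3 a4 : ℝ) (t : ℝ) :
    HasDerivAt (fun x : ℝ => a0 + a1*x + a2*x^2 + a3*x^3 + a4*x^4)
      (a1 + 2*a2*t + 3*a3*t^2 + 4*a4*t^3) t := by
  have h := ((((hasDerivAt_const t a0).add ((hasDerivAt_id t).const_mul a1)).add
      ((hasDerivAt_pow 2 t).const_mul a2)).add
      ((hasDerivAt_pow 3 t).const_mul a3)).add ((hasDerivAt_pow 4 t).const_mul a4)
  exact h.congr_deriv (by push_cast; ring)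

lemma radau_poly_integral (u v a0 a1 a2 a3 a4 : ℝ) (Q : ℝ → ℝ)
    (hQ : ∀ t, Q t = a1 + 2*a2*t + 3*a3*t^2 + 4*a4*t^3) :
    ∫ t in u..v, Q t = (a0 + a1*v + a2*v^2 + a3*v^3 + a4*v^4)
      - (a0 + a1*u + a2*u^2 + a3*u^3 + a4*u^4) := by
  have hQe : Q = fun t => a1 + 2*a2*t + 3*a3*t^2 + 4*a4*t^3 := funext hQ
  have hc : Continuous fun t : ℝ => a1 + 2*a2*t + 3*a3*t^2 + 4*a4*t^3 := by fun_prop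
  rw [hQe]
  exact integral_eq_sub_of_hasDerivAt (fun t _ => radau_poly_hasDeriv a0 a1 a2 a3 a4 t)
    (hc.intervalIntegrable u v)

lemma radau_parts (a b : ℝ) (hab : a ≤ b) (P P' g g' : ℝ → ℝ)
    (hP : ∀ t, HasDerivAt P (P' t) t)
    (hgc : ContinuousOn g (Icc a b))
    (hg : ∀ t ∈ Ioo a b, HasDerivAt g (g' t) t)
    (hint1 : IntervalIntegrable (fun t => P' t * g t) volume a b)
    (hint2 : IntervalIntegrable (fun t => P t * g' t) volume a b) :
    ∫ t in a..b, P t * g' t = P b * g b - P a * g a - ∫ t in a..b, P' t * g t := by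
  have hPc : Continuous P := continuous_iff_continuousAt.2 fun t => (hP t).continuousAt
  have key : ∫ t in a..b, (P' t * g t + P t * g' t) = P b * g b - P a * g a := by
    apply integral_eq_sub_of_hasDeriv_right_of_le hab (hPc.continuousOn.mul hgc)
    · intro t ht
      exact (((hP t).mul (hg t ht)).congr_deriv (by ring)).hasDerivWithinAt
    · exact hint1.add hint2
  rw [integral_add hint1 hint2] at key
  linarith

lemma radau_abs_int_le (u v C : ℝ) (huv : u ≤ v) (h Q : ℝ → ℝ)
    (hint : IntervalIntegrable h volume u v)
    (hintQ : IntervalIntegrable (fun t => Q t * C) volume u v)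
    (hb : ∀ t ∈ Icc u v, |h t| ≤ Q t * C) :
    |∫ t in u..v, h t| ≤ (∫ t in u..v, Q t) * C := by
  have h1 : |∫ t in u..v, h t| ≤ ∫ t in u..v, |h t| :=
    intervalIntegral.abs_integral_le_integral_abs huv
  have h2 : (∫ t in u..v, |h t|) ≤ ∫ t in u..v, Q t * C :=
    integral_mono_on huv hint.abs hintQ hb
  calc |∫ t in u..v, h t| ≤ ∫ t in u..v, Q t * C := le_trans h1 h2
    _ = (∫ t in u..v, Q t) * C := integral_mul_const C Q

theorem radau_two_point_estimates (M M₀' M₁' : ℝ) (f f' f'' f''' : ℝ → ℝ)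
    (hf : ∀ t ∈ Set.Icc (-1:ℝ) 1, HasDerivWithinAt f (f' t) (Set.Icc (-1) 1) t)
    (hf' : ∀ t ∈ Set.Icc (-1:ℝ) 1, HasDerivWithinAt f' (f'' t) (Set.Icc (-1) 1) t)
    (hf'' : ∀ t ∈ Set.Icc (-1:ℝ) 1, HasDerivWithinAt f'' (f''' t) (Set.Icc (-1) 1) t)
    (hbound : ∀ t ∈ Set.Icc (-1:ℝ) 1, |f''' t| ≤ M) :
    |(∫ t in (-1:ℝ)..1, f t) - ((1 / 2) * f (-1) + (3 / 2) * f (1 / 3))| ≤ (2 / 27) * M ∧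
    ((∀ t ∈ Set.Icc (-1:ℝ) 1, |f' t| ≤ M₀') →
      |(∫ t in (-1:ℝ)..1, f t) - ((1 / 2) * f (-1) + (3 / 2) * f (1 / 3))| ≤ (25 / 36) * M₀') ∧
    ((∀ t ∈ Set.Icc (-1:ℝ) 1, |f'' t| ≤ M₁') →
      |(∫ t in (-1:ℝ)..1, f t) - ((1 / 2) * f (-1) + (3 / 2) * f (1 / 3))| ≤ (1 / 6) * M₁') := by
  have hMnn : 0 ≤ M := le_trans (abs_nonneg _) (hbound 0 (by norm_num))
  -- continuity
  have hcf : ContinuousOn f (Icc (-1:ℝ) 1) := fun t ht => (hf t ht).continuousWithinAt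
  have hcf' : ContinuousOn f' (Icc (-1:ℝ) 1) := fun t ht => (hf' t ht).continuousWithinAt
  have hcf'' : ContinuousOn f'' (Icc (-1:ℝ) 1) := fun t ht => (hf'' t ht).continuousWithinAt
  -- interior derivatives
  have hfd : ∀ t ∈ Ioo (-1:ℝ) 1, HasDerivAt f (f' t) t := fun t ht =>
    (hf t (Ioo_subset_Icc_self ht)).hasDerivAt (Icc_mem_nhds ht.1 ht.2)
  have hfd' : ∀ t ∈ Ioo (-1:ℝ) 1, HasDerivAt f' (f'' t) t := fun t ht =>
    (hf' t (Ioo_subset_Icc_self ht)).hasDerivAt (Icc_mem_nhds ht.1 ht.2)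
  have hfd'' : ∀ t ∈ Ioo (-1:ℝ) 1, HasDerivAt f'' (f''' t) t := fun t ht =>
    (hf'' t (Ioo_subset_Icc_self ht)).hasDerivAt (Icc_mem_nhds ht.1 ht.2)
  -- integrability of continuous * continuous
  have hPi : ∀ (P : ℝ → ℝ), Continuous P → ∀ (g : ℝ → ℝ), ContinuousOn g (Icc (-1:ℝ) 1) →
      ∀ u v : ℝ, -1 ≤ u → u ≤ v → v ≤ 1 → IntervalIntegrable (fun t => P t * g t) volume u v := by
    intro P hP g hg u v h1 h2 h3
    apply ContinuousOn.intervalIntegrable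
    apply hP.continuousOn.mul (hg.mono ?_)
    rw [uIcc_of_le h2]
    exact Icc_subset_Icc h1 h3
  -- integrability of f'''
  have h3i : ∀ u v : ℝ, (-1:ℝ) ≤ u → u ≤ v → v ≤ 1 → IntervalIntegrable f''' volume u v := by
    intro u v h1 h2 h3
    have hsub : Set.uIoc u v ⊆ Icc (-1:ℝ) 1 := by
      rw [uIoc_of_le h2]
      exact subset_trans Ioc_subset_Icc_self (Icc_subset_Icc h1 h3)
    have hne : ∀ᵐ t ∂(volume.restrict (Set.uIoc u v)), t ∉ ({-1, 1} : Set ℝ) := by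
      apply ae_restrict_of_ae
      rw [← measure_eq_zero_iff_ae_notMem]
      exact (Set.toFinite _).measure_zero volume
    apply IntervalIntegrable.mono_fun' (g := fun _ => M) intervalIntegrable_const
    · apply ((measurable_deriv f'').aestronglyMeasurable).congr
      filter_upwards [hne, ae_restrict_mem measurableSet_uIoc] with t ht hmem
      have htI : t ∈ Ioo (-1:ℝ) 1 := by
        rcases hsub hmem with ⟨hl, hr⟩
        constructor
        · rcases eq_or_lt_of_le hl with h | h
          · exact absurd h.symm (by simp at ht; exact fun hc => ht.1 hc)
          · exact h
        · rcases eq_or_lt_of_le hr with h | h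
          · exact absurd h (by simp at ht; exact fun hc => ht.2 hc)
          · exact h
      exact (hfd'' t htI).deriv
    · filter_upwards [ae_restrict_mem measurableSet_uIoc] with t ht
      simp only [Real.norm_eq_abs]
      exact hbound t (hsub ht)
  have h3Pi : ∀ (P : ℝ → ℝ), Continuous P → ∀ u v : ℝ, (-1:ℝ) ≤ u → u ≤ v → v ≤ 1 →
      IntervalIntegrable (fun t => P t * f''' t) volume u v := fun P hP u v h1 h2 h3 =>
    IntervalIntegrable.continuousOn_mul (h3i u v h1 h2 h3) hP.continuousOn
  -- polynomial derivative facts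
  have hP1a : ∀ t : ℝ, HasDerivAt (fun x : ℝ => x + 1/2) 1 t := fun t => by
    simpa using (hasDerivAt_id t).add_const (1/2 : ℝ)
  have hP1b : ∀ t : ℝ, HasDerivAt (fun x : ℝ => x - 1) 1 t := fun t => by
    simpa using (hasDerivAt_id t).sub_const (1 : ℝ)
  have hP2a : ∀ t : ℝ, HasDerivAt (fun x : ℝ => x^2/2 + x/2) (t + 1/2) t := fun t => by
    have := ((hasDerivAt_pow 2 t).div_const 2).add ((hasDerivAt_id t).div_const 2)
    exact this.congr_deriv (by push_cast [id_eq]; ring)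
  have hP2b : ∀ t : ℝ, HasDerivAt (fun x : ℝ => (x-1)^2/2) (t - 1) t := fun t => by
    have := (((hasDerivAt_id' t).sub_const 1).pow 2).div_const 2
    exact this.congr_deriv (by push_cast [id_eq]; ring)
  have hP3a : ∀ t : ℝ, HasDerivAt (fun x : ℝ => x^3/6 + x^2/4 - 1/12) (t^2/2 + t/2) t := fun t => by
    have := (((hasDerivAt_pow 3 t).div_const 6).add ((hasDerivAt_pow 2 t).div_const 4)).sub_const (1/12)
    exact this.congr_deriv (by push_cast [id_eq]; ring)
  have hP3b : ∀ t : ℝ, HasDerivAt (fun x : ℝ => (x-1)^3/6) ((t-1)^2/2) t := fun t => by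
    have := ((((hasDerivAt_id' t).sub_const 1).pow 3).div_const 6)
    exact this.congr_deriv (by push_cast [id_eq]; ring)
  -- continuity of g's on the pieces
  have hca : ∀ (g : ℝ → ℝ), ContinuousOn g (Icc (-1:ℝ) 1) → ContinuousOn g (Icc (-1:ℝ) (1/3)) :=
    fun g hg => hg.mono (Icc_subset_Icc le_rfl (by norm_num))
  have hcb : ∀ (g : ℝ → ℝ), ContinuousOn g (Icc (-1:ℝ) 1) → ContinuousOn g (Icc (1/3:ℝ) 1) :=
    fun g hg => hg.mono (Icc_subset_Icc (by norm_num) le_rfl)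
  have hda : ∀ (g g' : ℝ → ℝ), (∀ t ∈ Ioo (-1:ℝ) 1, HasDerivAt g (g' t) t) →
      ∀ t ∈ Ioo (-1:ℝ) (1/3), HasDerivAt g (g' t) t := fun g g' hg t ht =>
    hg t ⟨ht.1, by linarith [ht.2]⟩
  have hdb : ∀ (g g' : ℝ → ℝ), (∀ t ∈ Ioo (-1:ℝ) 1, HasDerivAt g (g' t) t) →
      ∀ t ∈ Ioo (1/3:ℝ) 1, HasDerivAt g (g' t) t := fun g g' hg t ht =>
    hg t ⟨by linarith [ht.1], ht.2⟩
  -- integration by parts chain, piece a = [-1, 1/3]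
  have h1a := radau_parts (-1) (1/3) (by norm_num) (fun t => t + 1/2) (fun _ => 1) f f'
    hP1a (hca f hcf) (hda f f' hfd)
    (hPi _ continuous_const f hcf (-1) (1/3) le_rfl (by norm_num) (by norm_num))
    (hPi _ (by fun_prop) f' hcf' (-1) (1/3) le_rfl (by norm_num) (by norm_num))
  have h2a := radau_parts (-1) (1/3) (by norm_num) (fun t => t^2/2 + t/2) (fun t => t + 1/2) f' f''
    hP2a (hca f' hcf') (hda f' f'' hfd')
    (hPi _ (by fun_prop) f' hcf' (-1) (1/3) le_rfl (by norm_num) (by norm_num))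
    (hPi _ (by fun_prop) f'' hcf'' (-1) (1/3) le_rfl (by norm_num) (by norm_num))
  have h3a := radau_parts (-1) (1/3) (by norm_num) (fun t => t^3/6 + t^2/4 - 1/12)
    (fun t => t^2/2 + t/2) f'' f'''
    hP3a (hca f'' hcf'') (hda f'' f''' hfd'')
    (hPi _ (by fun_prop) f'' hcf'' (-1) (1/3) le_rfl (by norm_num) (by norm_num))
    (h3Pi _ (by fun_prop) (-1) (1/3) le_rfl (by norm_num) (by norm_num))
  -- piece b = [1/3, 1]
  have h1b := radau_parts (1/3) 1 (by norm_num) (fun t => t - 1) (fun _ => 1) f f'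
    hP1b (hcb f hcf) (hdb f f' hfd)
    (hPi _ continuous_const f hcf (1/3) 1 (by norm_num) (by norm_num) le_rfl)
    (hPi _ (by fun_prop) f' hcf' (1/3) 1 (by norm_num) (by norm_num) le_rfl)
  have h2b := radau_parts (1/3) 1 (by norm_num) (fun t => (t-1)^2/2) (fun t => t - 1) f' f''
    hP2b (hcb f' hcf') (hdb f' f'' hfd')
    (hPi _ (by fun_prop) f' hcf' (1/3) 1 (by norm_num) (by norm_num) le_rfl)
    (hPi _ (by fun_prop) f'' hcf'' (1/3) 1 (by norm_num) (by norm_num) le_rfl)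
  have h3b := radau_parts (1/3) 1 (by norm_num) (fun t => (t-1)^3/6) (fun t => (t-1)^2/2) f'' f'''
    hP3b (hcb f'' hcf'') (hdb f'' f''' hfd'')
    (hPi _ (by fun_prop) f'' hcf'' (1/3) 1 (by norm_num) (by norm_num) le_rfl)
    (h3Pi _ (by fun_prop) (1/3) 1 (by norm_num) (by norm_num) le_rfl)
  beta_reduce at h1a h2a h3a h1b h2b h3b
  simp only [one_mul] at h1a h1b
  -- integrability of f on pieces
  have hfint : ∀ u v : ℝ, -1 ≤ u → u ≤ v → v ≤ 1 → IntervalIntegrable f volume u v := by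
    intro u v h1 h2 h3
    apply ContinuousOn.intervalIntegrable
    apply hcf.mono
    rw [uIcc_of_le h2]
    exact Icc_subset_Icc h1 h3
  have hsplitf : (∫ t in (-1:ℝ)..1, f t) = (∫ t in (-1:ℝ)..(1/3), f t) + ∫ t in (1/3:ℝ)..1, f t :=
    (integral_add_adjacent_intervals (hfint (-1) (1/3) le_rfl (by norm_num) (by norm_num))
      (hfint (1/3) 1 (by norm_num) (by norm_num) le_rfl)).symm
  have hs1 : (∫ t in (-1:ℝ)..(1/3), (t + 1/2) * f' t)
      = (∫ t in (-1:ℝ)..(-1/2), (t + 1/2) * f' t) + ∫ t in (-1/2:ℝ)..(1/3), (t + 1/2) * f' t :=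
    (integral_add_adjacent_intervals
      (hPi _ (by fun_prop) f' hcf' (-1) (-1/2) le_rfl (by norm_num) (by norm_num))
      (hPi _ (by fun_prop) f' hcf' (-1/2) (1/3) (by norm_num) (by norm_num) (by norm_num))).symm
  have hs2 : (∫ t in (-1:ℝ)..(1/3), (t^2/2 + t/2) * f'' t)
      = (∫ t in (-1:ℝ)..0, (t^2/2 + t/2) * f'' t) + ∫ t in (0:ℝ)..(1/3), (t^2/2 + t/2) * f'' t :=
    (integral_add_adjacent_intervals
      (hPi _ (by fun_prop) f'' hcf'' (-1) 0 le_rfl (by norm_num) (by norm_num))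
      (hPi _ (by fun_prop) f'' hcf'' 0 (1/3) (by norm_num) (by norm_num) (by norm_num))).symm
  -- a generic bound
  have radau_bound : ∀ (u v C : ℝ) (P Q g : ℝ → ℝ), u ≤ v → 0 ≤ C →
      IntervalIntegrable (fun t => P t * g t) volume u v →
      IntervalIntegrable (fun t => Q t * C) volume u v →
      (∀ t ∈ Icc u v, |P t| ≤ Q t) → (∀ t ∈ Icc u v, |g t| ≤ C) →
      |∫ t in u..v, P t * g t| ≤ (∫ t in u..v, Q t) * C := by
    intro u v C P Q g huv hC hint hintQ habs hg
    refine radau_abs_int_le u v C huv _ Q hint hintQ (fun t ht => ?_)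
    rw [abs_mul]
    exact mul_le_mul (habs t ht) (hg t ht) (abs_nonneg _) (le_trans (abs_nonneg _) (habs t ht))
  -- computed kernel integrals
  have q1 : (∫ t in (-1:ℝ)..(-1/2), (-(t + 1/2))) = 1/8 := by
    rw [radau_poly_integral (-1) (-1/2) 0 (-1/2) (-1/2) 0 0 _ (fun t => by ring)]; norm_num
  have q2 : (∫ t in (-1/2:ℝ)..(1/3), (t + 1/2)) = 25/72 := by
    rw [radau_poly_integral (-1/2) (1/3) 0 (1/2) (1/2) 0 0 _ (fun t => by ring)]; norm_num
  have q3 : (∫ t in (1/3:ℝ)..1, (-(t - 1))) = 2/9 := by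
    rw [radau_poly_integral (1/3) 1 0 1 (-1/2) 0 0 _ (fun t => by ring)]; norm_num
  have q4 : (∫ t in (-1:ℝ)..0, (-(t^2/2 + t/2))) = 1/12 := by
    rw [radau_poly_integral (-1) 0 0 0 (-1/4) (-1/6) 0 _ (fun t => by ring)]; norm_num
  have q5 : (∫ t in (0:ℝ)..(1/3), (t^2/2 + t/2)) = 11/324 := by
    rw [radau_poly_integral 0 (1/3) 0 0 (1/4) (1/6) 0 _ (fun t => by ring)]; norm_num
  have q6 : (∫ t in (1/3:ℝ)..1, ((t-1)^2/2)) = 4/81 := by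
    rw [radau_poly_integral (1/3) 1 0 (1/2) (-1/2) (1/6) 0 _ (fun t => by ring)]; norm_num
  have q7 : (∫ t in (-1:ℝ)..(1/3), (-(t^3/6 + t^2/4 - 1/12))) = 16/243 := by
    rw [radau_poly_integral (-1) (1/3) 0 (1/12) 0 (-1/12) (-1/24) _ (fun t => by ring)]; norm_num
  have q8 : (∫ t in (1/3:ℝ)..1, (-((t-1)^3/6))) = 2/243 := by
    rw [radau_poly_integral (1/3) 1 0 (1/6) (-1/4) (1/6) (-1/24) _ (fun t => by ring)]; norm_num
  refine ⟨?_, ?_, ?_⟩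
  · -- third-derivative bound
    have b1 : |∫ t in (-1:ℝ)..(1/3), (t^3/6 + t^2/4 - 1/12) * f''' t|
        ≤ (∫ t in (-1:ℝ)..(1/3), (-(t^3/6 + t^2/4 - 1/12))) * M := by
      refine radau_bound _ _ _ _ _ _ (by norm_num) hMnn
        (h3Pi _ (by fun_prop) (-1) (1/3) le_rfl (by norm_num) (by norm_num))
        (Continuous.intervalIntegrable (by fun_prop) _ _) ?_ ?_
      · intro t ht
        rw [abs_of_nonpos (by nlinarith [mul_nonneg (sq_nonneg (t+1)) (show (0:ℝ) ≤ 1 - 2*t by linarith [ht.2])])]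
      · intro t ht
        exact hbound t ⟨ht.1, by linarith [ht.2]⟩
    have b2 : |∫ t in (1/3:ℝ)..1, ((t-1)^3/6) * f''' t|
        ≤ (∫ t in (1/3:ℝ)..1, (-((t-1)^3/6))) * M := by
      refine radau_bound _ _ _ _ _ _ (by norm_num) hMnn
        (h3Pi _ (by fun_prop) (1/3) 1 (by norm_num) (by norm_num) le_rfl)
        (Continuous.intervalIntegrable (by fun_prop) _ _) ?_ ?_
      · intro t ht
        rw [abs_of_nonpos (by nlinarith [mul_nonneg (sq_nonneg (t-1)) (show (0:ℝ) ≤ 1 - t by linarith [ht.2])])]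
      · intro t ht
        exact hbound t ⟨by linarith [ht.1], ht.2⟩
    rw [q7] at b1; rw [q8] at b2
    have e3 : (∫ t in (-1:ℝ)..1, f t) - ((1 / 2) * f (-1) + (3 / 2) * f (1 / 3))
        = -((∫ t in (-1:ℝ)..(1/3), (t^3/6 + t^2/4 - 1/12) * f''' t)
          + ∫ t in (1/3:ℝ)..1, ((t-1)^3/6) * f''' t) := by
      linear_combination h3a + h3b - h2a - h2b + h1a + h1b + hsplitf
    rw [e3, abs_neg]
    calc |(∫ t in (-1:ℝ)..(1/3), (t^3/6 + t^2/4 - 1/12) * f''' t)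
          + ∫ t in (1/3:ℝ)..1, ((t-1)^3/6) * f''' t|
        ≤ |∫ t in (-1:ℝ)..(1/3), (t^3/6 + t^2/4 - 1/12) * f''' t|
          + |∫ t in (1/3:ℝ)..1, ((t-1)^3/6) * f''' t| := abs_add_le _ _
      _ ≤ 16/243 * M + 2/243 * M := by linarith [b1, b2]
      _ = 2/27 * M := by ring
  · -- first-derivative bound
    intro hM0
    have hM0nn : 0 ≤ M₀' := le_trans (abs_nonneg _) (hM0 0 (by norm_num))
    have b1 : |∫ t in (-1:ℝ)..(-1/2), (t + 1/2) * f' t|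
        ≤ (∫ t in (-1:ℝ)..(-1/2), (-(t + 1/2))) * M₀' := by
      refine radau_bound _ _ _ _ _ _ (by norm_num) hM0nn
        (hPi _ (by fun_prop) f' hcf' (-1) (-1/2) le_rfl (by norm_num) (by norm_num))
        (Continuous.intervalIntegrable (by fun_prop) _ _) ?_ ?_
      · intro t ht
        rw [abs_of_nonpos (by linarith [ht.2])]
      · intro t ht
        exact hM0 t ⟨ht.1, by linarith [ht.2]⟩
    have b2 : |∫ t in (-1/2:ℝ)..(1/3), (t + 1/2) * f' t|
        ≤ (∫ t in (-1/2:ℝ)..(1/3), (t + 1/2)) * M₀' := by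
      refine radau_bound _ _ _ _ _ _ (by norm_num) hM0nn
        (hPi _ (by fun_prop) f' hcf' (-1/2) (1/3) (by norm_num) (by norm_num) (by norm_num))
        (Continuous.intervalIntegrable (by fun_prop) _ _) ?_ ?_
      · intro t ht
        rw [abs_of_nonneg (by linarith [ht.1])]
      · intro t ht
        exact hM0 t ⟨by linarith [ht.1], by linarith [ht.2]⟩
    have b3 : |∫ t in (1/3:ℝ)..1, (t - 1) * f' t|
        ≤ (∫ t in (1/3:ℝ)..1, (-(t - 1))) * M₀' := by
      refine radau_bound _ _ _ _ _ _ (by norm_num) hM0nn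
        (hPi _ (by fun_prop) f' hcf' (1/3) 1 (by norm_num) (by norm_num) le_rfl)
        (Continuous.intervalIntegrable (by fun_prop) _ _) ?_ ?_
      · intro t ht
        rw [abs_of_nonpos (by linarith [ht.2])]
      · intro t ht
        exact hM0 t ⟨by linarith [ht.1], ht.2⟩
    rw [q1] at b1; rw [q2] at b2; rw [q3] at b3
    have e1 : (∫ t in (-1:ℝ)..1, f t) - ((1 / 2) * f (-1) + (3 / 2) * f (1 / 3))
        = -(((∫ t in (-1:ℝ)..(-1/2), (t + 1/2) * f' t)
          + ∫ t in (-1/2:ℝ)..(1/3), (t + 1/2) * f' t)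
          + ∫ t in (1/3:ℝ)..1, (t - 1) * f' t) := by
      linear_combination h1a + h1b + hsplitf - hs1
    rw [e1, abs_neg]
    calc |((∫ t in (-1:ℝ)..(-1/2), (t + 1/2) * f' t)
          + ∫ t in (-1/2:ℝ)..(1/3), (t + 1/2) * f' t)
          + ∫ t in (1/3:ℝ)..1, (t - 1) * f' t|
        ≤ |(∫ t in (-1:ℝ)..(-1/2), (t + 1/2) * f' t)
          + ∫ t in (-1/2:ℝ)..(1/3), (t + 1/2) * f' t|
          + |∫ t in (1/3:ℝ)..1, (t - 1) * f' t| := abs_add_le _ _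
      _ ≤ (|∫ t in (-1:ℝ)..(-1/2), (t + 1/2) * f' t|
          + |∫ t in (-1/2:ℝ)..(1/3), (t + 1/2) * f' t|)
          + |∫ t in (1/3:ℝ)..1, (t - 1) * f' t| := by
            gcongr
            exact abs_add_le _ _
      _ ≤ (1/8 * M₀' + 25/72 * M₀') + 2/9 * M₀' := by linarith [b1, b2, b3]
      _ = 25/36 * M₀' := by ring
  · -- second-derivative bound
    intro hM1
    have hM1nn : 0 ≤ M₁' := le_trans (abs_nonneg _) (hM1 0 (by norm_num))
    have b1 : |∫ t in (-1:ℝ)..0, (t^2/2 + t/2) * f'' t|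
        ≤ (∫ t in (-1:ℝ)..0, (-(t^2/2 + t/2))) * M₁' := by
      refine radau_bound _ _ _ _ _ _ (by norm_num) hM1nn
        (hPi _ (by fun_prop) f'' hcf'' (-1) 0 le_rfl (by norm_num) (by norm_num))
        (Continuous.intervalIntegrable (by fun_prop) _ _) ?_ ?_
      · intro t ht
        rw [abs_of_nonpos (by nlinarith [ht.1, ht.2])]
      · intro t ht
        exact hM1 t ⟨ht.1, by linarith [ht.2]⟩
    have b2 : |∫ t in (0:ℝ)..(1/3), (t^2/2 + t/2) * f'' t|
        ≤ (∫ t in (0:ℝ)..(1/3), (t^2/2 + t/2)) * M₁' := by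
      refine radau_bound _ _ _ _ _ _ (by norm_num) hM1nn
        (hPi _ (by fun_prop) f'' hcf'' 0 (1/3) (by norm_num) (by norm_num) (by norm_num))
        (Continuous.intervalIntegrable (by fun_prop) _ _) ?_ ?_
      · intro t ht
        rw [abs_of_nonneg (by nlinarith [ht.1, ht.2])]
      · intro t ht
        exact hM1 t ⟨by linarith [ht.1], by linarith [ht.2]⟩
    have b3 : |∫ t in (1/3:ℝ)..1, ((t-1)^2/2) * f'' t|
        ≤ (∫ t in (1/3:ℝ)..1, ((t-1)^2/2)) * M₁' := by
      refine radau_bound _ _ _ _ _ _ (by norm_num) hM1nn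
        (hPi _ (by fun_prop) f'' hcf'' (1/3) 1 (by norm_num) (by norm_num) le_rfl)
        (Continuous.intervalIntegrable (by fun_prop) _ _) ?_ ?_
      · intro t ht
        rw [abs_of_nonneg (by positivity)]
      · intro t ht
        exact hM1 t ⟨by linarith [ht.1], ht.2⟩
    rw [q4] at b1; rw [q5] at b2; rw [q6] at b3
    have e2 : (∫ t in (-1:ℝ)..1, f t) - ((1 / 2) * f (-1) + (3 / 2) * f (1 / 3))
        = ((∫ t in (-1:ℝ)..0, (t^2/2 + t/2) * f'' t)
          + ∫ t in (0:ℝ)..(1/3), (t^2/2 + t/2) * f'' t)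
          + ∫ t in (1/3:ℝ)..1, ((t-1)^2/2) * f'' t := by
      linear_combination -h2a - h2b + h1a + h1b + hsplitf + hs2
    rw [e2]
    calc |((∫ t in (-1:ℝ)..0, (t^2/2 + t/2) * f'' t)
          + ∫ t in (0:ℝ)..(1/3), (t^2/2 + t/2) * f'' t)
          + ∫ t in (1/3:ℝ)..1, ((t-1)^2/2) * f'' t|
        ≤ |(∫ t in (-1:ℝ)..0, (t^2/2 + t/2) * f'' t)
          + ∫ t in (0:ℝ)..(1/3), (t^2/2 + t/2) * f'' t|
          + |∫ t in (1/3:ℝ)..1, ((t-1)^2/2) * f'' t| := abs_add_le _ _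
      _ ≤ (|∫ t in (-1:ℝ)..0, (t^2/2 + t/2) * f'' t|
          + |∫ t in (0:ℝ)..(1/3), (t^2/2 + t/2) * f'' t|)
          + |∫ t in (1/3:ℝ)..1, ((t-1)^2/2) * f'' t| := by
            gcongr
            exact abs_add_le _ _
      _ ≤ (1/12 * M₁' + 11/324 * M₁') + 4/81 * M₁' := by linarith [b1, b2, b3]
      _ = 1/6 * M₁' := by ring
end

section
/- (Alomari's general two-point inequality) Let -1 ≤ x ≤ λ ≤ y ≤ 1 and let f : [-1,1] → ℝ be differentiable with |f'(t)| ≤ M for all t ∈ [-1,1]. Then |∫_{-1}^1 f(t) dt - [(1+λ) f(x) + (1-λ) f(y)]| ≤ { (1/4)[(1-λ)² + (1+λ)²] + (x + (1-λ)/2)² + (y - (1+λ)/2)² } M. -/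
open MeasureTheory intervalIntegral Set

lemma alomari_key (M p a b : ℝ) (hap : a ≤ p) (hpb : p ≤ b) (hM : 0 ≤ M)
    (f : ℝ → ℝ) (hcont : ContinuousOn f (Set.Icc a b))
    (hlip : ∀ t ∈ Set.Icc a b, |f t - f p| ≤ M * |t - p|) :
    |∫ t in a..b, (f t - f p)| ≤ M * ((p - a) ^ 2 + (b - p) ^ 2) / 2 := by
  have hab : a ≤ b := hap.trans hpb
  have hg : IntervalIntegrable (fun t => M * |t - p|) volume a b := by
    apply Continuous.intervalIntegrable
    continuity
  have hbnd : ∀ᵐ t ∂(volume.restrict (Set.uIoc a b)), ‖f t - f p‖ ≤ M * |t - p| := by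
    refine ae_restrict_of_forall_mem measurableSet_uIoc fun t ht => ?_
    rw [Set.uIoc_of_le hab] at ht
    exact hlip t ⟨ht.1.le, ht.2⟩
  have hmain := intervalIntegral.norm_integral_le_abs_of_norm_le (μ := volume)
    (f := fun t => f t - f p) (a := a) (b := b) hbnd hg
  have h1 : (∫ t in a..p, M * |t - p|) = M * (p - a) ^ 2 / 2 := by
    have e1 : (∫ t in a..p, M * |t - p|) = ∫ t in a..p, M * (p - t) := by
      refine intervalIntegral.integral_congr fun t ht => ?_
      rw [Set.uIcc_of_le hap] at ht
      rw [abs_of_nonpos (by linarith [ht.2])]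
      ring
    rw [e1]
    have : (∫ t in a..p, M * (p - t)) = M * ∫ t in a..p, (p - t) :=
      intervalIntegral.integral_const_mul _ _
    rw [this, intervalIntegral.integral_sub intervalIntegrable_const
      intervalIntegral.intervalIntegrable_id, integral_id, intervalIntegral.integral_const]
    simp only [smul_eq_mul]
    ring
  have h2 : (∫ t in p..b, M * |t - p|) = M * (b - p) ^ 2 / 2 := by
    have e1 : (∫ t in p..b, M * |t - p|) = ∫ t in p..b, M * (t - p) := by
      refine intervalIntegral.integral_congr fun t ht => ?_
      rw [Set.uIcc_of_le hpb] at ht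
      rw [abs_of_nonneg (by linarith [ht.1])]
    rw [e1]
    have : (∫ t in p..b, M * (t - p)) = M * ∫ t in p..b, (t - p) :=
      intervalIntegral.integral_const_mul _ _
    rw [this, intervalIntegral.integral_sub intervalIntegral.intervalIntegrable_id
      intervalIntegrable_const, integral_id, intervalIntegral.integral_const]
    simp only [smul_eq_mul]
    ring
  have hsplit : (∫ t in a..b, M * |t - p|) = M * ((p - a) ^ 2 + (b - p) ^ 2) / 2 := by
    rw [← intervalIntegral.integral_add_adjacent_intervals (b := p)
      (hg.mono_set (by rw [Set.uIcc_of_le hap, Set.uIcc_of_le hab]; exact Set.Icc_subset_Icc_right hpb))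
      (hg.mono_set (by rw [Set.uIcc_of_le hpb, Set.uIcc_of_le hab]; exact Set.Icc_subset_Icc_left hap)),
      h1, h2]
    ring
  have habs : abs (∫ t in a..b, M * |t - p|) = M * ((p - a) ^ 2 + (b - p) ^ 2) / 2 := by
    rw [hsplit, abs_of_nonneg]
    positivity
  rw [← Real.norm_eq_abs]
  exact hmain.trans habs.le

theorem alomari_general_two_point (M lam x y : ℝ)
    (hx : -1 ≤ x) (hxl : x ≤ lam) (hly : lam ≤ y) (hy : y ≤ 1)
    (f f' : ℝ → ℝ)
    (hf : ∀ t ∈ Set.Icc (-1:ℝ) 1, HasDerivWithinAt f (f' t) (Set.Icc (-1) 1) t)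
    (hbound : ∀ t ∈ Set.Icc (-1:ℝ) 1, |f' t| ≤ M) :
    |(∫ t in (-1:ℝ)..1, f t) - ((1 + lam) * f x + (1 - lam) * f y)| ≤
      ((1 / 4) * ((1 - lam) ^ 2 + (1 + lam) ^ 2) +
        (x + (1 - lam) / 2) ^ 2 + (y - (1 + lam) / 2) ^ 2) * M := by
  have hM : 0 ≤ M := (abs_nonneg _).trans (hbound 0 (by norm_num))
  have hcont : ContinuousOn f (Set.Icc (-1:ℝ) 1) := fun t ht =>
    (hf t ht).continuousWithinAt
  have hlip : ∀ s ∈ Set.Icc (-1:ℝ) 1, ∀ t ∈ Set.Icc (-1:ℝ) 1,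
      |f t - f s| ≤ M * |t - s| := by
    intro s hs t ht
    have := Convex.norm_image_sub_le_of_norm_hasDerivWithin_le hf
      (fun u hu => by rw [Real.norm_eq_abs]; exact hbound u hu)
      (convex_Icc _ _) hs ht
    simpa [Real.norm_eq_abs] using this
  have hxm : x ∈ Set.Icc (-1:ℝ) 1 := ⟨hx, hxl.trans (hly.trans hy)⟩
  have hym : y ∈ Set.Icc (-1:ℝ) 1 := ⟨hx.trans (hxl.trans hly), hy⟩
  have hlm : lam ∈ Set.Icc (-1:ℝ) 1 := ⟨hx.trans hxl, hly.trans hy⟩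
  -- integrability of f on subintervals
  have hint : ∀ a b : ℝ, -1 ≤ a → b ≤ 1 → a ≤ b → IntervalIntegrable f volume a b := by
    intro a b ha hb hab
    have hsub : Set.uIcc a b ⊆ Set.Icc (-1:ℝ) 1 := by
      rw [Set.uIcc_of_le hab]
      exact Set.Icc_subset_Icc ha hb
    exact (hcont.mono hsub).intervalIntegrable
  have hi1 : IntervalIntegrable f volume (-1) lam := hint _ _ le_rfl hlm.2 hlm.1
  have hi2 : IntervalIntegrable f volume lam 1 := hint _ _ hlm.1 le_rfl hlm.2
  have hsplit : (∫ t in (-1:ℝ)..1, f t) =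
      (∫ t in (-1:ℝ)..lam, f t) + ∫ t in lam..(1:ℝ), f t :=
    (intervalIntegral.integral_add_adjacent_intervals hi1 hi2).symm
  have hE1 : (∫ t in (-1:ℝ)..lam, (f t - f x)) =
      (∫ t in (-1:ℝ)..lam, f t) - (1 + lam) * f x := by
    rw [intervalIntegral.integral_sub hi1 intervalIntegrable_const,
      intervalIntegral.integral_const]
    simp only [smul_eq_mul]
    try ring
  have hE2 : (∫ t in lam..(1:ℝ), (f t - f y)) =
      (∫ t in lam..(1:ℝ), f t) - (1 - lam) * f y := by
    rw [intervalIntegral.integral_sub hi2 intervalIntegrable_const,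
      intervalIntegral.integral_const]
    simp only [smul_eq_mul]
    try ring
  have key1 := alomari_key M x (-1) lam hx hxl hM f
    (hcont.mono (Set.Icc_subset_Icc le_rfl hlm.2)) (fun t ht =>
      hlip x hxm t ⟨ht.1, ht.2.trans hlm.2⟩)
  have key2 := alomari_key M y lam 1 hly hy hM f
    (hcont.mono (Set.Icc_subset_Icc hlm.1 le_rfl)) (fun t ht =>
      hlip y hym t ⟨hlm.1.trans ht.1, ht.2⟩)
  have heq : (∫ t in (-1:ℝ)..1, f t) - ((1 + lam) * f x + (1 - lam) * f y) =
      (∫ t in (-1:ℝ)..lam, (f t - f x)) + ∫ t in lam..(1:ℝ), (f t - f y) := by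
    rw [hE1, hE2, hsplit]; ring
  rw [heq]
  calc |(∫ t in (-1:ℝ)..lam, (f t - f x)) + ∫ t in lam..(1:ℝ), (f t - f y)|
      ≤ |∫ t in (-1:ℝ)..lam, (f t - f x)| + |∫ t in lam..(1:ℝ), (f t - f y)| :=
        abs_add_le _ _
    _ ≤ M * ((x - (-1)) ^ 2 + (lam - x) ^ 2) / 2 +
        M * ((y - lam) ^ 2 + (1 - y) ^ 2) / 2 := add_le_add key1 key2
    _ = ((1 / 4) * ((1 - lam) ^ 2 + (1 + lam) ^ 2) +
        (x + (1 - lam) / 2) ^ 2 + (y - (1 + lam) / 2) ^ 2) * M := by ring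
end

section
/- (Four-point symmetric inequality of Alomari) Let λ ∈ (0,1), let 0 ≤ x ≤ 1, and let f : [-1,1] → ℝ be differentiable with |f'(t)| ≤ M for all t ∈ [-1,1]. Then |∫_{-1}^1 f(t) dt - λ[f(-1) + f(1)] - (1-λ)[f(-x) + f(x)]| ≤ M₀(x) M, where M₀(x) = λ² + x² + (1 - λ - x)² for 0 ≤ x ≤ 1 - λ, and M₀(x) = 2x(1-λ) + 2λ - 1 for 1 - λ < x ≤ 1. -/
open MeasureTheory intervalIntegral Set

lemma il_abs (a b c : ℝ) : IntervalIntegrable (fun t => |t - c|) volume a b :=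
  (continuous_abs.comp (continuous_id.sub continuous_const)).intervalIntegrable a b

lemma int_lin (a b c : ℝ) : ∫ t in a..b, (t - c) = (b^2 - a^2)/2 - c*(b-a) := by
  rw [intervalIntegral.integral_sub intervalIntegrable_id intervalIntegrable_const,
    integral_id, intervalIntegral.integral_const]
  simp; ring

lemma int_abs_le (a b c : ℝ) (hca : c ≤ a) (hab : a ≤ b) :
    ∫ t in a..b, |t - c| = ((b - c)^2 - (a - c)^2)/2 := by
  rw [intervalIntegral.integral_congr (g := fun t => t - c) ?_, int_lin]
  · ring
  · intro t ht
    rw [uIcc_of_le hab] at ht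
    exact abs_of_nonneg (by linarith [ht.1])

lemma int_abs_ge (a b c : ℝ) (hbc : b ≤ c) (hab : a ≤ b) :
    ∫ t in a..b, |t - c| = ((c - a)^2 - (c - b)^2)/2 := by
  rw [intervalIntegral.integral_congr (g := fun t => -(t - c)) ?_]
  · rw [intervalIntegral.integral_neg, int_lin]; ring
  · intro t ht
    rw [uIcc_of_le hab] at ht
    exact abs_of_nonpos (by linarith [ht.2])

lemma int_abs_mem (a b c : ℝ) (hac : a ≤ c) (hcb : c ≤ b) :
    ∫ t in a..b, |t - c| = (c - a)^2/2 + (b - c)^2/2 := by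
  rw [← intervalIntegral.integral_add_adjacent_intervals (il_abs a c c) (il_abs c b c),
    int_abs_ge a c c le_rfl hac, int_abs_le c b c le_rfl hcb]
  ring

theorem alomari_four_point_symmetric (M lam x : ℝ)
    (hlam : lam ∈ Set.Ioo (0:ℝ) 1) (hx : x ∈ Set.Icc (0:ℝ) 1)
    (f f' : ℝ → ℝ)
    (hf : ∀ t ∈ Set.Icc (-1:ℝ) 1, HasDerivWithinAt f (f' t) (Set.Icc (-1) 1) t)
    (hbound : ∀ t ∈ Set.Icc (-1:ℝ) 1, |f' t| ≤ M) :
    |(∫ t in (-1:ℝ)..1, f t) - lam * (f (-1) + f 1) - (1 - lam) * (f (-x) + f x)| ≤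
      (if x ≤ 1 - lam then lam ^ 2 + x ^ 2 + (1 - lam - x) ^ 2
        else 2 * x * (1 - lam) + 2 * lam - 1) * M := by
  obtain ⟨hl0, hl1⟩ := hlam
  obtain ⟨hx0, hx1⟩ := hx
  have hM : 0 ≤ M := le_trans (abs_nonneg _) (hbound 0 (by norm_num))
  have hcont : ContinuousOn f (Icc (-1:ℝ) 1) := fun t ht => (hf t ht).continuousWithinAt
  have hlip : ∀ c ∈ Icc (-1:ℝ) 1, ∀ t ∈ Icc (-1:ℝ) 1, |f t - f c| ≤ M * |t - c| := by
    intro c hc t ht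
    have := (convex_Icc (-1:ℝ) 1).norm_image_sub_le_of_norm_hasDerivWithin_le
      hf (fun y hy => by simpa using hbound y hy) hc ht
    simpa [Real.norm_eq_abs] using this
  have hintf : ∀ a b : ℝ, -1 ≤ a → a ≤ b → b ≤ 1 → IntervalIntegrable f volume a b :=
    fun a b ha hab hb =>
      (hcont.mono (by rw [uIcc_of_le hab]; exact Icc_subset_Icc ha hb)).intervalIntegrable
  -- key piecewise bound
  have key : ∀ a b c : ℝ, -1 ≤ a → a ≤ b → b ≤ 1 → c ∈ Icc (-1:ℝ) 1 →
      |∫ t in a..b, (f t - f c)| ≤ M * ∫ t in a..b, |t - c| := by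
    intro a b c ha hab hb hc
    have hsub : Icc a b ⊆ Icc (-1:ℝ) 1 := Icc_subset_Icc ha hb
    have h1 : IntervalIntegrable (fun t => f t - f c) volume a b :=
      (hintf a b ha hab hb).sub intervalIntegrable_const
    calc |∫ t in a..b, (f t - f c)| ≤ ∫ t in a..b, |f t - f c| :=
          intervalIntegral.abs_integral_le_integral_abs hab
      _ ≤ ∫ t in a..b, M * |t - c| := by
          apply intervalIntegral.integral_mono_on hab h1.abs
            ((il_abs a b c).const_mul M)
          intro t ht
          exact hlip c hc t (hsub ht)
      _ = M * ∫ t in a..b, |t - c| := intervalIntegral.integral_const_mul M _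
  -- splitting of the main integral
  have h1 : (-1:ℝ) ≤ -1 + lam := by linarith
  have h2 : (-1:ℝ) + lam ≤ 0 := by linarith
  have h3 : (0:ℝ) ≤ 1 - lam := by linarith
  have h4 : (1:ℝ) - lam ≤ 1 := by linarith
  have hsplit : (∫ t in (-1:ℝ)..1, f t) =
      (∫ t in (-1:ℝ)..(-1+lam), f t) + (∫ t in (-1+lam)..(0:ℝ), f t)
        + (∫ t in (0:ℝ)..(1-lam), f t) + (∫ t in (1-lam)..(1:ℝ), f t) := by
    rw [intervalIntegral.integral_add_adjacent_intervals (hintf _ _ le_rfl h1 (by linarith))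
      (hintf _ _ h1 h2 (by linarith)),
      intervalIntegral.integral_add_adjacent_intervals (hintf _ _ le_rfl (by linarith) (by linarith))
      (hintf _ _ (by linarith) h3 h4),
      intervalIntegral.integral_add_adjacent_intervals (hintf _ _ le_rfl (by linarith) h4)
      (hintf _ _ (by linarith) h4 le_rfl)]
  have hE : (∫ t in (-1:ℝ)..1, f t) - lam * (f (-1) + f 1) - (1 - lam) * (f (-x) + f x)
      = (∫ t in (-1:ℝ)..(-1+lam), (f t - f (-1))) + (∫ t in (-1+lam)..(0:ℝ), (f t - f (-x)))
        + (∫ t in (0:ℝ)..(1-lam), (f t - f x)) + (∫ t in (1-lam)..(1:ℝ), (f t - f 1)) := by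
    rw [intervalIntegral.integral_sub (hintf _ _ le_rfl h1 (by linarith)) intervalIntegrable_const,
      intervalIntegral.integral_sub (hintf _ _ h1 h2 (by linarith)) intervalIntegrable_const,
      intervalIntegral.integral_sub (hintf _ _ (by linarith) h3 h4) intervalIntegrable_const,
      intervalIntegral.integral_sub (hintf _ _ (by linarith) h4 le_rfl) intervalIntegrable_const,
      hsplit]
    simp [intervalIntegral.integral_const, smul_eq_mul]
    ring
  rw [hE]
  have hc1 : (-1:ℝ) ∈ Icc (-1:ℝ) 1 := by norm_num
  have hc2 : (-x:ℝ) ∈ Icc (-1:ℝ) 1 := by constructor <;> linarith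
  have hc3 : (x:ℝ) ∈ Icc (-1:ℝ) 1 := by constructor <;> linarith
  have hc4 : (1:ℝ) ∈ Icc (-1:ℝ) 1 := by norm_num
  have b1 := key (-1) (-1+lam) (-1) le_rfl h1 (by linarith) hc1
  have b2 := key (-1+lam) 0 (-x) (by linarith) h2 (by linarith) hc2
  have b3 := key 0 (1-lam) x (by linarith) h3 h4 hc3
  have b4 := key (1-lam) 1 1 (by linarith) h4 le_rfl hc4
  have v1 : ∫ t in (-1:ℝ)..(-1+lam), |t - (-1)| = ((-1+lam - (-1))^2 - ((-1:ℝ) - (-1))^2)/2 :=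
    int_abs_le _ _ _ le_rfl h1
  have v4 : ∫ t in (1-lam:ℝ)..1, |t - 1| = ((1 - (1-lam))^2 - ((1:ℝ) - 1)^2)/2 :=
    int_abs_ge _ _ _ le_rfl h4
  have habs : |(∫ t in (-1:ℝ)..(-1+lam), (f t - f (-1))) + (∫ t in (-1+lam)..(0:ℝ), (f t - f (-x)))
        + (∫ t in (0:ℝ)..(1-lam), (f t - f x)) + (∫ t in (1-lam)..(1:ℝ), (f t - f 1))|
      ≤ M * (∫ t in (-1:ℝ)..(-1+lam), |t - (-1)|) + M * (∫ t in (-1+lam)..(0:ℝ), |t - (-x)|)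
        + M * (∫ t in (0:ℝ)..(1-lam), |t - x|) + M * (∫ t in (1-lam)..(1:ℝ), |t - 1|) := by
    calc _ ≤ |(∫ t in (-1:ℝ)..(-1+lam), (f t - f (-1))) + (∫ t in (-1+lam)..(0:ℝ), (f t - f (-x)))
        + (∫ t in (0:ℝ)..(1-lam), (f t - f x))| + |(∫ t in (1-lam)..(1:ℝ), (f t - f 1))| :=
          abs_add_le _ _
      _ ≤ |(∫ t in (-1:ℝ)..(-1+lam), (f t - f (-1))) + (∫ t in (-1+lam)..(0:ℝ), (f t - f (-x)))|
          + |(∫ t in (0:ℝ)..(1-lam), (f t - f x))| + |(∫ t in (1-lam)..(1:ℝ), (f t - f 1))| := by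
          gcongr; exact abs_add_le _ _
      _ ≤ |(∫ t in (-1:ℝ)..(-1+lam), (f t - f (-1)))| + |(∫ t in (-1+lam)..(0:ℝ), (f t - f (-x)))|
          + |(∫ t in (0:ℝ)..(1-lam), (f t - f x))| + |(∫ t in (1-lam)..(1:ℝ), (f t - f 1))| := by
          gcongr ?_ + _ + _; exact abs_add_le _ _
      _ ≤ _ := by gcongr
  refine le_trans habs ?_
  by_cases hcase : x ≤ 1 - lam
  · rw [if_pos hcase]
    have v2 : ∫ t in (-1+lam:ℝ)..0, |t - (-x)| = ((-x) - (-1+lam))^2/2 + ((0:ℝ) - (-x))^2/2 :=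
      int_abs_mem _ _ _ (by linarith) (by linarith)
    have v3 : ∫ t in (0:ℝ)..(1-lam), |t - x| = (x - 0)^2/2 + ((1-lam) - x)^2/2 :=
      int_abs_mem _ _ _ (by linarith) (by linarith)
    rw [v1, v2, v3, v4]
    ring_nf
    nlinarith [sq_nonneg lam, sq_nonneg x]
  · push_neg at hcase
    rw [if_neg (not_le.mpr hcase)]
    have v2 : ∫ t in (-1+lam:ℝ)..0, |t - (-x)| = (((0:ℝ) - (-x))^2 - ((-1+lam) - (-x))^2)/2 :=
      int_abs_le _ _ _ (by linarith) h2
    have v3 : ∫ t in (0:ℝ)..(1-lam), |t - x| = ((x - 0)^2 - (x - (1-lam))^2)/2 :=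
      int_abs_ge _ _ _ (by linarith) h3
    rw [v1, v2, v3, v4]
    ring_nf
    nlinarith [sq_nonneg lam, sq_nonneg x]
end
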